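/- arXiv:math/0402091 — 9 statements merged into one kernel-verified Lean document; each statement's English description precedes it below -/
import Mathlib

section
/- Let n be a positive integer and let s_1, ..., s_n be real numbers with s_j ≥ 1 for 1 ≤ j ≤ n. Then the nested sum ∑_{k_1 > k_2 > ... > k_n > 0} ∏_{j=1}^n k_j^{-s_j}, taken over all tuples of positive integers k_1, ..., k_n satisfying the indicated strict inequalities, converges (i.e., the family of terms is summable) if and only if s_1 > 1. -/
open Real Finset

private lemma pi_summable (g : ℕ → ℝ) (hg : Summable g) (h0 : ∀ m, 0 ≤ g m) :
    ∀ n : ℕ, Summable (fun k : Fin n → ℕ => ∏ j, g (k j)) := by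
  intro n
  induction n with
  | zero =>
    simp only [Finset.univ_eq_empty, Finset.prod_empty]
    exact Summable.of_finite
  | succ n ih =>
    have hmul : Summable (fun p : ℕ × (Fin n → ℕ) => g p.1 * ∏ j, g (p.2 j)) := by
      refine Summable.mul_of_nonneg (f := g) (g := fun k : Fin n → ℕ => ∏ j, g (k j))
        hg ih ?_ ?_
      · exact h0
      · exact fun k => Finset.prod_nonneg fun j _ => h0 _
    rw [← (Fin.consEquiv fun _ : Fin (n + 1) => ℕ).summable_iff]
    refine hmul.congr fun p => ?_
    simp [Fin.consEquiv, Function.comp, Fin.prod_univ_succ]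

/-- The nested sum defining the multiple zeta function, over tuples of positive
integers `k 0 > k 1 > ⋯ > k (n-1) > 0`, is summable iff the first exponent exceeds `1`. -/
theorem stmt0 (n : ℕ) (hn : 0 < n) (s : Fin n → ℝ) (hs : ∀ j, 1 ≤ s j) :
    Summable (fun k : {k : Fin n → ℕ // (∀ i j : Fin n, i < j → k j < k i) ∧ ∀ i, 0 < k i} =>
      ∏ j, (k.1 j : ℝ) ^ (-(s j))) ↔ 1 < s ⟨0, hn⟩ := by
  set i0 : Fin n := ⟨0, hn⟩ with hi0
  constructor
  · intro h
    by_contra hlt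
    push_neg at hlt
    have ha : s i0 = 1 := le_antisymm hlt (hs i0)
    set f : ℕ → Fin n → ℕ := fun m j => if j.1 = 0 then m + n else n - j.1 with hf
    have hmem : ∀ m, (∀ i j : Fin n, i < j → f m j < f m i) ∧ ∀ i, 0 < f m i := by
      intro m
      constructor
      · intro i j hij
        have hij' : i.1 < j.1 := hij
        have hjn : j.1 < n := j.2
        simp only [hf]
        rcases Nat.eq_zero_or_pos i.1 with hi | hi
        · rw [if_pos hi, if_neg (by omega)]; omega
        · rw [if_neg (by omega), if_neg (by omega)]; omega
      · intro i
        have hin : i.1 < n := i.2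
        simp only [hf]
        split_ifs <;> omega
    have hinj : Function.Injective
        (fun m => (⟨f m, hmem m⟩ :
          {k : Fin n → ℕ // (∀ i j : Fin n, i < j → k j < k i) ∧ ∀ i, 0 < k i})) := by
      intro a b hab
      have h2 := congrFun (congrArg Subtype.val hab) i0
      simp only [hf, hi0, if_pos rfl] at h2
      omega
    have hcomp := h.comp_injective hinj
    have hprod : ∀ m : ℕ, (∏ j, ((f m j : ℕ) : ℝ) ^ (-(s j))) =
        ((m + n : ℕ) : ℝ)⁻¹ * ∏ j ∈ univ.erase i0, ((n - j.1 : ℕ) : ℝ) ^ (-(s j)) := by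
      intro m
      rw [← Finset.mul_prod_erase univ _ (mem_univ i0)]
      congr 1
      · have ha' : s ⟨0, hn⟩ = 1 := ha
        simp [hf, hi0, ha', Real.rpow_neg_one]
      · refine Finset.prod_congr rfl fun j hj => ?_
        have hj' : j ≠ i0 := (Finset.mem_erase.mp hj).1
        have : j.1 ≠ 0 := fun h0 => hj' (Fin.ext (by simp [hi0, h0]))
        rw [hf]
        simp only [if_neg this]
    set c := ∏ j ∈ univ.erase i0, ((n - j.1 : ℕ) : ℝ) ^ (-(s j)) with hc
    have hcpos : 0 < c := by
      refine Finset.prod_pos fun j hj => Real.rpow_pos_of_pos ?_ _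
      have hj' : j ≠ i0 := (Finset.mem_erase.mp hj).1
      have h1 : j.1 ≠ 0 := fun h0 => hj' (Fin.ext (by simp [hi0, h0]))
      have h2 : j.1 < n := j.2
      exact_mod_cast Nat.cast_pos.mpr (by omega : 0 < n - j.1)
    have hsum1 : Summable (fun m : ℕ => ((m + n : ℕ) : ℝ)⁻¹ * c) :=
      hcomp.congr fun m => hprod m
    have hsum2 : Summable (fun m : ℕ => ((m + n : ℕ) : ℝ)⁻¹) := by
      have := hsum1.mul_right c⁻¹
      refine this.congr fun m => ?_
      rw [mul_assoc, mul_inv_cancel₀ hcpos.ne', mul_one]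
    exact Real.not_summable_natCast_inv
      ((summable_nat_add_iff (f := fun m : ℕ => (m : ℝ)⁻¹) n).mp hsum2)
  · intro h1
    have hn' : (0 : ℝ) < n := Nat.cast_pos.mpr hn
    set δ : ℝ := (s i0 - 1) / n with hδ
    have hδpos : 0 < δ := div_pos (by linarith) hn'
    set t : ℝ := 1 + δ with ht
    have hgsum : Summable (fun m : ℕ => (m : ℝ) ^ (-t)) :=
      Real.summable_nat_rpow.mpr (by linarith)
    have hPi := pi_summable _ hgsum (fun m => Real.rpow_nonneg (Nat.cast_nonneg m) _) n
    have hsub := hPi.subtype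
      {k : Fin n → ℕ | (∀ i j : Fin n, i < j → k j < k i) ∧ ∀ i, 0 < k i}
    refine Summable.of_nonneg_of_le
      (fun k => Finset.prod_nonneg fun j _ => Real.rpow_nonneg (Nat.cast_nonneg _) _)
      (fun k => ?_) hsub
    obtain ⟨K, hk1, hk2⟩ := k
    show (∏ j, (K j : ℝ) ^ (-(s j))) ≤ ∏ j, (K j : ℝ) ^ (-t)
    have hK1 : ∀ j, (1 : ℝ) ≤ (K j : ℝ) := fun j => by exact_mod_cast hk2 j
    have hKpos : ∀ j, (0 : ℝ) < (K j : ℝ) := fun j => lt_of_lt_of_le one_pos (hK1 j)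
    have hKle : ∀ j, (K j : ℝ) ≤ (K i0 : ℝ) := by
      intro j
      rcases eq_or_ne j i0 with rfl | hne
      · exact le_refl _
      · have hlt : i0 < j := by
          have : j.1 ≠ 0 := fun h0 => hne (Fin.ext (by simp [hi0, h0]))
          exact (Fin.lt_def).mpr (by simp only [hi0]; omega)
        exact_mod_cast (hk1 i0 j hlt).le
    rw [← Finset.mul_prod_erase univ _ (mem_univ i0),
      ← Finset.mul_prod_erase univ (fun j => ((K j : ℝ)) ^ (-t)) (mem_univ i0)]
    have hcard : (univ.erase i0).card = n - 1 := by
      rw [Finset.card_erase_of_mem (mem_univ i0), card_univ, Fintype.card_fin]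
    have key0 : ((K i0 : ℝ)) ^ (-(s i0)) =
        ((K i0 : ℝ)) ^ (-t) * (((K i0 : ℝ)) ^ (-δ)) ^ (n - 1 : ℕ) := by
      rw [← Real.rpow_natCast (((K i0 : ℝ)) ^ (-δ)) (n - 1),
        ← Real.rpow_mul (hKpos i0).le, ← Real.rpow_add (hKpos i0)]
      congr 1
      have hcast : ((n - 1 : ℕ) : ℝ) = (n : ℝ) - 1 := by
        push_cast [Nat.cast_sub hn]; ring
      rw [hcast, ht, hδ]
      field_simp
      ring
    calc (K i0 : ℝ) ^ (-(s i0)) * ∏ j ∈ univ.erase i0, (K j : ℝ) ^ (-(s j))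
        ≤ ((K i0 : ℝ) ^ (-t) * ∏ j ∈ univ.erase i0, (K j : ℝ) ^ (-δ)) *
          ∏ j ∈ univ.erase i0, (K j : ℝ) ^ (-1 : ℝ) := by
          refine mul_le_mul ?_ ?_ ?_ ?_
          · rw [key0]
            refine mul_le_mul_of_nonneg_left ?_ (Real.rpow_nonneg (hKpos i0).le _)
            calc (((K i0 : ℝ)) ^ (-δ)) ^ (n - 1 : ℕ)
                = ∏ _j ∈ univ.erase i0, ((K i0 : ℝ)) ^ (-δ) := by
                  rw [Finset.prod_const, hcard]
              _ ≤ ∏ j ∈ univ.erase i0, ((K j : ℝ)) ^ (-δ) :=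
                  Finset.prod_le_prod (fun j _ => Real.rpow_nonneg (hKpos i0).le _)
                    fun j _ => Real.rpow_le_rpow_of_nonpos (hKpos j) (hKle j)
                      (neg_nonpos.mpr hδpos.le)
          · exact Finset.prod_le_prod (fun j _ => Real.rpow_nonneg (hKpos j).le _)
              fun j _ => Real.rpow_le_rpow_of_exponent_le (hK1 j) (neg_le_neg (hs j))
          · exact Finset.prod_nonneg fun j _ => Real.rpow_nonneg (hKpos j).le _
          · exact mul_nonneg (Real.rpow_nonneg (hKpos i0).le _)
              (Finset.prod_nonneg fun j _ => Real.rpow_nonneg (hKpos j).le _)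
      _ = (K i0 : ℝ) ^ (-t) * ∏ j ∈ univ.erase i0, (K j : ℝ) ^ (-t) := by
          rw [mul_assoc, ← Finset.prod_mul_distrib]
          congr 1
          refine Finset.prod_congr rfl fun j _ => ?_
          rw [← Real.rpow_add (hKpos j)]
          congr 1
          rw [ht]; ring
end

section
/- For all real numbers x_1, x_2, x_3 each exceeding 1, 2/(x_1 x_2 x_3 − 1) − 1/((x_2 − 1)(x_1 x_3 − 1)) − 1/((x_3 − 1)(x_1 x_2 − 1)) + 1/((x_1 x_2 − 1)(x_1 x_2 x_3 − 1)) + 1/((x_2 − 1)(x_1 x_2 x_3 − 1)) + 1/((x_1 x_3 − 1)(x_1 x_2 x_3 − 1)) + 1/((x_3 − 1)(x_1 x_2 x_3 − 1)) = 0. -/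
theorem stmt4 (x₁ x₂ x₃ : ℝ) (h₁ : 1 < x₁) (h₂ : 1 < x₂) (h₃ : 1 < x₃) :
    2 / (x₁ * x₂ * x₃ - 1) - 1 / ((x₂ - 1) * (x₁ * x₃ - 1))
      - 1 / ((x₃ - 1) * (x₁ * x₂ - 1)) + 1 / ((x₁ * x₂ - 1) * (x₁ * x₂ * x₃ - 1))
      + 1 / ((x₂ - 1) * (x₁ * x₂ * x₃ - 1)) + 1 / ((x₁ * x₃ - 1) * (x₁ * x₂ * x₃ - 1))
      + 1 / ((x₃ - 1) * (x₁ * x₂ * x₃ - 1)) = 0 := by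
  have a2 : x₂ - 1 ≠ 0 := by nlinarith
  have a3 : x₃ - 1 ≠ 0 := by nlinarith
  have b12 : x₁ * x₂ - 1 ≠ 0 := by nlinarith
  have b13 : x₁ * x₃ - 1 ≠ 0 := by nlinarith
  have c : x₁ * x₂ * x₃ - 1 ≠ 0 := by
    have h12 : (1:ℝ) < x₁ * x₂ := by nlinarith
    have : (1:ℝ) < x₁ * x₂ * x₃ := by nlinarith
    linarith
  field_simp
  ring
end

section
/- For all real numbers s_1 > 1 and s_2 > 1, ζ(s_1, s_2) = ∫_1^∞ ∫_1^∞ [(x_1 − 1)(x_1 x_2 − 1)]^{-1} ∏_{j=1}^2 (log x_j)^{s_j − 1} / (Γ(s_j) x_j) dx_1 dx_2, where ζ(s_1,s_2) = ∑_{k_1 > k_2 > 0} k_1^{-s_1} k_2^{-s_2} and Γ is the Gamma function. -/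
open MeasureTheory Set Real

namespace Stmt7Aux

lemma exp_image_Ioi : Real.exp '' Set.Ioi (0:ℝ) = Set.Ioi 1 := by
  ext x
  constructor
  · rintro ⟨t, ht, rfl⟩
    have : Real.exp 0 < Real.exp t := Real.exp_lt_exp.2 ht
    simpa [Real.exp_zero] using this
  · intro hx
    have hx' : (1:ℝ) < x := hx
    exact ⟨Real.log x, Real.log_pos hx', Real.exp_log (by linarith)⟩

lemma key_integral {c s : ℝ} (hc : 0 < c) (hs : 0 < s) :
    ∫ x in Set.Ioi (1:ℝ), Real.log x ^ (s-1) * x ^ (-c-1) = Real.Gamma s * c ^ (-s) := by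
  have h := integral_image_eq_integral_abs_deriv_smul (f := Real.exp) (f' := Real.exp)
      (s := Set.Ioi (0:ℝ)) measurableSet_Ioi (fun x _ => (Real.hasDerivAt_exp x).hasDerivWithinAt)
      Real.exp_injective.injOn (fun x => Real.log x ^ (s-1) * x ^ (-c-1))
  rw [exp_image_Ioi] at h
  rw [h]
  have heq : ∀ t ∈ Set.Ioi (0:ℝ),
      |Real.exp t| • (Real.log (Real.exp t) ^ (s-1) * Real.exp t ^ (-c-1))
      = t ^ (s-1) * Real.exp (-(c*t)) := by
    intro t _
    rw [abs_of_pos (Real.exp_pos t), Real.log_exp, smul_eq_mul,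
        Real.rpow_def_of_pos (Real.exp_pos t), Real.log_exp,
        show Real.exp t * (t ^ (s-1) * Real.exp (t * (-c-1)))
          = t ^ (s-1) * (Real.exp t * Real.exp (t * (-c-1))) by ring,
        ← Real.exp_add, show t + t * (-c-1) = -(c*t) by ring]
  rw [setIntegral_congr_fun measurableSet_Ioi heq,
      Real.integral_rpow_mul_exp_neg_mul_Ioi hs hc, one_div,
      Real.inv_rpow hc.le, ← Real.rpow_neg hc.le]
  ring

lemma key_integrableOn {c s : ℝ} (hc : 0 < c) (hs : 0 < s) :
    IntegrableOn (fun x : ℝ => Real.log x ^ (s-1) * x ^ (-c-1)) (Set.Ioi 1) := by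
  rw [← exp_image_Ioi,
    integrableOn_image_iff_integrableOn_abs_deriv_smul (s := Set.Ioi (0:ℝ)) measurableSet_Ioi
      (fun x _ => (Real.hasDerivAt_exp x).hasDerivWithinAt) Real.exp_injective.injOn]
  have h0 : IntegrableOn (fun t : ℝ => t ^ (s-1) * Real.exp (-(c*t))) (Set.Ioi 0) := by
    have h := integrableOn_rpow_mul_exp_neg_mul_rpow (s := s-1) (p := 1)
      (by linarith) zero_lt_one hc
    refine h.congr_fun (fun t _ => ?_) measurableSet_Ioi
    simp only [Real.rpow_one, neg_mul]
  refine h0.congr_fun (fun t _ => ?_) measurableSet_Ioi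
  rw [abs_of_pos (Real.exp_pos t), Real.log_exp, smul_eq_mul,
      Real.rpow_def_of_pos (Real.exp_pos t), Real.log_exp,
      show Real.exp t * (t ^ (s-1) * Real.exp (t * (-c-1)))
        = t ^ (s-1) * (Real.exp t * Real.exp (t * (-c-1))) by ring,
      ← Real.exp_add, show t + t * (-c-1) = -(c*t) by ring]

lemma rpow_neg_nat {x : ℝ} (hx : 0 < x) (n : ℕ) : x ^ (-(n:ℝ)-1) = (x⁻¹)^(n+1) := by
  rw [show -(n:ℝ)-1 = -(((n+1:ℕ)):ℝ) by push_cast; ring, Real.rpow_neg hx.le,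
    Real.rpow_natCast, ← inv_pow]

lemma tsum_geom {x : ℝ} (hx : 1 < x) : ∑' n : ℕ, x ^ (-(n:ℝ)-1) = (x-1)⁻¹ := by
  have hx0 : 0 < x := by linarith
  have hne : x ≠ 0 := ne_of_gt hx0
  have hne1 : x - 1 ≠ 0 := by intro h; apply hne; nlinarith
  have hr1 : x⁻¹ < 1 := inv_lt_one_of_one_lt₀ hx
  calc ∑' n : ℕ, x ^ (-(n:ℝ)-1) = ∑' n : ℕ, x⁻¹ * (x⁻¹)^n := by
        refine tsum_congr fun n => ?_
        rw [rpow_neg_nat hx0, pow_succ, mul_comm]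
    _ = x⁻¹ * (1 - x⁻¹)⁻¹ := by
        rw [tsum_mul_left, tsum_geometric_of_lt_one (by positivity) hr1]
    _ = (x-1)⁻¹ := by field_simp

lemma inv_le_one_self {x : ℝ} (hx : 1 < x) : x⁻¹ ≤ 1 :=
  le_of_lt (inv_lt_one_of_one_lt₀ hx)

lemma summable_geom {x : ℝ} (hx : 1 < x) : Summable (fun n : ℕ => x ^ (-(n:ℝ)-1)) := by
  have hx0 : 0 < x := by linarith
  have := (summable_geometric_of_lt_one (r := x⁻¹) (by positivity)
    (inv_lt_one_of_one_lt₀ hx)).mul_left x⁻¹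
  refine this.congr fun n => ?_
  rw [rpow_neg_nat hx0, pow_succ, mul_comm]

lemma summable_aux {x : ℝ} (hx : 1 < x) {s : ℝ} (hs : 0 < s) :
    Summable (fun n : ℕ => x ^ (-(n:ℝ)-1) * ((n:ℝ)+1)^(-s)) := by
  have hx0 : 0 < x := by linarith
  refine Summable.of_nonneg_of_le (fun n => by positivity) (fun n => ?_) (summable_geom hx)
  have h1 : ((n:ℝ)+1)^(-s) ≤ 1 :=
    Real.rpow_le_one_of_one_le_of_nonpos (by push_cast; linarith [Nat.cast_nonneg (α := ℝ) n])
      (by linarith)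
  exact mul_le_of_le_one_right (Real.rpow_nonneg hx0.le _) h1

lemma inner_eq {s : ℝ} (hs : 1 < s) {x₁ : ℝ} (hx₁ : 1 < x₁) :
    ∫ x₂ in Set.Ioi (1:ℝ), (x₁ * x₂ - 1)⁻¹ * (Real.log x₂ ^ (s-1) / (Real.Gamma s * x₂))
      = ∑' n : ℕ, x₁ ^ (-(n:ℝ)-1) * ((n:ℝ)+1)^(-s) := by
  have hs0 : 0 < s := by linarith
  have hΓ : 0 < Real.Gamma s := Real.Gamma_pos_of_pos hs0
  have hx₁0 : 0 < x₁ := by linarith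
  set F : ℕ → ℝ → ℝ := fun n x₂ =>
    (x₁ ^ (-(n:ℝ)-1) / Real.Gamma s) * (Real.log x₂ ^ (s-1) * x₂ ^ (-((n:ℝ)+1)-1)) with hF
  have hFint : ∀ n : ℕ, Integrable (F n) (volume.restrict (Set.Ioi 1)) := fun n =>
    ((Stmt7Aux.key_integrableOn (c := (n:ℝ)+1) (by positivity) hs0).const_mul _)
  have hFval : ∀ n : ℕ, ∫ x₂ in Set.Ioi (1:ℝ), F n x₂
      = x₁ ^ (-(n:ℝ)-1) * ((n:ℝ)+1)^(-s) := by
    intro n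
    rw [hF]
    simp only
    rw [MeasureTheory.integral_const_mul,
      Stmt7Aux.key_integral (c := (n:ℝ)+1) (by positivity) hs0]
    field_simp
  have hFnn : ∀ n : ℕ, ∀ x₂ ∈ Set.Ioi (1:ℝ), 0 ≤ F n x₂ := by
    intro n x₂ hx₂
    have hx₂1 : (1:ℝ) ≤ x₂ := le_of_lt hx₂
    have hlog : 0 ≤ Real.log x₂ := Real.log_nonneg hx₂1
    have h1 : 0 ≤ x₁ ^ (-(n:ℝ)-1) / Real.Gamma s := by positivity
    have h2 : 0 ≤ Real.log x₂ ^ (s-1) * x₂ ^ (-((n:ℝ)+1)-1) := by positivity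
    exact mul_nonneg h1 h2
  have hFnorm : ∀ n : ℕ, ∫ x₂ in Set.Ioi (1:ℝ), ‖F n x₂‖
      = x₁ ^ (-(n:ℝ)-1) * ((n:ℝ)+1)^(-s) := by
    intro n
    rw [setIntegral_congr_fun measurableSet_Ioi
      (fun x₂ hx₂ => Real.norm_of_nonneg (hFnn n x₂ hx₂)), hFval n]
  have hsum : Summable fun n : ℕ => ∫ x₂ in Set.Ioi (1:ℝ), ‖F n x₂‖ := by
    refine (Stmt7Aux.summable_aux hx₁ hs0).congr fun n => (hFnorm n).symm
  have hswap := MeasureTheory.integral_tsum_of_summable_integral_norm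
    (μ := volume.restrict (Set.Ioi 1)) hFint hsum
  have hptw : ∀ x₂ ∈ Set.Ioi (1:ℝ),
      (∑' n : ℕ, F n x₂) = (x₁ * x₂ - 1)⁻¹ * (Real.log x₂ ^ (s-1) / (Real.Gamma s * x₂)) := by
    intro x₂ hx₂
    have hx₂1 : (1:ℝ) < x₂ := hx₂
    have hx₂0 : (0:ℝ) < x₂ := by linarith
    have hprod : (1:ℝ) < x₁ * x₂ := by nlinarith
    have hterm : ∀ n : ℕ, F n x₂
        = (x₁*x₂) ^ (-(n:ℝ)-1) * (Real.log x₂ ^ (s-1) / (Real.Gamma s * x₂)) := by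
      intro n
      rw [hF]
      simp only
      rw [Real.mul_rpow hx₁0.le hx₂0.le,
        show -((n:ℝ)+1)-1 = (-(n:ℝ)-1) + (-1) by ring, Real.rpow_add hx₂0,
        Real.rpow_neg_one]
      field_simp
    rw [tsum_congr hterm, tsum_mul_right, Stmt7Aux.tsum_geom hprod]
  calc ∫ x₂ in Set.Ioi (1:ℝ), (x₁ * x₂ - 1)⁻¹ * (Real.log x₂ ^ (s-1) / (Real.Gamma s * x₂))
      = ∫ x₂ in Set.Ioi (1:ℝ), ∑' n : ℕ, F n x₂ :=
        (setIntegral_congr_fun measurableSet_Ioi hptw).symm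
    _ = ∑' n : ℕ, ∫ x₂ in Set.Ioi (1:ℝ), F n x₂ := hswap.symm
    _ = ∑' n : ℕ, x₁ ^ (-(n:ℝ)-1) * ((n:ℝ)+1)^(-s) := tsum_congr hFval

lemma summable_shift {s : ℝ} (hs : 1 < s) :
    Summable (fun m : ℕ => ((m:ℝ)+1) ^ (-s)) := by
  have h := (summable_nat_add_iff 1).2 (Real.summable_nat_rpow.2 (by linarith : -s < -1))
  refine h.congr fun m => ?_
  push_cast
  norm_num

lemma outer_eq {s₁ s₂ : ℝ} (h₁ : 1 < s₁) (h₂ : 1 < s₂) :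
    ∫ x in Set.Ioi (1:ℝ), ((x - 1)⁻¹ * (Real.log x ^ (s₁-1) / (Real.Gamma s₁ * x))) *
        ∑' n : ℕ, x ^ (-(n:ℝ)-1) * ((n:ℝ)+1)^(-s₂)
      = ∑' p : ℕ × ℕ, ((p.1:ℝ)+(p.2:ℝ)+2) ^ (-s₁) * ((p.2:ℝ)+1) ^ (-s₂) := by
  have hs₁0 : 0 < s₁ := by linarith
  have hs₂0 : 0 < s₂ := by linarith
  have hΓ : 0 < Real.Gamma s₁ := Real.Gamma_pos_of_pos hs₁0
  set G : ℕ × ℕ → ℝ → ℝ := fun p x =>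
    (((p.2:ℝ)+1)^(-s₂) / Real.Gamma s₁) *
      (Real.log x ^ (s₁-1) * x ^ (-((p.1:ℝ)+(p.2:ℝ)+2)-1)) with hG
  have hcpos : ∀ p : ℕ × ℕ, (0:ℝ) < (p.1:ℝ)+(p.2:ℝ)+2 := by
    intro p
    positivity
  have hGint : ∀ p : ℕ × ℕ, Integrable (G p) (volume.restrict (Set.Ioi 1)) := fun p =>
    ((Stmt7Aux.key_integrableOn (c := (p.1:ℝ)+(p.2:ℝ)+2) (hcpos p) hs₁0).const_mul _)
  have hGval : ∀ p : ℕ × ℕ, ∫ x in Set.Ioi (1:ℝ), G p x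
      = ((p.1:ℝ)+(p.2:ℝ)+2) ^ (-s₁) * ((p.2:ℝ)+1) ^ (-s₂) := by
    intro p
    rw [hG]
    simp only
    rw [MeasureTheory.integral_const_mul,
      Stmt7Aux.key_integral (c := (p.1:ℝ)+(p.2:ℝ)+2) (hcpos p) hs₁0]
    field_simp
  have hGnn : ∀ p : ℕ × ℕ, ∀ x ∈ Set.Ioi (1:ℝ), 0 ≤ G p x := by
    intro p x hx
    have hx1 : (1:ℝ) ≤ x := le_of_lt hx
    have hlog : 0 ≤ Real.log x := Real.log_nonneg hx1
    have h1 : 0 ≤ ((p.2:ℝ)+1)^(-s₂) / Real.Gamma s₁ := by positivity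
    have h2 : 0 ≤ Real.log x ^ (s₁-1) * x ^ (-((p.1:ℝ)+(p.2:ℝ)+2)-1) := by positivity
    exact mul_nonneg h1 h2
  have hGnorm : ∀ p : ℕ × ℕ, ∫ x in Set.Ioi (1:ℝ), ‖G p x‖
      = ((p.1:ℝ)+(p.2:ℝ)+2) ^ (-s₁) * ((p.2:ℝ)+1) ^ (-s₂) := by
    intro p
    rw [setIntegral_congr_fun measurableSet_Ioi
      (fun x hx => Real.norm_of_nonneg (hGnn p x hx)), hGval p]
  have hsumval : Summable (fun p : ℕ × ℕ =>
      ((p.1:ℝ)+(p.2:ℝ)+2) ^ (-s₁) * ((p.2:ℝ)+1) ^ (-s₂)) := by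
    have hA : Summable (fun m : ℕ => ((m:ℝ)+1) ^ (-s₁)) := summable_shift h₁
    have hB : Summable (fun n : ℕ => ((n:ℝ)+1) ^ (-s₂)) := summable_shift h₂
    have hprod := hA.mul_of_nonneg hB
      (fun m => Real.rpow_nonneg (by positivity) _)
      (fun n => Real.rpow_nonneg (by positivity) _)
    refine Summable.of_nonneg_of_le (fun p => ?_) (fun p => ?_) hprod
    · positivity
    · refine mul_le_mul_of_nonneg_right ?_ (Real.rpow_nonneg (by positivity) _)
      have hc2 : ((p.1:ℝ)+1) ≤ (p.1:ℝ)+(p.2:ℝ)+2 := by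
        have := Nat.cast_nonneg (α := ℝ) p.2
        linarith
      exact Real.rpow_le_rpow_of_nonpos (by positivity) hc2 (by linarith)
  have hsum : Summable fun p : ℕ × ℕ => ∫ x in Set.Ioi (1:ℝ), ‖G p x‖ :=
    hsumval.congr fun p => (hGnorm p).symm
  have hswap := MeasureTheory.integral_tsum_of_summable_integral_norm
    (μ := volume.restrict (Set.Ioi 1)) hGint hsum
  have hptw : ∀ x ∈ Set.Ioi (1:ℝ),
      (∑' p : ℕ × ℕ, G p x) = ((x - 1)⁻¹ * (Real.log x ^ (s₁-1) / (Real.Gamma s₁ * x))) *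
        ∑' n : ℕ, x ^ (-(n:ℝ)-1) * ((n:ℝ)+1)^(-s₂) := by
    intro x hx
    have hx1 : (1:ℝ) < x := hx
    have hx0 : (0:ℝ) < x := by linarith
    have hfs : Summable fun m : ℕ => ‖x ^ (-(m:ℝ)-1)‖ := by
      refine (Stmt7Aux.summable_geom hx1).congr fun m => ?_
      rw [Real.norm_of_nonneg (Real.rpow_nonneg hx0.le _)]
    have hgs : Summable fun n : ℕ => ‖x ^ (-(n:ℝ)-1) * ((n:ℝ)+1)^(-s₂)‖ := by
      refine (Stmt7Aux.summable_aux hx1 hs₂0).congr fun n => ?_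
      rw [Real.norm_of_nonneg (by positivity)]
    calc (∑' p : ℕ × ℕ, G p x)
        = ∑' p : ℕ × ℕ, (x ^ (-(p.1:ℝ)-1) * (x ^ (-(p.2:ℝ)-1) * ((p.2:ℝ)+1)^(-s₂))) *
            (Real.log x ^ (s₁-1) / (Real.Gamma s₁ * x)) := by
          refine tsum_congr fun p => ?_
          rw [hG]
          simp only
          rw [show -((p.1:ℝ)+(p.2:ℝ)+2)-1 = (-(p.1:ℝ)-1) + ((-(p.2:ℝ)-1) + (-1)) by ring,
            Real.rpow_add hx0, Real.rpow_add hx0, Real.rpow_neg_one]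
          field_simp
      _ = ((∑' m : ℕ, x ^ (-(m:ℝ)-1)) * (∑' n : ℕ, x ^ (-(n:ℝ)-1) * ((n:ℝ)+1)^(-s₂))) *
            (Real.log x ^ (s₁-1) / (Real.Gamma s₁ * x)) := by
          rw [tsum_mul_tsum_of_summable_norm hfs hgs]
          exact tsum_mul_right
      _ = ((x - 1)⁻¹ * (Real.log x ^ (s₁-1) / (Real.Gamma s₁ * x))) *
            ∑' n : ℕ, x ^ (-(n:ℝ)-1) * ((n:ℝ)+1)^(-s₂) := by
          rw [Stmt7Aux.tsum_geom hx1]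
          ring
  calc ∫ x in Set.Ioi (1:ℝ), ((x - 1)⁻¹ * (Real.log x ^ (s₁-1) / (Real.Gamma s₁ * x))) *
        ∑' n : ℕ, x ^ (-(n:ℝ)-1) * ((n:ℝ)+1)^(-s₂)
      = ∫ x in Set.Ioi (1:ℝ), ∑' p : ℕ × ℕ, G p x :=
        (setIntegral_congr_fun measurableSet_Ioi hptw).symm
    _ = ∑' p : ℕ × ℕ, ∫ x in Set.Ioi (1:ℝ), G p x := hswap.symm
    _ = ∑' p : ℕ × ℕ, ((p.1:ℝ)+(p.2:ℝ)+2) ^ (-s₁) * ((p.2:ℝ)+1) ^ (-s₂) := tsum_congr hGval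

end Stmt7Aux

/-- The multiple zeta function: `ζ(s₁,…,sₙ) = ∑_{k₁ > k₂ > ⋯ > kₙ > 0} ∏ kⱼ^{-sⱼ}`. -/
noncomputable def mzeta {n : ℕ} (s : Fin n → ℝ) : ℝ :=
  ∑' k : {k : Fin n → ℕ // (∀ i j : Fin n, i < j → k j < k i) ∧ ∀ i, 0 < k i},
    ∏ j, (k.1 j : ℝ) ^ (-(s j))

def idxEquiv : ℕ × ℕ ≃ {k : Fin 2 → ℕ // (∀ i j : Fin 2, i < j → k j < k i) ∧ ∀ i, 0 < k i} where
  toFun p := ⟨![p.1 + p.2 + 2, p.2 + 1], by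
    refine ⟨fun i j hij => ?_, fun i => ?_⟩
    · fin_cases i <;> fin_cases j <;> simp_all <;> omega
    · fin_cases i <;> simp⟩
  invFun k := (k.1 0 - k.1 1 - 1, k.1 1 - 1)
  left_inv p := by
    obtain ⟨a, b⟩ := p
    simp [Prod.ext_iff]
    omega
  right_inv k := by
    obtain ⟨k, hk, hk0⟩ := k
    have h01 : k 1 < k 0 := hk 0 1 (by decide)
    have h1 : 0 < k 1 := hk0 1
    refine Subtype.ext ?_
    funext i
    fin_cases i <;> simp <;> omega

lemma mzeta_eq (s₁ s₂ : ℝ) :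
    mzeta ![s₁, s₂] = ∑' p : ℕ × ℕ, ((p.1:ℝ)+(p.2:ℝ)+2) ^ (-s₁) * ((p.2:ℝ)+1) ^ (-s₂) := by
  rw [mzeta, ← idxEquiv.tsum_eq]
  refine tsum_congr fun p => ?_
  rw [Fin.prod_univ_two]
  simp only [idxEquiv, Equiv.coe_fn_mk, Matrix.cons_val_zero, Matrix.cons_val_one,
    Matrix.head_cons]
  push_cast
  ring


theorem stmt7 (s₁ s₂ : ℝ) (h₁ : 1 < s₁) (h₂ : 1 < s₂) :
    mzeta ![s₁, s₂] =
      ∫ x₁ in Set.Ioi (1 : ℝ), ∫ x₂ in Set.Ioi (1 : ℝ),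
        ((x₁ - 1) * (x₁ * x₂ - 1))⁻¹ *
          (Real.log x₁ ^ (s₁ - 1) / (Real.Gamma s₁ * x₁)) *
          (Real.log x₂ ^ (s₂ - 1) / (Real.Gamma s₂ * x₂)) := by
  have hΓ₂ : (0:ℝ) < Real.Gamma s₂ := Real.Gamma_pos_of_pos (by linarith)
  rw [mzeta_eq]
  have step1 : ∀ x₁ ∈ Set.Ioi (1:ℝ),
      (∫ x₂ in Set.Ioi (1:ℝ), ((x₁ - 1) * (x₁ * x₂ - 1))⁻¹ *
          (Real.log x₁ ^ (s₁ - 1) / (Real.Gamma s₁ * x₁)) *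
          (Real.log x₂ ^ (s₂ - 1) / (Real.Gamma s₂ * x₂)))
      = ((x₁ - 1)⁻¹ * (Real.log x₁ ^ (s₁-1) / (Real.Gamma s₁ * x₁))) *
          ∑' n : ℕ, x₁ ^ (-(n:ℝ)-1) * ((n:ℝ)+1)^(-s₂) := by
    intro x₁ hx₁
    have hx₁1 : (1:ℝ) < x₁ := hx₁
    have hptw : ∀ x₂ ∈ Set.Ioi (1:ℝ),
        ((x₁ - 1) * (x₁ * x₂ - 1))⁻¹ *
          (Real.log x₁ ^ (s₁ - 1) / (Real.Gamma s₁ * x₁)) *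
          (Real.log x₂ ^ (s₂ - 1) / (Real.Gamma s₂ * x₂))
        = ((x₁ - 1)⁻¹ * (Real.log x₁ ^ (s₁-1) / (Real.Gamma s₁ * x₁))) *
          ((x₁ * x₂ - 1)⁻¹ * (Real.log x₂ ^ (s₂-1) / (Real.Gamma s₂ * x₂))) := by
      intro x₂ _
      rw [mul_inv]
      ring
    rw [setIntegral_congr_fun measurableSet_Ioi hptw,
      MeasureTheory.integral_const_mul, Stmt7Aux.inner_eq h₂ hx₁1]
  rw [setIntegral_congr_fun measurableSet_Ioi step1, Stmt7Aux.outer_eq h₁ h₂]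
end

section
/- Let n and q be positive integers, and let a_1, ..., a_q be integers. For each h with 1 ≤ h ≤ q, let the h-th legal term be given by an unordered set partition {P_1, ..., P_m} of {1, ..., n} together with, for each k, an ordered set partition (P_k^{(1)}, ..., P_k^{(α_k)}) of P_k; the legal term is the function of real variables s_1 > 1, ..., s_n > 1 given by T_h(s) = ∏_{k=1}^m ζ(t_k^{(1)}, ..., t_k^{(α_k)}) where t_k^{(r)} = ∑_{j ∈ P_k^{(r)}} s_j, and its associated rational function is R_h(x_1, ..., x_n) = ∏_{k=1}^m ∏_{β=1}^{α_k} (∏_{λ=1}^{β} ∏_{j ∈ P_k^{(λ)}} x_j − 1)^{-1}. Then ∑_{h=1}^q a_h T_h(s_1, ..., s_n) = 0 for all real s_1 > 1, ..., s_n > 1 if and only if ∑_{h=1}^q a_h R_h(x_1, ..., x_n) = 0 for all real x_1 > 1, ..., x_n > 1. -/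
/-- A legal term for `(s₁,…,sₙ)`: an unordered set partition of `{1,…,n}` into parts
`P₁,…,Pₘ` (indexed here by `Fin m`), together with an ordered set partition
`(Pₖ⁽¹⁾,…,Pₖ^(αₖ))` of each part `Pₖ`. -/
structure LegalTerm (n : ℕ) where
  m : ℕ
  hm : 0 < m
  α : Fin m → ℕ
  hα : ∀ k, 0 < α k
  parts : (k : Fin m) → Fin (α k) → Finset (Fin n)
  nonempty : ∀ k r, (parts k r).Nonempty
  disj : ∀ (k k' : Fin m) (r : Fin (α k)) (r' : Fin (α k')),
    (⟨k, r⟩ : Σ k, Fin (α k)) ≠ ⟨k', r'⟩ → Disjoint (parts k r) (parts k' r')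
  cover : ∀ j : Fin n, ∃ k r, j ∈ parts k r

/-- The value of a legal term: `∏ₖ ζ(tₖ⁽¹⁾,…,tₖ^(αₖ))` where `tₖ⁽ʳ⁾ = ∑_{j ∈ Pₖ⁽ʳ⁾} sⱼ`. -/
noncomputable def LegalTerm.eval {n : ℕ} (T : LegalTerm n) (s : Fin n → ℝ) : ℝ :=
  ∏ k, mzeta fun r : Fin (T.α k) => ∑ j ∈ T.parts k r, s j

/-- The rational function associated with a legal term:
`∏ₖ ∏_β (∏_{λ ≤ β} ∏_{j ∈ Pₖ^(λ)} xⱼ - 1)⁻¹`. -/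
noncomputable def LegalTerm.rat {n : ℕ} (T : LegalTerm n) (x : Fin n → ℝ) : ℝ :=
  ∏ k, ∏ β : Fin (T.α k), ((∏ lam ∈ Finset.Iic β, ∏ j ∈ T.parts k lam, x j) - 1)⁻¹


namespace Stmt8aux
open Finset Filter
open scoped ENNReal Topology


lemma tsum_toReal_ofReal {ι : Type*} (f : ι → ℝ) (hf : ∀ i, 0 ≤ f i) :
    ∑' i, f i = (∑' i, ENNReal.ofReal (f i)).toReal := by
  by_cases h : Summable f
  · rw [← ENNReal.ofReal_tsum_of_nonneg hf h, ENNReal.toReal_ofReal (tsum_nonneg hf)]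
  · rw [tsum_eq_zero_of_not_summable h]
    by_cases h2 : ∑' i, ENNReal.ofReal (f i) = ⊤
    · rw [h2]; simp
    · exfalso
      apply h
      have := ENNReal.summable_toReal h2
      refine this.congr fun i => ?_
      rw [ENNReal.toReal_ofReal (hf i)]

lemma summable_of_ofReal_ne_top {ι : Type*} {f : ι → ℝ} (hf : ∀ i, 0 ≤ f i)
    (h : ∑' i, ENNReal.ofReal (f i) ≠ ⊤) : Summable f := by
  have := ENNReal.summable_toReal h
  refine this.congr fun i => ?_
  rw [ENNReal.toReal_ofReal (hf i)]

lemma tsum_pi_prod : ∀ (m : ℕ) (β : Fin m → Type) (f : ∀ k, β k → ℝ≥0∞),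
    ∑' g : ∀ k, β k, ∏ k, f k (g k) = ∏ k, ∑' b, f k b := by
  intro m
  induction m with
  | zero =>
    intro β f
    simp only [Finset.univ_eq_empty, Finset.prod_empty]
    rw [tsum_eq_single (fun k => k.elim0)]
    · intro b hb; exact absurd (funext fun k => k.elim0) hb
  | succ m ih =>
    intro β f
    rw [← (Fin.consEquiv β).tsum_eq]
    have : ∀ p : β 0 × ((i : Fin m) → β i.succ),
        ∏ k, f k ((Fin.consEquiv β) p k) = f 0 p.1 * ∏ i : Fin m, f i.succ (p.2 i) := by
      intro p
      rw [Fin.prod_univ_succ]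
      simp [Fin.consEquiv]
    simp only [this]
    have h2 := ENNReal.tsum_prod
      (f := fun (b : β 0) (g : (i : Fin m) → β i.succ) => f 0 b * ∏ i : Fin m, f i.succ (g i))
    rw [h2]
    simp only [ENNReal.tsum_mul_left]
    rw [ENNReal.tsum_mul_right, ih (fun i => β i.succ) (fun i => f i.succ), Fin.prod_univ_succ]


def Decr {a : ℕ} (K : Fin a → ℕ) : Prop :=
  (∀ i j : Fin a, i < j → K j < K i) ∧ ∀ i, 0 < K i

noncomputable def rep {n : ℕ} (T : LegalTerm n) (k : Fin T.m) (r : Fin (T.α k)) : Fin n :=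
  (T.nonempty k r).choose

lemma rep_mem {n : ℕ} (T : LegalTerm n) (k : Fin T.m) (r : Fin (T.α k)) :
    rep T k r ∈ T.parts k r := (T.nonempty k r).choose_spec

noncomputable def loc {n : ℕ} (T : LegalTerm n) (j : Fin n) : Σ k : Fin T.m, Fin (T.α k) :=
  ⟨(T.cover j).choose, (T.cover j).choose_spec.choose⟩

lemma loc_mem {n : ℕ} (T : LegalTerm n) (j : Fin n) :
    j ∈ T.parts (loc T j).1 (loc T j).2 := (T.cover j).choose_spec.choose_spec

lemma loc_eq {n : ℕ} (T : LegalTerm n) {j : Fin n} {k : Fin T.m} {r : Fin (T.α k)}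
    (h : j ∈ T.parts k r) : loc T j = ⟨k, r⟩ := by
  by_contra hne
  have hd := T.disj (loc T j).1 k (loc T j).2 r (by
    intro hc
    exact hne (by rw [← hc]))
  exact (Finset.disjoint_left.1 hd) (loc_mem T j) h

def Supp {n : ℕ} (T : LegalTerm n) : Set (Fin n → ℕ) :=
  {κ | ∃ K : (k : Fin T.m) → Fin (T.α k) → ℕ,
    (∀ k, Decr (K k)) ∧ ∀ k r j, j ∈ T.parts k r → κ j = K k r}

lemma supp_pos {n : ℕ} (T : LegalTerm n) {κ : Fin n → ℕ} (h : κ ∈ Supp T) (j : Fin n) :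
    0 < κ j := by
  obtain ⟨K, hK, hκ⟩ := h
  rw [hκ (loc T j).1 (loc T j).2 j (loc_mem T j)]
  exact (hK _).2 _

noncomputable def suppEquiv {n : ℕ} (T : LegalTerm n) :
    (Supp T) ≃ ((k : Fin T.m) → {K : Fin (T.α k) → ℕ // Decr K}) where
  toFun κ := fun k => ⟨fun r => κ.1 (rep T k r), by
    obtain ⟨K, hK, hκ⟩ := κ.2
    have he : (fun r => κ.1 (rep T k r)) = K k := funext fun r => hκ k r _ (rep_mem T k r)
    rw [he]; exact hK k⟩
  invFun K := ⟨fun j => (K (loc T j).1).1 (loc T j).2,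
    ⟨fun k r => (K k).1 r, fun k => (K k).2, by
      intro k r j hj
      show (K (loc T j).1).1 (loc T j).2 = (K k).1 r
      rw [loc_eq T hj]⟩⟩
  left_inv := by
    rintro ⟨κ, hκ⟩
    obtain ⟨K, hK, hκ'⟩ := hκ
    apply Subtype.ext
    funext j
    show κ (rep T (loc T j).1 (loc T j).2) = κ j
    rw [hκ' (loc T j).1 (loc T j).2 _ (rep_mem T _ _), ← hκ' (loc T j).1 (loc T j).2 j (loc_mem T j)]
  right_inv := by
    intro K
    funext k
    apply Subtype.ext
    funext r
    show (K (loc T (rep T k r)).1).1 (loc T (rep T k r)).2 = (K k).1 r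
    rw [loc_eq T (rep_mem T k r)]

lemma filter_loc_eq {n : ℕ} (T : LegalTerm n) (k : Fin T.m) (r : Fin (T.α k)) :
    Finset.univ.filter (fun j => loc T j = (⟨k, r⟩ : Σ k, Fin (T.α k))) = T.parts k r := by
  ext j
  simp only [Finset.mem_filter, Finset.mem_univ, true_and]
  constructor
  · intro h
    have := loc_mem T j
    rw [h] at this
    exact this
  · exact loc_eq T

lemma prod_parts {n : ℕ} (T : LegalTerm n) {M : Type*} [CommMonoid M] (f : Fin n → M) :
    ∏ j, f j = ∏ k, ∏ r, ∏ j ∈ T.parts k r, f j := by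
  classical
  rw [← Finset.prod_fiberwise Finset.univ (fun j => loc T j) f]
  rw [← Finset.univ_sigma_univ, Finset.prod_sigma]
  exact Finset.prod_congr rfl fun k _ => Finset.prod_congr rfl fun r _ => by
    rw [filter_loc_eq]

lemma tsum_supp {n : ℕ} (T : LegalTerm n) (W : Fin n → ℕ → ℝ≥0∞) :
    ∑' κ : Supp T, ∏ j, W j (κ.1 j)
      = ∏ k, ∑' K : {K : Fin (T.α k) → ℕ // Decr K}, ∏ r, ∏ j ∈ T.parts k r, W j (K.1 r) := by
  rw [← (suppEquiv T).symm.tsum_eq]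
  rw [← tsum_pi_prod T.m (fun k => {K : Fin (T.α k) → ℕ // Decr K})
      (fun k K => ∏ r, ∏ j ∈ T.parts k r, W j (K.1 r))]
  refine tsum_congr fun K => ?_
  rw [prod_parts T (fun j => W j (((suppEquiv T).symm K).1 j))]
  refine Finset.prod_congr rfl fun k _ => Finset.prod_congr rfl fun r _ =>
    Finset.prod_congr rfl fun j hj => ?_
  have : ((suppEquiv T).symm K).1 j = (K k).1 r := by
    show (K (loc T j).1).1 (loc T j).2 = (K k).1 r
    rw [loc_eq T hj]
  rw [this]

lemma mzeta_eq {a : ℕ} (t : Fin a → ℝ) :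
    mzeta t = (∑' K : {K : Fin a → ℕ // Decr K},
      ∏ r, ENNReal.ofReal ((K.1 r : ℝ) ^ (-(t r)))).toReal := by
  rw [mzeta, tsum_toReal_ofReal _
    (fun K => Finset.prod_nonneg fun r _ => Real.rpow_nonneg (Nat.cast_nonneg _) _)]
  congr 1
  exact tsum_congr fun K =>
    ENNReal.ofReal_prod_of_nonneg fun r _ => Real.rpow_nonneg (Nat.cast_nonneg _) _

lemma eval_eq {n : ℕ} (T : LegalTerm n) (s : Fin n → ℝ) :
    T.eval s = (∑' κ : Supp T, ∏ j, ENNReal.ofReal ((κ.1 j : ℝ) ^ (-(s j)))).toReal := by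
  rw [LegalTerm.eval, tsum_supp T (fun j m => ENNReal.ofReal ((m : ℝ) ^ (-(s j)))),
    ENNReal.toReal_prod]
  refine Finset.prod_congr rfl fun k _ => ?_
  rw [mzeta_eq]
  congr 1
  refine tsum_congr fun K => Finset.prod_congr rfl fun r _ => ?_
  rw [← ENNReal.ofReal_prod_of_nonneg fun j _ => Real.rpow_nonneg (Nat.cast_nonneg _) _]
  congr 1
  have hpos : (0 : ℝ) < (K.1 r : ℝ) := by exact_mod_cast K.2.2 r
  rw [← Real.rpow_sum_of_pos hpos]
  congr 1
  rw [← Finset.sum_neg_distrib]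

-- decreasing tuples equiv
def Fsum {a : ℕ} (M : Fin a → ℕ) : Fin a → ℕ := fun r => ∑ β ∈ Finset.Ici r, (M β + 1)

lemma Ici_eq_insert {a : ℕ} (r : Fin a) (hr : r.1 + 1 < a) :
    Finset.Ici r = insert r (Finset.Ici (⟨r.1 + 1, hr⟩ : Fin a)) := by
  rw [← Finset.Ioi_insert]
  congr 1
  ext i
  simp only [Finset.mem_Ioi, Finset.mem_Ici, Fin.lt_def, Fin.le_def]
  omega

lemma Ici_last {a : ℕ} (r : Fin a) (hr : r.1 + 1 = a) : Finset.Ici r = {r} := by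
  ext i
  simp only [Finset.mem_Ici, Finset.mem_singleton]
  constructor
  · intro h
    have h2 : i.1 < a := i.2
    apply Fin.ext
    apply le_antisymm
    · omega
    · exact h
  · rintro rfl; exact le_refl _

lemma not_mem_Ici_succ {a : ℕ} (r : Fin a) (hr : r.1 + 1 < a) :
    r ∉ Finset.Ici (⟨r.1 + 1, hr⟩ : Fin a) := by
  simp [Finset.mem_Ici, Fin.le_def]

lemma Fsum_step {a : ℕ} (M : Fin a → ℕ) (r : Fin a) (hr : r.1 + 1 < a) :
    Fsum M r = M r + 1 + Fsum M ⟨r.1 + 1, hr⟩ := by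
  rw [Fsum, Ici_eq_insert r hr, Finset.sum_insert (not_mem_Ici_succ r hr)]
  rfl

lemma Fsum_last {a : ℕ} (M : Fin a → ℕ) (r : Fin a) (hr : r.1 + 1 = a) :
    Fsum M r = M r + 1 := by
  rw [Fsum, Ici_last r hr, Finset.sum_singleton]

lemma Fsum_decr {a : ℕ} (M : Fin a → ℕ) : Decr (Fsum M) := by
  constructor
  · intro i j hij
    apply Finset.sum_lt_sum_of_subset (f := fun β => M β + 1)
      (by intro y hy; simp only [Finset.mem_Ici] at *; exact le_of_lt (lt_of_lt_of_le hij hy))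
      (Finset.mem_Ici.2 (le_refl i)) (by simp [Finset.mem_Ici, not_le, hij]) (Nat.succ_pos _)
    intro y _ _; exact Nat.zero_le _
  · intro r
    apply Finset.sum_pos'
    · intro y _; exact Nat.zero_le _
    · exact ⟨r, Finset.mem_Ici.2 (le_refl r), Nat.succ_pos _⟩

def Gdiff {a : ℕ} (K : Fin a → ℕ) : Fin a → ℕ :=
  fun r => (if h : r.1 + 1 < a then K r - K ⟨r.1 + 1, h⟩ else K r) - 1

lemma Gdiff_Fsum {a : ℕ} (M : Fin a → ℕ) : Gdiff (Fsum M) = M := by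
  funext r
  rw [Gdiff]
  by_cases h : r.1 + 1 < a
  · rw [dif_pos h, Fsum_step M r h]
    omega
  · have h2 : r.1 + 1 = a := by have := r.2; omega
    rw [dif_neg h, Fsum_last M r h2]
    omega

lemma Fsum_Gdiff_aux {a : ℕ} (K : Fin a → ℕ) (hK : Decr K) :
    ∀ d : ℕ, ∀ r : Fin a, a - 1 - r.1 ≤ d → Fsum (Gdiff K) r = K r := by
  intro d
  induction d with
  | zero =>
    intro r hr
    have h2 : r.1 + 1 = a := by have := r.2; omega
    rw [Fsum_last _ r h2, Gdiff, dif_neg (by omega)]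
    have := hK.2 r
    omega
  | succ d ih =>
    intro r hr
    by_cases h : r.1 + 1 < a
    · have hlt : (r : Fin a) < ⟨r.1 + 1, h⟩ := by simp [Fin.lt_def]
      have hKlt := hK.1 r ⟨r.1 + 1, h⟩ hlt
      rw [Fsum_step _ r h, ih ⟨r.1 + 1, h⟩ (by simp; omega), Gdiff, dif_pos h]
      omega
    · have h2 : r.1 + 1 = a := by have := r.2; omega
      rw [Fsum_last _ r h2, Gdiff, dif_neg (by omega)]
      have := hK.2 r
      omega

noncomputable def decrEquiv (a : ℕ) : (Fin a → ℕ) ≃ {K : Fin a → ℕ // Decr K} where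
  toFun M := ⟨Fsum M, Fsum_decr M⟩
  invFun K := Gdiff K.1
  left_inv M := Gdiff_Fsum M
  right_inv K := Subtype.ext (funext fun r => Fsum_Gdiff_aux K.1 K.2 (a - 1 - r.1) r le_rfl)

-- geometric series
lemma geom_eq (A : ℝ) (hA : 1 < A) :
    ((A - 1)⁻¹ : ℝ) = (∑' m : ℕ, ENNReal.ofReal (A ^ (-((m : ℝ) + 1)))).toReal := by
  have hA0 : (0 : ℝ) < A := lt_trans one_pos hA
  have hterm : ∀ m : ℕ, A ^ (-((m : ℝ) + 1)) = A⁻¹ ^ (m + 1) := by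
    intro m
    rw [← Real.rpow_neg_one A, ← Real.rpow_natCast (A ^ (-1 : ℝ)) (m + 1),
      ← Real.rpow_mul hA0.le]
    congr 1
    push_cast
    ring
  have hr0 : (0 : ℝ) ≤ A⁻¹ := inv_nonneg.2 hA0.le
  have hr1 : A⁻¹ < 1 := inv_lt_one_of_one_lt₀ hA
  rw [← tsum_toReal_ofReal _ (fun m => Real.rpow_nonneg hA0.le _)]
  have : ∑' m : ℕ, A ^ (-((m : ℝ) + 1)) = ∑' m : ℕ, A⁻¹ * A⁻¹ ^ m := by
    refine tsum_congr fun m => ?_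
    rw [hterm m, pow_succ]
    ring
  rw [this, tsum_mul_left, tsum_geometric_of_lt_one hr0 hr1]
  have h1 : A * (1 - A⁻¹) = A - 1 := by field_simp
  rw [← h1, mul_inv]

lemma one_lt_prod_real {ι : Type*} {s : Finset ι} {f : ι → ℝ} (h : ∀ i ∈ s, 1 < f i)
    (hs : s.Nonempty) : 1 < ∏ i ∈ s, f i := by
  classical
  induction s using Finset.induction_on with
  | empty => exact absurd hs (by simp)
  | @insert i s his ih =>
    rw [Finset.prod_insert his]
    rcases s.eq_empty_or_nonempty with rfl | hne
    · simpa using h i (by simp)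
    · have h1 : 1 < f i := h i (by simp)
      have h2 : 1 < ∏ j ∈ s, f j := ih (fun j hj => h j (by simp [hj])) hne
      nlinarith

lemma rat_factor {n : ℕ} (T : LegalTerm n) (x : Fin n → ℝ) (hx : ∀ j, 1 < x j) (k : Fin T.m) :
    ∏ β : Fin (T.α k), ((∏ lam ∈ Finset.Iic β, ∏ j ∈ T.parts k lam, x j) - 1)⁻¹
      = (∑' K : {K : Fin (T.α k) → ℕ // Decr K}, ∏ r, ∏ j ∈ T.parts k r,
          ENNReal.ofReal (x j ^ (-(K.1 r : ℝ)))).toReal := by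
  set a := T.α k with ha
  set P : Fin a → ℝ := fun lam => ∏ j ∈ T.parts k lam, x j with hP
  have hP1 : ∀ lam, 1 < P lam := fun lam =>
    one_lt_prod_real (fun j _ => hx j) (T.nonempty k lam)
  have hP0 : ∀ lam, 0 < P lam := fun lam => lt_trans one_pos (hP1 lam)
  set A : Fin a → ℝ := fun β => ∏ lam ∈ Finset.Iic β, P lam with hA
  have hA1 : ∀ β, 1 < A β := fun β =>
    one_lt_prod_real (fun lam _ => hP1 lam) ⟨β, Finset.mem_Iic.2 le_rfl⟩
  -- step 1: each factor is a geometric series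
  have step1 : ∏ β : Fin a, ((A β) - 1)⁻¹
      = (∏ β : Fin a, ∑' m : ℕ, ENNReal.ofReal (A β ^ (-((m : ℝ) + 1)))).toReal := by
    rw [ENNReal.toReal_prod]
    exact Finset.prod_congr rfl fun β _ => geom_eq (A β) (hA1 β)
  rw [step1, ← tsum_pi_prod a (fun _ => ℕ) (fun β m => ENNReal.ofReal (A β ^ (-((m : ℝ) + 1))))]
  congr 1
  rw [← (decrEquiv a).tsum_eq]
  refine tsum_congr fun M => ?_
  -- now the combinatorial identity for fixed M
  have key : ∏ β : Fin a, A β ^ (-((M β : ℝ) + 1))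
      = ∏ r : Fin a, ∏ j ∈ T.parts k r, x j ^ (-(Fsum M r : ℝ)) := by
    have e1 : ∀ β : Fin a, A β ^ (-((M β : ℝ) + 1))
        = ∏ lam ∈ Finset.Iic β, P lam ^ (-((M β : ℝ) + 1)) := by
      intro β
      rw [Real.finset_prod_rpow _ _ (fun lam _ => (hP0 lam).le)]
    simp only [e1]
    rw [Finset.prod_comm' (s := Finset.univ) (t := fun β => Finset.Iic β)
      (t' := Finset.univ) (s' := fun lam => Finset.Ici lam)
      (by intro β lam; simp [Finset.mem_Iic, Finset.mem_Ici])]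
    refine Finset.prod_congr rfl fun lam _ => ?_
    rw [← Real.rpow_sum_of_pos (hP0 lam) _ _]
    have he : ∑ β ∈ Finset.Ici lam, (-((M β : ℝ) + 1)) = -(Fsum M lam : ℝ) := by
      rw [Fsum]
      push_cast
      rw [Finset.sum_neg_distrib]
    rw [he, hP]
    exact (Real.finset_prod_rpow _ _ (fun j _ => (lt_trans one_pos (hx j)).le) _).symm
  show ∏ β : Fin a, ENNReal.ofReal (A β ^ (-((M β : ℝ) + 1))) = _
  rw [← ENNReal.ofReal_prod_of_nonneg (fun β _ => Real.rpow_nonneg (lt_trans one_pos (hA1 β)).le _),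
    key]
  rw [ENNReal.ofReal_prod_of_nonneg (fun r _ => Finset.prod_nonneg fun j _ =>
    Real.rpow_nonneg (lt_trans one_pos (hx j)).le _)]
  refine Finset.prod_congr rfl fun r _ => ?_
  rw [ENNReal.ofReal_prod_of_nonneg (fun j _ => Real.rpow_nonneg (lt_trans one_pos (hx j)).le _)]
  rfl

lemma rat_eq {n : ℕ} (T : LegalTerm n) (x : Fin n → ℝ) (hx : ∀ j, 1 < x j) :
    T.rat x = (∑' κ : Supp T, ∏ j, ENNReal.ofReal (x j ^ (-(κ.1 j : ℝ)))).toReal := by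
  rw [LegalTerm.rat, tsum_supp T (fun j m => ENNReal.ofReal (x j ^ (-(m : ℝ)))),
    ENNReal.toReal_prod]
  exact Finset.prod_congr rfl fun k _ => rat_factor T x hx k


set_option maxHeartbeats 1000000 in
lemma huniqD (d : ℕ → ℝ) (hd0 : d 0 = 0)
    (hsum : ∀ y : ℝ, 1 < y → Summable fun m => |d m| * (m : ℝ) ^ (-y))
    (hvan : ∀ y : ℝ, 1 < y → ∑' m, d m * (m : ℝ) ^ (-y) = 0) : ∀ m, d m = 0 := by
  intro m
  induction m using Nat.strong_induction_on with
  | _ m ih =>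
  rcases Nat.eq_zero_or_pos m with rfl | hm
  · exact hd0
  have hm1 : (1 : ℝ) ≤ (m : ℝ) := by exact_mod_cast hm
  have hm0 : (0 : ℝ) < (m : ℝ) := by linarith
  have hm10 : (0 : ℝ) < (m : ℝ) + 1 := by linarith
  have hCsum : Summable fun i => |d (i + (m + 1))| * ((i + (m + 1) : ℕ) : ℝ) ^ (-(2:ℝ)) :=
    (summable_nat_add_iff (f := fun m' => |d m'| * (m' : ℝ) ^ (-(2:ℝ))) (m + 1)).2
      (hsum 2 one_lt_two)
  set C : ℝ := ∑' i : ℕ, |d (i + (m + 1))| * ((i + (m + 1) : ℕ) : ℝ) ^ (-(2:ℝ)) with hC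
  have hC0 : 0 ≤ C := tsum_nonneg fun i =>
    mul_nonneg (abs_nonneg _) (Real.rpow_nonneg (Nat.cast_nonneg _) _)
  have est : ∀ σ : ℝ, 2 ≤ σ →
      |d m| ≤ ((m : ℝ) / ((m : ℝ) + 1)) ^ σ * (((m : ℝ) + 1) ^ (2 : ℝ) * C) := by
    intro σ hσ
    have hσ1 : (1 : ℝ) < σ := by linarith
    have habs : ∀ m' : ℕ, |d m' * (m' : ℝ) ^ (-σ)| = |d m'| * (m' : ℝ) ^ (-σ) := fun m' => by
      rw [abs_mul, abs_of_nonneg (Real.rpow_nonneg (Nat.cast_nonneg _) _)]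
    have hs : Summable fun m' => d m' * (m' : ℝ) ^ (-σ) :=
      Summable.of_abs ((hsum σ hσ1).congr fun m' => (habs m').symm)
    have hsplit := Summable.sum_add_tsum_nat_add (f := fun m' => d m' * (m' : ℝ) ^ (-σ)) (m + 1) hs
    rw [hvan σ hσ1] at hsplit
    have hfin : ∑ i ∈ Finset.range (m + 1), d i * (i : ℝ) ^ (-σ) = d m * (m : ℝ) ^ (-σ) := by
      refine Finset.sum_eq_single_of_mem m (Finset.self_mem_range_succ m) fun b hb hbm => ?_
      rw [ih b (by simp only [Finset.mem_range] at hb; omega), zero_mul]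
    rw [hfin] at hsplit
    have heq : d m * (m : ℝ) ^ (-σ) = -∑' i : ℕ, d (i + (m + 1)) * ((i + (m + 1) : ℕ) : ℝ) ^ (-σ) := by
      linarith
    have htailabs : Summable fun i : ℕ => |d (i + (m + 1)) * ((i + (m + 1) : ℕ) : ℝ) ^ (-σ)| :=
      ((summable_nat_add_iff (f := fun m' => |d m'| * (m' : ℝ) ^ (-σ)) (m + 1)).2
        (hsum σ hσ1)).congr fun i => (habs _).symm
    have h1 : |d m * (m : ℝ) ^ (-σ)| ≤ ∑' i : ℕ, |d (i + (m + 1))| * ((i + (m + 1) : ℕ) : ℝ) ^ (-σ) := by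
      rw [heq, abs_neg, ← Real.norm_eq_abs]
      have hn := norm_tsum_le_tsum_norm
        (f := fun i : ℕ => d (i + (m + 1)) * ((i + (m + 1) : ℕ) : ℝ) ^ (-σ)) htailabs
      refine le_trans hn (le_of_eq (tsum_congr fun i => ?_))
      rw [Real.norm_eq_abs, habs]
    have h2 : ∀ i : ℕ, |d (i + (m + 1))| * ((i + (m + 1) : ℕ) : ℝ) ^ (-σ)
        ≤ |d (i + (m + 1))| * ((i + (m + 1) : ℕ) : ℝ) ^ (-(2:ℝ)) * (((m : ℝ) + 1) ^ (-(σ - 2))) := by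
      intro i
      have hN : ((m : ℝ) + 1) ≤ ((i + (m + 1) : ℕ) : ℝ) := by
        push_cast
        have : (0:ℝ) ≤ (i : ℝ) := Nat.cast_nonneg i
        linarith
      have hsplitexp : ((i + (m + 1) : ℕ) : ℝ) ^ (-σ)
          = ((i + (m + 1) : ℕ) : ℝ) ^ (-(2 : ℝ)) * ((i + (m + 1) : ℕ) : ℝ) ^ (-(σ - 2)) := by
        rw [← Real.rpow_add (by linarith)]
        ring_nf
      rw [hsplitexp]
      have hle : ((i + (m + 1) : ℕ) : ℝ) ^ (-(σ - 2)) ≤ ((m : ℝ) + 1) ^ (-(σ - 2)) :=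
        Real.rpow_le_rpow_of_nonpos hm10 hN (by linarith)
      calc |d (i + (m + 1))| * (((i + (m + 1) : ℕ) : ℝ) ^ (-(2:ℝ)) * ((i + (m + 1) : ℕ) : ℝ) ^ (-(σ - 2)))
          ≤ |d (i + (m + 1))| * (((i + (m + 1) : ℕ) : ℝ) ^ (-(2:ℝ)) * ((m : ℝ) + 1) ^ (-(σ - 2))) := by
            refine mul_le_mul_of_nonneg_left ?_ (abs_nonneg _)
            exact mul_le_mul_of_nonneg_left hle (Real.rpow_nonneg (Nat.cast_nonneg _) _)
        _ = |d (i + (m + 1))| * ((i + (m + 1) : ℕ) : ℝ) ^ (-(2:ℝ)) * ((m : ℝ) + 1) ^ (-(σ - 2)) := by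
            ring
    have h3 : ∑' i : ℕ, |d (i + (m + 1))| * ((i + (m + 1) : ℕ) : ℝ) ^ (-σ)
        ≤ C * (((m : ℝ) + 1) ^ (-(σ - 2))) := by
      rw [hC, ← tsum_mul_right]
      refine Summable.tsum_le_tsum h2
        ((summable_nat_add_iff (f := fun m' => |d m'| * (m' : ℝ) ^ (-σ)) (m + 1)).2 (hsum σ hσ1))
        (hCsum.mul_right _)
    have h4 : |d m| * (m : ℝ) ^ (-σ) ≤ C * (((m : ℝ) + 1) ^ (-(σ - 2))) := by
      calc |d m| * (m : ℝ) ^ (-σ) = |d m * (m : ℝ) ^ (-σ)| := (habs m).symm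
        _ ≤ _ := le_trans h1 h3
    have hpow : (0 : ℝ) < (m : ℝ) ^ (-σ) := Real.rpow_pos_of_pos hm0 _
    have h5 : |d m| ≤ C * (((m : ℝ) + 1) ^ (-(σ - 2))) * ((m : ℝ) ^ (-σ))⁻¹ := by
      rw [le_mul_inv_iff₀ hpow]
      exact h4
    refine le_trans h5 (le_of_eq ?_)
    rw [Real.div_rpow hm0.le hm10.le]
    have e1 : ((m : ℝ) + 1) ^ (-(σ - 2)) = ((m : ℝ) + 1) ^ (2:ℝ) * (((m : ℝ) + 1) ^ σ)⁻¹ := by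
      rw [← Real.rpow_neg hm10.le, ← Real.rpow_add hm10]
      ring_nf
    have e2 : ((m : ℝ) ^ (-σ))⁻¹ = (m : ℝ) ^ σ := by
      rw [Real.rpow_neg hm0.le, inv_inv]
    have hpσ : (0:ℝ) < ((m : ℝ) + 1) ^ σ := Real.rpow_pos_of_pos hm10 _
    rw [e1, e2, div_eq_mul_inv]
    ring
  have hb1 : (m : ℝ) / ((m : ℝ) + 1) < 1 := by
    rw [div_lt_one hm10]; linarith
  have hb0 : (0:ℝ) ≤ (m : ℝ) / ((m : ℝ) + 1) := by positivity
  have hten : Tendsto (fun σ : ℝ => ((m : ℝ) / ((m : ℝ) + 1)) ^ σ * (((m : ℝ) + 1) ^ (2 : ℝ) * C))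
      atTop (nhds 0) := by
    have h := (tendsto_rpow_atTop_of_base_lt_one _ (by linarith) hb1).mul_const
      (((m : ℝ) + 1) ^ (2 : ℝ) * C)
    simpa using h
  have hfin2 : |d m| ≤ 0 := ge_of_tendsto hten (eventually_atTop.2 ⟨2, est⟩)
  exact abs_nonpos_iff.1 hfin2



lemma huniqP (d : ℕ → ℝ) (hd0 : d 0 = 0)
    (hsum : ∀ y : ℝ, 1 < y → Summable fun m => |d m| * y ^ (-(m : ℝ)))
    (hvan : ∀ y : ℝ, 1 < y → ∑' m, d m * y ^ (-(m : ℝ)) = 0) : ∀ m, d m = 0 := by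
  intro m
  induction m using Nat.strong_induction_on with
  | _ m ih =>
  rcases Nat.eq_zero_or_pos m with rfl | hm
  · exact hd0
  have hCsum : Summable fun i => |d (i + (m + 1))| * (2:ℝ) ^ (-((i + (m + 1) : ℕ) : ℝ)) :=
    (summable_nat_add_iff (f := fun m' => |d m'| * (2:ℝ) ^ (-(m' : ℝ))) (m + 1)).2
      (hsum 2 one_lt_two)
  set C : ℝ := ∑' i : ℕ, |d (i + (m + 1))| * (2:ℝ) ^ (-((i + (m + 1) : ℕ) : ℝ)) with hC
  have hC0 : 0 ≤ C := tsum_nonneg fun i =>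
    mul_nonneg (abs_nonneg _) (Real.rpow_nonneg (by norm_num) _)
  have est : ∀ y : ℝ, 2 ≤ y → |d m| ≤ C * (2:ℝ) ^ ((m:ℝ) + 1) * y ^ (-(1:ℝ)) := by
    intro y hy
    have hy1 : (1 : ℝ) < y := by linarith
    have hy0 : (0 : ℝ) < y := by linarith
    have hy20 : (0 : ℝ) < y / 2 := by linarith
    have hy21 : (1 : ℝ) ≤ y / 2 := by linarith
    have habs : ∀ m' : ℕ, |d m' * y ^ (-(m' : ℝ))| = |d m'| * y ^ (-(m' : ℝ)) := fun m' => by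
      rw [abs_mul, abs_of_nonneg (Real.rpow_nonneg hy0.le _)]
    have hs : Summable fun m' => d m' * y ^ (-(m' : ℝ)) :=
      Summable.of_abs ((hsum y hy1).congr fun m' => (habs m').symm)
    have hsplit := Summable.sum_add_tsum_nat_add (f := fun m' => d m' * y ^ (-(m' : ℝ))) (m + 1) hs
    rw [hvan y hy1] at hsplit
    have hfin : ∑ i ∈ Finset.range (m + 1), d i * y ^ (-(i : ℝ)) = d m * y ^ (-(m : ℝ)) := by
      refine Finset.sum_eq_single_of_mem m (Finset.self_mem_range_succ m) fun b hb hbm => ?_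
      rw [ih b (by simp only [Finset.mem_range] at hb; omega), zero_mul]
    rw [hfin] at hsplit
    have heq : d m * y ^ (-(m : ℝ)) = -∑' i : ℕ, d (i + (m + 1)) * y ^ (-((i + (m + 1) : ℕ) : ℝ)) := by
      linarith
    have htailabs : Summable fun i : ℕ => |d (i + (m + 1)) * y ^ (-((i + (m + 1) : ℕ) : ℝ))| :=
      ((summable_nat_add_iff (f := fun m' => |d m'| * y ^ (-(m' : ℝ))) (m + 1)).2
        (hsum y hy1)).congr fun i => (habs _).symm
    have h1 : |d m * y ^ (-(m : ℝ))| ≤ ∑' i : ℕ, |d (i + (m + 1))| * y ^ (-((i + (m + 1) : ℕ) : ℝ)) := by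
      rw [heq, abs_neg, ← Real.norm_eq_abs]
      have hn := norm_tsum_le_tsum_norm
        (f := fun i : ℕ => d (i + (m + 1)) * y ^ (-((i + (m + 1) : ℕ) : ℝ))) htailabs
      refine le_trans hn (le_of_eq (tsum_congr fun i => ?_))
      rw [Real.norm_eq_abs, habs]
    have h2 : ∀ i : ℕ, |d (i + (m + 1))| * y ^ (-((i + (m + 1) : ℕ) : ℝ))
        ≤ |d (i + (m + 1))| * (2:ℝ) ^ (-((i + (m + 1) : ℕ) : ℝ)) * (y / 2) ^ (-((m:ℝ) + 1)) := by
      intro i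
      have hNcast : ((i + (m + 1) : ℕ) : ℝ) = (i : ℝ) + ((m : ℝ) + 1) := by push_cast; ring
      have hyy : y ^ (-((i + (m + 1) : ℕ) : ℝ))
          = (2:ℝ) ^ (-((i + (m + 1) : ℕ) : ℝ)) * (y / 2) ^ (-((i + (m + 1) : ℕ) : ℝ)) := by
        rw [← Real.mul_rpow (by norm_num) hy20.le]
        congr 1
        field_simp
      rw [hyy]
      have hle : (y / 2) ^ (-((i + (m + 1) : ℕ) : ℝ)) ≤ (y / 2) ^ (-((m:ℝ) + 1)) := by
        apply Real.rpow_le_rpow_of_exponent_le hy21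
        rw [hNcast]
        have : (0:ℝ) ≤ (i : ℝ) := Nat.cast_nonneg i
        linarith
      calc |d (i + (m + 1))| * ((2:ℝ) ^ (-((i + (m + 1) : ℕ) : ℝ)) * (y / 2) ^ (-((i + (m + 1) : ℕ) : ℝ)))
          ≤ |d (i + (m + 1))| * ((2:ℝ) ^ (-((i + (m + 1) : ℕ) : ℝ)) * (y / 2) ^ (-((m:ℝ) + 1))) := by
            refine mul_le_mul_of_nonneg_left ?_ (abs_nonneg _)
            exact mul_le_mul_of_nonneg_left hle (Real.rpow_nonneg (by norm_num) _)
        _ = |d (i + (m + 1))| * (2:ℝ) ^ (-((i + (m + 1) : ℕ) : ℝ)) * (y / 2) ^ (-((m:ℝ) + 1)) := by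
            ring
    have h3 : ∑' i : ℕ, |d (i + (m + 1))| * y ^ (-((i + (m + 1) : ℕ) : ℝ))
        ≤ C * ((y / 2) ^ (-((m:ℝ) + 1))) := by
      rw [hC, ← tsum_mul_right]
      refine Summable.tsum_le_tsum h2
        ((summable_nat_add_iff (f := fun m' => |d m'| * y ^ (-(m' : ℝ))) (m + 1)).2 (hsum y hy1))
        (hCsum.mul_right _)
    have h4 : |d m| * y ^ (-(m : ℝ)) ≤ C * ((y / 2) ^ (-((m:ℝ) + 1))) := by
      calc |d m| * y ^ (-(m : ℝ)) = |d m * y ^ (-(m : ℝ))| := (habs m).symm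
        _ ≤ _ := le_trans h1 h3
    have hpow : (0 : ℝ) < y ^ (-(m : ℝ)) := Real.rpow_pos_of_pos hy0 _
    have h5 : |d m| ≤ C * ((y / 2) ^ (-((m:ℝ) + 1))) * (y ^ (-(m : ℝ)))⁻¹ := by
      rw [le_mul_inv_iff₀ hpow]
      exact h4
    refine le_trans h5 (le_of_eq ?_)
    have e1 : (y ^ (-(m : ℝ)))⁻¹ = y ^ (m : ℝ) := by
      rw [Real.rpow_neg hy0.le, inv_inv]
    have e2 : y ^ (-((m:ℝ) + 1)) * y ^ (m : ℝ) = y ^ (-(1:ℝ)) := by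
      rw [← Real.rpow_add hy0]
      congr 1
      ring
    have eA : (y / 2) ^ (-((m:ℝ) + 1)) = y ^ (-((m:ℝ)+1)) * (2:ℝ) ^ ((m:ℝ)+1) := by
      rw [div_eq_mul_inv, Real.mul_rpow hy0.le (by norm_num),
        Real.inv_rpow (by norm_num), Real.rpow_neg (by norm_num : (0:ℝ) ≤ 2), inv_inv]
    rw [eA, e1]
    calc C * (y ^ (-((m:ℝ)+1)) * (2:ℝ)^((m:ℝ)+1)) * y ^ (m:ℝ)
        = C * (2:ℝ)^((m:ℝ)+1) * (y ^ (-((m:ℝ)+1)) * y ^ (m:ℝ)) := by ring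
      _ = C * (2:ℝ)^((m:ℝ)+1) * y ^ (-(1:ℝ)) := by rw [e2]
  have hten : Tendsto (fun y : ℝ => C * (2:ℝ) ^ ((m:ℝ) + 1) * y ^ (-(1:ℝ))) atTop (nhds 0) := by
    have h := (tendsto_rpow_neg_atTop (by norm_num : (0:ℝ) < 1)).const_mul
      (C * (2:ℝ) ^ ((m:ℝ) + 1))
    simpa [mul_assoc] using h
  have hfin2 : |d m| ≤ 0 := ge_of_tendsto hten (eventually_atTop.2 ⟨2, est⟩)
  exact abs_nonpos_iff.1 hfin2



lemma cons_prod {n : ℕ} (W : ℕ → ℝ → ℝ) (y : ℝ) (s' : Fin n → ℝ) (m : ℕ) (κ' : Fin n → ℕ) :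
    ∏ j : Fin (n + 1), W ((Fin.cons m κ' : Fin (n + 1) → ℕ) j) ((Fin.cons y s' : Fin (n + 1) → ℝ) j)
      = W m y * ∏ j : Fin n, W (κ' j) (s' j) := by
  rw [Fin.prod_univ_succ]
  simp

lemma uniq (W : ℕ → ℝ → ℝ)
    (hWnn : ∀ m (y : ℝ), 1 < y → 0 ≤ W m y)
    (hWpos : ∀ m (y : ℝ), 1 < y → 0 < m → 0 < W m y)
    (huniq : ∀ d : ℕ → ℝ, d 0 = 0 →
      (∀ y : ℝ, 1 < y → Summable fun m => |d m| * W m y) →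
      (∀ y : ℝ, 1 < y → ∑' m, d m * W m y = 0) → ∀ m, d m = 0) :
    ∀ (n : ℕ) (c : (Fin n → ℕ) → ℝ),
      (∀ κ, c κ ≠ 0 → ∀ j, 0 < κ j) →
      (∀ s : Fin n → ℝ, (∀ j, 1 < s j) →
        Summable fun κ : Fin n → ℕ => |c κ| * ∏ j, W (κ j) (s j)) →
      (∀ s : Fin n → ℝ, (∀ j, 1 < s j) →
        ∑' κ : Fin n → ℕ, c κ * ∏ j, W (κ j) (s j) = 0) →
      ∀ κ, c κ = 0 := by
  intro n
  induction n with
  | zero =>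
    intro c _ _ hvan κ
    have h := hvan (fun _ => 2) (fun j => one_lt_two)
    rw [tsum_eq_single κ (fun b hb => absurd (Subsingleton.elim b κ) hb)] at h
    simpa using h
  | succ n ih =>
    intro c hsupp hsum hvan
    -- the equiv
    set E : (ℕ × (Fin n → ℕ)) ≃ (Fin (n + 1) → ℕ) := Fin.consEquiv (fun _ => ℕ) with hE
    have hEapp : ∀ (m : ℕ) (κ' : Fin n → ℕ), E (m, κ') = Fin.cons m κ' := fun m κ' => rfl
    -- slices are summable
    have hslice : ∀ (s' : Fin n → ℝ), (∀ j, 1 < s' j) → ∀ m : ℕ,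
        Summable fun κ' : Fin n → ℕ => |c (Fin.cons m κ')| * ∏ j, W (κ' j) (s' j) := by
      intro s' hs' m
      rcases Nat.eq_zero_or_pos m with rfl | hm
      · refine (summable_zero).congr fun κ' => ?_
        have : c (Fin.cons 0 κ') = 0 := by
          by_contra hc
          exact absurd (hsupp _ hc 0) (by simp)
        simp [this]
      · have hsy2 : ∀ j, 1 < (Fin.cons 2 s' : Fin (n+1) → ℝ) j := by
          intro j
          refine Fin.cases ?_ ?_ j
          · simp
          · intro i; simp [hs' i]
        have h1 : Summable fun p : ℕ × (Fin n → ℕ) =>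
            (|c (Fin.cons p.1 p.2)| * ∏ j, W (p.2 j) (s' j)) * W p.1 2 := by
          have hcomp := (hsum _ hsy2).comp_injective E.injective
          refine hcomp.congr fun p => ?_
          simp only [Function.comp_apply]
          rw [show E p = Fin.cons p.1 p.2 from rfl, cons_prod]
          ring
        have h3 := h1.prod_factor m
        have hW2 : 0 < W m 2 := hWpos m 2 one_lt_two hm
        refine (h3.mul_right (W m 2)⁻¹).congr fun κ' => ?_
        field_simp
    have key : ∀ (s' : Fin n → ℝ), (∀ j, 1 < s' j) → ∀ m : ℕ,
        ∑' κ' : Fin n → ℕ, c (Fin.cons m κ') * ∏ j, W (κ' j) (s' j) = 0 := by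
      intro s' hs'
      set d : ℕ → ℝ := fun m => ∑' κ' : Fin n → ℕ, c (Fin.cons m κ') * ∏ j, W (κ' j) (s' j)
        with hd
      have hd0 : d 0 = 0 := by
        rw [hd]
        simp only
        have hz : ∀ κ' : Fin n → ℕ, c (Fin.cons 0 κ') * ∏ j, W (κ' j) (s' j) = 0 := by
          intro κ'
          have : c (Fin.cons 0 κ') = 0 := by
            by_contra hc
            exact absurd (hsupp _ hc 0) (by simp)
          simp [this]
        rw [tsum_congr hz, tsum_zero]
      -- the dominating marginal
      have hD : ∀ y : ℝ, 1 < y → Summable fun m : ℕ =>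
          (∑' κ' : Fin n → ℕ, |c (Fin.cons m κ')| * ∏ j, W (κ' j) (s' j)) * W m y := by
        intro y hy
        have hsy : ∀ j, 1 < (Fin.cons y s' : Fin (n+1) → ℝ) j := by
          intro j
          refine Fin.cases ?_ ?_ j
          · simpa using hy
          · intro i; simp [hs' i]
        have h2 : Summable fun p : ℕ × (Fin n → ℕ) =>
            (|c (Fin.cons p.1 p.2)| * ∏ j, W (p.2 j) (s' j)) * W p.1 y := by
          have hcomp := (hsum _ hsy).comp_injective E.injective
          refine hcomp.congr fun p => ?_
          simp only [Function.comp_apply]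
          rw [show E p = Fin.cons p.1 p.2 from rfl, cons_prod]
          ring
        have hnn : ∀ p : ℕ × (Fin n → ℕ),
            0 ≤ (|c (Fin.cons p.1 p.2)| * ∏ j, W (p.2 j) (s' j)) * W p.1 y := by
          intro p
          refine mul_nonneg (mul_nonneg (abs_nonneg _) ?_) (hWnn _ _ hy)
          exact Finset.prod_nonneg fun j _ => hWnn _ _ (hs' j)
        have h4 := (summable_prod_of_nonneg hnn).1 h2
        refine h4.2.congr fun m => ?_
        rw [← tsum_mul_right]
      apply huniq d hd0
      · -- summability of |d| weighted
        intro y hy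
        refine Summable.of_nonneg_of_le (fun m => mul_nonneg (abs_nonneg _) (hWnn _ _ hy))
          (fun m => ?_) (hD y hy)
        refine mul_le_mul_of_nonneg_right ?_ (hWnn _ _ hy)
        rw [hd, ← Real.norm_eq_abs]
        have hnt := norm_tsum_le_tsum_norm
          (f := fun κ' : Fin n → ℕ => c (Fin.cons m κ') * ∏ j, W (κ' j) (s' j))
          ((hslice s' hs' m).congr fun κ' => by
            rw [Real.norm_eq_abs, abs_mul,
              abs_of_nonneg (Finset.prod_nonneg fun j _ => hWnn _ _ (hs' j))])
        refine le_trans hnt (le_of_eq (tsum_congr fun κ' => ?_))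
        rw [Real.norm_eq_abs, abs_mul,
          abs_of_nonneg (Finset.prod_nonneg fun j _ => hWnn _ _ (hs' j))]
      · -- vanishing
        intro y hy
        have hsy : ∀ j, 1 < (Fin.cons y s' : Fin (n+1) → ℝ) j := by
          intro j
          refine Fin.cases ?_ ?_ j
          · simpa using hy
          · intro i; simp [hs' i]
        have hv := hvan _ hsy
        rw [← (Equiv.tsum_eq E _)] at hv
        have h2 : ∀ p : ℕ × (Fin n → ℕ),
            c (E p) * ∏ j, W ((E p) j) ((Fin.cons y s' : Fin (n+1) → ℝ) j)
              = (c (Fin.cons p.1 p.2) * ∏ j, W (p.2 j) (s' j)) * W p.1 y := by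
          intro p
          rw [hEapp p.1 p.2, cons_prod]
          ring
        rw [tsum_congr h2] at hv
        -- Fubini
        have hsG : Summable fun p : ℕ × (Fin n → ℕ) =>
            (c (Fin.cons p.1 p.2) * ∏ j, W (p.2 j) (s' j)) * W p.1 y := by
          apply Summable.of_abs
          have h1 : Summable fun p : ℕ × (Fin n → ℕ) =>
              (|c (Fin.cons p.1 p.2)| * ∏ j, W (p.2 j) (s' j)) * W p.1 y := by
            have hcomp := (hsum _ hsy).comp_injective E.injective
            refine hcomp.congr fun p => ?_
            simp only [Function.comp_apply]
            rw [show E p = Fin.cons p.1 p.2 from rfl, cons_prod]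
            ring
          refine h1.congr fun p => ?_
          rw [abs_mul, abs_mul, abs_of_nonneg (hWnn _ _ hy),
            abs_of_nonneg (Finset.prod_nonneg fun j _ => hWnn _ _ (hs' j))]
        have hsGslice : ∀ m : ℕ, Summable fun κ' : Fin n → ℕ =>
            (c (Fin.cons m κ') * ∏ j, W (κ' j) (s' j)) * W m y := by
          intro m
          apply Summable.of_abs
          refine ((hslice s' hs' m).mul_right (W m y)).congr fun κ' => ?_
          rw [abs_mul, abs_mul, abs_of_nonneg (hWnn _ _ hy),
            abs_of_nonneg (Finset.prod_nonneg fun j _ => hWnn _ _ (hs' j))]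
        rw [Summable.tsum_prod' hsG hsGslice] at hv
        have hinner : ∀ m : ℕ,
            ∑' κ' : Fin n → ℕ, (c (Fin.cons m κ') * ∏ j, W (κ' j) (s' j)) * W m y
              = d m * W m y := fun m => tsum_mul_right
        rw [tsum_congr hinner] at hv
        exact hv
    -- conclude
    intro κ
    rcases Nat.eq_zero_or_pos (κ 0) with h0 | hm
    · by_contra hc
      have h := hsupp κ hc 0
      omega
    · have h := ih (fun κ' => c (Fin.cons (κ 0) κ'))
        (fun κ' hc j => by have h := hsupp _ hc j.succ; rwa [Fin.cons_succ] at h)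
        (fun s' hs' => hslice s' hs' (κ 0))
        (fun s' hs' => key s' hs' (κ 0))
        (Fin.tail κ)
      rwa [Fin.cons_self_tail] at h


lemma indicator_ofReal {ι : Type*} (S : Set ι) (g : ι → ℝ) (i : ι) :
    ENNReal.ofReal (S.indicator g i) = S.indicator (fun i => ENNReal.ofReal (g i)) i := by
  classical
  by_cases h : i ∈ S <;> simp [h]

lemma bridge {ι : Type*} (S : Set ι) (g : ι → ℝ) (hg : ∀ i, 0 ≤ g i)
    (hfin : ∑' i : ι, ENNReal.ofReal (g i) ≠ ⊤) :
    Summable (S.indicator g) ∧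
      ∑' i, S.indicator g i = (∑' i : S, ENNReal.ofReal (g i)).toReal := by
  have hgnn : ∀ i, 0 ≤ S.indicator g i := fun i => Set.indicator_nonneg (fun j _ => hg j) i
  have h2 : ∑' i, ENNReal.ofReal (S.indicator g i) = ∑' i : S, ENNReal.ofReal (g i) := by
    calc ∑' i, ENNReal.ofReal (S.indicator g i)
        = ∑' i, S.indicator (fun i => ENNReal.ofReal (g i)) i :=
          tsum_congr (indicator_ofReal S g)
      _ = ∑' i : S, ENNReal.ofReal (g i) := (_root_.tsum_subtype S _).symm
  have h3 : ∑' i, ENNReal.ofReal (S.indicator g i) ≠ ⊤ := by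
    refine ne_top_of_le_ne_top hfin (ENNReal.tsum_le_tsum fun i => ?_)
    rw [indicator_ofReal]
    exact Set.indicator_le_self _ _ i
  exact ⟨summable_of_ofReal_ne_top hgnn h3,
    by rw [tsum_toReal_ofReal _ hgnn, h2]⟩

lemma fin_weights {n : ℕ} (f : Fin n → ℕ → ℝ) (hnn : ∀ j m, 0 ≤ f j m)
    (hf : ∀ j, Summable (f j)) :
    ∑' κ : Fin n → ℕ, ENNReal.ofReal (∏ j, f j (κ j)) ≠ ⊤ := by
  have h1 : ∀ κ : Fin n → ℕ, ENNReal.ofReal (∏ j, f j (κ j))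
      = ∏ j, ENNReal.ofReal (f j (κ j)) := fun κ =>
    ENNReal.ofReal_prod_of_nonneg fun j _ => hnn j _
  rw [tsum_congr h1, tsum_pi_prod n (fun _ => ℕ) (fun j m => ENNReal.ofReal (f j m))]
  refine (ENNReal.prod_lt_top fun j _ => ?_).ne
  rw [← ENNReal.ofReal_tsum_of_nonneg (hnn j) (hf j)]
  exact ENNReal.ofReal_lt_top

lemma combo {n q : ℕ} (a : Fin q → ℤ) (T : Fin q → LegalTerm n)
    (G : LegalTerm n → ℝ) (f : Fin n → ℕ → ℝ)
    (hnn : ∀ j m, 0 ≤ f j m) (hsf : ∀ j, Summable (f j))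
    (hG : ∀ h : Fin q, G (T h)
      = (∑' κ : Supp (T h), ∏ j, ENNReal.ofReal (f j (κ.1 j))).toReal) :
    (∑ h, (a h : ℝ) * G (T h)
       = ∑' κ : Fin n → ℕ,
           (∑ h, Set.indicator (Supp (T h)) (fun _ => (a h : ℝ)) κ) * ∏ j, f j (κ j))
    ∧ Summable fun κ : Fin n → ℕ =>
        |∑ h, Set.indicator (Supp (T h)) (fun _ => (a h : ℝ)) κ| * ∏ j, f j (κ j) := by
  classical
  have hΦnn : ∀ κ : Fin n → ℕ, 0 ≤ ∏ j, f j (κ j) := fun κ =>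
    Finset.prod_nonneg fun j _ => hnn j _
  have hbr : ∀ h : Fin q,
      Summable ((Supp (T h)).indicator (fun κ : Fin n → ℕ => ∏ j, f j (κ j))) ∧
      ∑' κ : Fin n → ℕ, (Supp (T h)).indicator (fun κ => ∏ j, f j (κ j)) κ = G (T h) := by
    intro h
    obtain ⟨h1, h2⟩ := bridge (Supp (T h)) (fun κ : Fin n → ℕ => ∏ j, f j (κ j)) hΦnn
      (fin_weights f hnn hsf)
    refine ⟨h1, ?_⟩
    rw [h2, hG h]
    congr 1
    exact tsum_congr fun κ => ENNReal.ofReal_prod_of_nonneg fun j _ => hnn j _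
  constructor
  · calc ∑ h, (a h : ℝ) * G (T h)
        = ∑ h, ∑' κ : Fin n → ℕ,
            (a h : ℝ) * (Supp (T h)).indicator (fun κ => ∏ j, f j (κ j)) κ := by
          refine Finset.sum_congr rfl fun h _ => ?_
          rw [← (hbr h).2, ← tsum_mul_left]
      _ = ∑' κ : Fin n → ℕ, ∑ h,
            (a h : ℝ) * (Supp (T h)).indicator (fun κ => ∏ j, f j (κ j)) κ :=
          (Summable.tsum_finsetSum fun h _ => ((hbr h).1.mul_left _)).symm
      _ = _ := by
          refine tsum_congr fun κ => ?_
          rw [Finset.sum_mul]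
          refine Finset.sum_congr rfl fun h _ => ?_
          by_cases hmem : κ ∈ Supp (T h)
          · rw [Set.indicator_of_mem hmem, Set.indicator_of_mem hmem]
          · rw [Set.indicator_of_notMem hmem, Set.indicator_of_notMem hmem,
              mul_zero, zero_mul]
  · refine Summable.of_nonneg_of_le
      (fun κ => mul_nonneg (abs_nonneg _) (hΦnn κ))
      (fun κ => ?_)
      (summable_sum (s := (Finset.univ : Finset (Fin q)))
        (f := fun h (κ : Fin n → ℕ) =>
          |(a h : ℝ)| * (Supp (T h)).indicator (fun κ => ∏ j, f j (κ j)) κ)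
        fun h _ => (hbr h).1.mul_left _)
    calc |∑ h, Set.indicator (Supp (T h)) (fun _ => (a h : ℝ)) κ| * ∏ j, f j (κ j)
        ≤ (∑ h, |Set.indicator (Supp (T h)) (fun _ => (a h : ℝ)) κ|) * ∏ j, f j (κ j) :=
          mul_le_mul_of_nonneg_right (Finset.abs_sum_le_sum_abs _ _) (hΦnn κ)
      _ = ∑ h, |(a h : ℝ)| * (Supp (T h)).indicator (fun κ => ∏ j, f j (κ j)) κ := by
          rw [Finset.sum_mul]
          refine Finset.sum_congr rfl fun h _ => ?_
          by_cases hmem : κ ∈ Supp (T h)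
          · rw [Set.indicator_of_mem hmem, Set.indicator_of_mem hmem]
          · rw [Set.indicator_of_notMem hmem, Set.indicator_of_notMem hmem,
              abs_zero, zero_mul, mul_zero]

end Stmt8aux

theorem stmt8 (n q : ℕ) (hn : 0 < n) (hq : 0 < q) (a : Fin q → ℤ) (T : Fin q → LegalTerm n) :
    (∀ s : Fin n → ℝ, (∀ j, 1 < s j) → ∑ h, (a h : ℝ) * (T h).eval s = 0) ↔
      (∀ x : Fin n → ℝ, (∀ j, 1 < x j) → ∑ h, (a h : ℝ) * (T h).rat x = 0) := by
  classical
  set c : (Fin n → ℕ) → ℝ :=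
    fun κ => ∑ h, Set.indicator (Stmt8aux.Supp (T h)) (fun _ => (a h : ℝ)) κ with hc
  have hsupp : ∀ κ, c κ ≠ 0 → ∀ j, 0 < κ j := by
    intro κ hcκ j
    obtain ⟨h, _, hne⟩ := Finset.exists_ne_zero_of_sum_ne_zero hcκ
    have hmem : κ ∈ Stmt8aux.Supp (T h) := by
      by_contra hmem
      exact hne (Set.indicator_of_notMem hmem _)
    exact Stmt8aux.supp_pos (T h) hmem j
  have comboD := fun (s : Fin n → ℝ) (hs : ∀ j, 1 < s j) =>
    Stmt8aux.combo a T (fun T' => T'.eval s) (fun j m => (m : ℝ) ^ (-(s j)))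
      (fun j m => Real.rpow_nonneg (Nat.cast_nonneg _) _)
      (fun j => Real.summable_nat_rpow.2 (by have := hs j; linarith))
      (fun h => Stmt8aux.eval_eq (T h) s)
  have comboP := fun (x : Fin n → ℝ) (hx : ∀ j, 1 < x j) =>
    Stmt8aux.combo a T (fun T' => T'.rat x) (fun j m => (x j) ^ (-(m : ℝ)))
      (fun j m => Real.rpow_nonneg (by have := hx j; linarith) _)
      (fun j => by
        have hx0 : (0:ℝ) < x j := by have := hx j; linarith
        refine (summable_geometric_of_lt_one (by positivity)
          (inv_lt_one_of_one_lt₀ (hx j))).congr fun m => ?_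
        show (x j)⁻¹ ^ m = x j ^ (-(m : ℝ))
        rw [Real.rpow_neg hx0.le, Real.rpow_natCast, inv_pow])
      (fun h => Stmt8aux.rat_eq (T h) x hx)
  constructor
  · intro H x hx
    have hc0 : ∀ κ, c κ = 0 :=
      Stmt8aux.uniq (fun m y => (m : ℝ) ^ (-y))
        (fun m y _ => Real.rpow_nonneg (Nat.cast_nonneg _) _)
        (fun m y _ hm => Real.rpow_pos_of_pos (by exact_mod_cast hm) _)
        Stmt8aux.huniqD n c hsupp
        (fun s hs => (comboD s hs).2)
        (fun s hs => by rw [← (comboD s hs).1]; exact H s hs)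
    rw [(comboP x hx).1]
    have hz : ∀ κ : Fin n → ℕ, c κ * ∏ j, (x j) ^ (-((κ j : ℕ) : ℝ)) = 0 := by
      intro κ
      rw [hc0 κ, zero_mul]
    rw [tsum_congr hz, tsum_zero]
  · intro H s hs
    have hc0 : ∀ κ, c κ = 0 :=
      Stmt8aux.uniq (fun m y => y ^ (-(m : ℝ)))
        (fun m y hy => Real.rpow_nonneg (by linarith) _)
        (fun m y hy _ => Real.rpow_pos_of_pos (by linarith) _)
        Stmt8aux.huniqP n c hsupp
        (fun x hx => (comboP x hx).2)
        (fun x hx => by rw [← (comboP x hx).1]; exact H x hx)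
    rw [(comboD s hs).1]
    have hz : ∀ κ : Fin n → ℕ, c κ * ∏ j, ((κ j : ℕ) : ℝ) ^ (-(s j)) = 0 := by
      intro κ
      rw [hc0 κ, zero_mul]
    rw [tsum_congr hz, tsum_zero]
end

section
/- Let F be a finite non-empty set of positive integers, and for each ordered set partition P⃗ = (P_1, ..., P_m) of F let c_{P⃗} be a real number. Suppose that for all real values s_j > 1 (j ∈ F), ∑_{P⃗ ⊨ F} c_{P⃗} ζ(∑_{j ∈ P_1} s_j, ∑_{j ∈ P_2} s_j, ..., ∑_{j ∈ P_m} s_j) = 0, where the sum is over all ordered set partitions P⃗ of F. Then c_{P⃗} = 0 for every ordered set partition P⃗ of F. -/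
structure OrdPartition (F : Finset ℕ) where
  m : ℕ
  parts : Fin m → Finset ℕ
  nonempty : ∀ k, (parts k).Nonempty
  disj : ∀ k k', k ≠ k' → Disjoint (parts k) (parts k')
  cover : ∀ j : ℕ, j ∈ F ↔ ∃ k, j ∈ parts k

open Filter Finset Real Topology

abbrev Adm (m : ℕ) := {k : Fin m → ℕ // (∀ i j : Fin m, i < j → k j < k i) ∧ ∀ i, 0 < k i}

lemma adm_lb {m : ℕ} (k : Adm m) (t : Fin m) : m ≤ k.1 t + t.val := by
  suffices H : ∀ (n : ℕ) (t : Fin m), t.val + n + 1 = m → m ≤ k.1 t + t.val by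
    exact H (m - 1 - t.val) t (by have := t.isLt; omega)
  intro n
  induction n with
  | zero => intro t ht; have := k.2.2 t; omega
  | succ n ih =>
    intro t ht
    have htl : t.val + 1 < m := by omega
    have h2 := ih ⟨t.val + 1, htl⟩ (by simp; omega)
    have h3 := k.2.1 t ⟨t.val + 1, htl⟩ (by simp [Fin.lt_def])
    simp at h2
    omega

def kstar (m : ℕ) : Adm m :=
  ⟨fun t => m - t.val,
   ⟨fun i j hij => by
      have h1 : i.val < j.val := hij
      show m - j.val < m - i.val
      have := j.isLt; omega,
    fun i => by show 0 < m - i.val; have := i.isLt; omega⟩⟩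

lemma summable_pi (m : ℕ) {f : ℕ → ℝ} (hf : Summable f) (h0 : ∀ n, 0 ≤ f n) :
    Summable (fun a : Fin m → ℕ => ∏ t, f (a t)) := by
  induction m with
  | zero =>
    haveI : Unique (Fin 0 → ℕ) := ⟨⟨Fin.elim0⟩, fun a => funext fun t => t.elim0⟩
    exact .of_finite
  | succ n ih =>
    rw [← (Fin.consEquiv fun _ => ℕ).summable_iff]
    have h := hf.mul_of_nonneg ih h0 (fun a => Finset.prod_nonneg fun t _ => h0 _)
    apply h.congr
    intro p
    simp only [Function.comp_apply, Fin.consEquiv, Equiv.coe_fn_mk]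
    rw [Fin.prod_univ_succ]
    simp

lemma summable_adm {m : ℕ} {S : Fin m → ℝ} (hS : ∀ t, 2 ≤ S t) :
    Summable (fun k : Adm m => ∏ t, (k.1 t : ℝ) ^ (-(S t))) := by
  have hG := summable_pi (f := fun n : ℕ => (n:ℝ) ^ (-(2:ℝ))) m
    (Real.summable_nat_rpow.mpr (by norm_num))
    (fun n => Real.rpow_nonneg (Nat.cast_nonneg n) _)
  have hsub := hG.subtype {k : Fin m → ℕ | (∀ i j : Fin m, i < j → k j < k i) ∧ ∀ i, 0 < k i}
  apply Summable.of_nonneg_of_le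
    (fun k => Finset.prod_nonneg fun t _ => Real.rpow_nonneg (Nat.cast_nonneg _) _)
    ?_ hsub
  intro k
  apply Finset.prod_le_prod (fun t _ => Real.rpow_nonneg (Nat.cast_nonneg _) _)
  intro t _
  have h1 : (1:ℝ) ≤ (k.1 t : ℝ) := by exact_mod_cast k.2.2 t
  exact Real.rpow_le_rpow_of_exponent_le h1 (by linarith [hS t])

lemma digit_lemma (B R δ : ℝ) (hδ : 0 < δ) (hR0 : 0 ≤ R) (hB : R / δ + 2 ≤ B)
    (Δ : ℕ → ℝ) (hR : ∀ i, |Δ i| ≤ R) (hsmall : ∀ i, |Δ i| < δ → Δ i = 0) :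
    ∀ n, (∑ i ∈ Finset.range n, B ^ i * Δ i) = 0 → ∀ i < n, Δ i = 0 := by
  have hB2 : 2 ≤ B := by nlinarith [div_nonneg hR0 hδ.le]
  have hB1 : (1:ℝ) < B := by linarith
  intro n
  induction n with
  | zero => intro _ i hi; omega
  | succ n ih =>
    intro hsum i hi
    rw [Finset.sum_range_succ] at hsum
    have hn : Δ n = 0 := by
      apply hsmall
      have habs : |B ^ n * Δ n| = |∑ i ∈ Finset.range n, B ^ i * Δ i| := by
        have : B ^ n * Δ n = -∑ i ∈ Finset.range n, B ^ i * Δ i := by linarith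
        rw [this, abs_neg]
      have hbd : |∑ i ∈ Finset.range n, B ^ i * Δ i| ≤ (∑ i ∈ Finset.range n, B ^ i) * R := by
        calc |∑ i ∈ Finset.range n, B ^ i * Δ i| ≤ ∑ i ∈ Finset.range n, |B ^ i * Δ i| :=
              Finset.abs_sum_le_sum_abs _ _
          _ ≤ ∑ i ∈ Finset.range n, B ^ i * R := by
              apply Finset.sum_le_sum
              intro i _
              rw [abs_mul, abs_pow, abs_of_pos (by linarith : (0:ℝ) < B)]
              exact mul_le_mul_of_nonneg_left (hR i) (by positivity)
          _ = (∑ i ∈ Finset.range n, B ^ i) * R := by rw [Finset.sum_mul]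
      have hBn1 : (1:ℝ) ≤ B ^ n := one_le_pow₀ (by linarith)
      have hBn0 : (0:ℝ) < B ^ n := by positivity
      have hA : B ^ n * |Δ n| ≤ (∑ i ∈ Finset.range n, B ^ i) * R := by
        have e1 : B ^ n * |Δ n| = |B ^ n * Δ n| := by
          rw [abs_mul, abs_of_pos hBn0]
        rw [e1, habs]; exact hbd
      have hgm : (∑ i ∈ Finset.range n, B ^ i) * (B - 1) = B ^ n - 1 := by
        have := geom_sum_mul B n
        linarith [this]
      have hδB : R + δ ≤ δ * (B - 1) := by
        have h5 : δ * (R / δ + 1) = R + δ := by field_simp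
        nlinarith [mul_le_mul_of_nonneg_left (show R / δ + 1 ≤ B - 1 by linarith) hδ.le]
      have hS0 : (0:ℝ) ≤ ∑ i ∈ Finset.range n, B ^ i :=
        Finset.sum_nonneg fun i _ => by positivity
      nlinarith [mul_le_mul_of_nonneg_right hA (show (0:ℝ) ≤ B - 1 by linarith),
        abs_nonneg (Δ n)]
    rcases Nat.lt_succ_iff_lt_or_eq.mp hi with h | h
    · apply ih _ i h
      rw [hn, mul_zero, add_zero] at hsum
      exact hsum
    · rw [h]; exact hn

variable {F : Finset ℕ}

lemma F_eq_biUnion (P : OrdPartition F) : F = Finset.univ.biUnion P.parts := by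
  ext j
  simp only [Finset.mem_biUnion, Finset.mem_univ, true_and]
  exact P.cover j

lemma pairwise_disj (P : OrdPartition F) :
    (↑(Finset.univ : Finset (Fin P.m)) : Set (Fin P.m)).PairwiseDisjoint P.parts :=
  fun a _ b _ hab => P.disj a b hab

lemma sum_parts (P : OrdPartition F) (f : ℕ → ℝ) :
    ∑ j ∈ F, f j = ∑ t, ∑ j ∈ P.parts t, f j := by
  conv_lhs => rw [F_eq_biUnion P]
  rw [Finset.sum_biUnion (pairwise_disj P)]

lemma m_le_card (P : OrdPartition F) : P.m ≤ F.card := by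
  have h1 : F.card = ∑ t, (P.parts t).card := by
    conv_lhs => rw [F_eq_biUnion P]
    rw [Finset.card_biUnion (fun a _ b _ hab => P.disj a b hab)]
  have h2 : ∀ t : Fin P.m, 1 ≤ (P.parts t).card := fun t =>
    Finset.card_pos.mpr (P.nonempty t)
  calc P.m = ∑ _t : Fin P.m, 1 := by simp
    _ ≤ ∑ t, (P.parts t).card := Finset.sum_le_sum fun t _ => h2 t
    _ = F.card := h1.symm

lemma m_pos (hF : F.Nonempty) (P : OrdPartition F) : 0 < P.m := by
  obtain ⟨j, hj⟩ := hF
  obtain ⟨t, _⟩ := (P.cover j).mp hj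
  exact t.pos

lemma OrdPartition.ext' {P Q : OrdPartition F} (hm : P.m = Q.m)
    (hp : ∀ t : Fin P.m, P.parts t = Q.parts (Fin.cast hm t)) : P = Q := by
  obtain ⟨m, p, h1, h2, h3⟩ := P
  obtain ⟨m', p', g1, g2, g3⟩ := Q
  dsimp at hm
  subst hm
  have : p = p' := funext fun t => by simpa [Fin.cast] using hp t
  subst this
  rfl

noncomputable instance : Fintype (OrdPartition F) := by
  classical
  apply Fintype.ofInjective
    (f := fun (P : OrdPartition F) (n : Fin (F.card + 1)) =>
      if h : (n : ℕ) < P.m then (⟨P.parts ⟨n, h⟩, by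
        rw [Finset.mem_powerset]; intro j hj; exact (P.cover j).mpr ⟨_, hj⟩⟩ :
        {s : Finset ℕ // s ∈ F.powerset})
      else ⟨∅, by simp⟩)
  intro P Q hPQ
  have hmle : ∀ P : OrdPartition F, P.m < F.card + 1 := fun P =>
    Nat.lt_succ_of_le (m_le_card P)
  have hm : P.m = Q.m := by
    by_contra hne
    rcases Nat.lt_or_ge P.m Q.m with hlt | hge
    · have := congrFun hPQ ⟨P.m, hmle P⟩
      dsimp only at this
      rw [dif_neg (by simp), dif_pos (by simpa using hlt)] at this
      exact (Q.nonempty _).ne_empty (by simpa using (Subtype.ext_iff.mp this).symm)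
    · have hlt : Q.m < P.m := lt_of_le_of_ne hge (fun e => hne e.symm)
      have := congrFun hPQ ⟨Q.m, hmle Q⟩
      dsimp only at this
      rw [dif_pos (by simpa using hlt), dif_neg (by simp)] at this
      exact (P.nonempty _).ne_empty (by simpa using Subtype.ext_iff.mp this)
  apply OrdPartition.ext' hm
  intro t
  have := congrFun hPQ ⟨t.val, lt_trans t.isLt (hmle P)⟩
  dsimp only at this
  rw [dif_pos (by simpa using t.isLt), dif_pos (by simp [← hm, t.isLt])] at this
  have h2 := Subtype.ext_iff.mp this
  simp at h2; exact h2

noncomputable def vmap (P : OrdPartition F) (j : ℕ) : ℕ :=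
  if h : ∃ t, j ∈ P.parts t then P.m - (Classical.choose h).val else 0

lemma vmap_eq (P : OrdPartition F) {j : ℕ} {t : Fin P.m} (hj : j ∈ P.parts t) :
    vmap P j = P.m - t.val := by
  have hex : ∃ t, j ∈ P.parts t := ⟨t, hj⟩
  rw [vmap, dif_pos hex]
  have hc := Classical.choose_spec hex
  by_cases hne : Classical.choose hex = t
  · rw [hne]
  · exact absurd hj (Finset.disjoint_left.mp (P.disj _ t hne) hc)

lemma vmap_bounds (P : OrdPartition F) {j : ℕ} (hj : j ∈ F) :
    1 ≤ vmap P j ∧ vmap P j ≤ P.m := by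
  obtain ⟨t, ht⟩ := (P.cover j).mp hj
  rw [vmap_eq P ht]
  have := t.isLt
  omega

lemma vmap_zero (P : OrdPartition F) {j : ℕ} (hj : j ∉ F) : vmap P j = 0 := by
  rw [vmap, dif_neg]
  intro ⟨t, ht⟩
  exact hj ((P.cover j).mpr ⟨t, ht⟩)

noncomputable def muP (τ : ℕ → ℝ) (P : OrdPartition F) : ℝ :=
  ∑ t, (∑ j ∈ P.parts t, τ j) * Real.log ((P.m - t.val : ℕ) : ℝ)

lemma muP_eq (τ : ℕ → ℝ) (P : OrdPartition F) :
    muP τ P = ∑ j ∈ F, τ j * Real.log ((vmap P j : ℕ) : ℝ) := by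
  rw [sum_parts P (fun j => τ j * Real.log ((vmap P j : ℕ) : ℝ))]
  apply Finset.sum_congr rfl
  intro t _
  rw [Finset.sum_mul]
  apply Finset.sum_congr rfl
  intro j hj
  rw [vmap_eq P hj]

lemma key_tendsto {m : ℕ} (hm : 0 < m) (T : Fin m → ℝ) (hT : ∀ t, 1 ≤ T t) :
    Filter.Tendsto (fun σ : ℝ => mzeta (fun t => σ * T t) *
      Real.exp (σ * ∑ t, T t * Real.log ((m - t.val : ℕ) : ℝ))) atTop (𝓝 1) := by
  set dR : Fin m → ℝ := fun t => ((m - t.val : ℕ) : ℝ) with hdR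
  have hd1 : ∀ t, 1 ≤ dR t := fun t => by
    show (1:ℝ) ≤ ((m - t.val : ℕ) : ℝ)
    have := t.isLt
    exact_mod_cast (by omega : 1 ≤ m - t.val)
  have hd0 : ∀ t, 0 < dR t := fun t => lt_of_lt_of_le one_pos (hd1 t)
  have hdm : ∀ t, dR t ≤ (m : ℝ) := fun t => by
    show ((m - t.val : ℕ) : ℝ) ≤ (m : ℝ)
    exact_mod_cast Nat.sub_le m t.val
  have hk1 : ∀ (k : Adm m) (t : Fin m), (1:ℝ) ≤ (k.1 t : ℝ) := fun k t => by
    exact_mod_cast k.2.2 t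
  have hk0 : ∀ (k : Adm m) (t : Fin m), (0:ℝ) < (k.1 t : ℝ) := fun k t =>
    lt_of_lt_of_le one_pos (hk1 k t)
  have hkd : ∀ (k : Adm m) (t : Fin m), dR t ≤ (k.1 t : ℝ) := fun k t => by
    show ((m - t.val : ℕ) : ℝ) ≤ ((k.1 t : ℕ) : ℝ)
    have := adm_lb k t
    exact_mod_cast (by omega : m - t.val ≤ k.1 t)
  set ρ : Adm m → Fin m → ℝ := fun k t => dR t / (k.1 t : ℝ) with hρ
  have hρ0 : ∀ k t, 0 < ρ k t := fun k t => div_pos (hd0 t) (hk0 k t)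
  have hρ1 : ∀ k t, ρ k t ≤ 1 := fun k t => (div_le_one (hk0 k t)).mpr (hkd k t)
  -- pointwise product identity
  have hpt : ∀ (E : Fin m → ℝ) (k : Adm m),
      (∏ t, (k.1 t : ℝ) ^ (-(E t))) * (∏ t, dR t ^ (E t)) = ∏ t, ρ k t ^ (E t) := by
    intro E k
    rw [← Finset.prod_mul_distrib]
    apply Finset.prod_congr rfl
    intro t _
    rw [hρ]
    rw [Real.div_rpow (hd0 t).le (hk0 k t).le, Real.rpow_neg (hk0 k t).le]
    rw [div_eq_mul_inv]
    ring
  -- summability of the normalized terms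
  have hsumg : ∀ (E : Fin m → ℝ), (∀ t, 2 ≤ E t) →
      Summable (fun k : Adm m => ∏ t, ρ k t ^ (E t)) := by
    intro E hE
    exact ((summable_adm hE).mul_right (∏ t, dR t ^ (E t))).congr (hpt E)
  -- global identity
  have hid : ∀ σ : ℝ, mzeta (fun t => σ * T t) *
      Real.exp (σ * ∑ t, T t * Real.log ((m - t.val : ℕ) : ℝ)) =
      ∑' k : Adm m, ∏ t, ρ k t ^ (σ * T t) := by
    intro σ
    have hexp : Real.exp (σ * ∑ t, T t * Real.log ((m - t.val : ℕ) : ℝ)) =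
        ∏ t, dR t ^ (σ * T t) := by
      rw [Finset.mul_sum, Real.exp_sum]
      apply Finset.prod_congr rfl
      intro t _
      rw [Real.rpow_def_of_pos (hd0 t)]
      ring_nf
      rfl
    rw [hexp]
    simp only [mzeta]
    rw [← tsum_mul_right]
    exact tsum_congr fun k => hpt (fun t => σ * T t) k
  have hkstar : ∀ σ : ℝ, (∏ t, ρ (kstar m) t ^ (σ * T t)) = 1 := by
    intro σ
    have : ∀ t, ρ (kstar m) t = 1 := fun t => by
      show dR t / (((kstar m).1 t : ℕ) : ℝ) = 1
      have he : (((kstar m).1 t : ℕ) : ℝ) = dR t := rfl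
      rw [he, div_self (hd0 t).ne']
    simp [this]
  set q : ℝ := (m : ℝ) / ((m : ℝ) + 1) with hq
  have hm0 : (0:ℝ) < m := by exact_mod_cast hm
  have hq0 : 0 < q := div_pos hm0 (by linarith)
  have hq1 : q < 1 := (div_lt_one (by linarith)).mpr (by linarith)
  set C : ℝ := ∑' k : Adm m, ∏ t, ρ k t ^ (2:ℝ) with hC
  have hsumC : Summable (fun k : Adm m => ∏ t, ρ k t ^ (2:ℝ)) :=
    hsumg (fun _ => 2) (fun _ => le_refl _)
  -- lower bound
  have hlow : ∀ σ : ℝ, 2 ≤ σ → 1 ≤ ∑' k : Adm m, ∏ t, ρ k t ^ (σ * T t) := by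
    intro σ hσ
    have hE : ∀ t, 2 ≤ σ * T t := fun t => by nlinarith [hT t]
    have := Summable.le_tsum (hsumg _ hE) (kstar m)
      (fun j _ => Finset.prod_nonneg fun t _ => Real.rpow_nonneg (hρ0 j t).le _)
    rwa [hkstar σ] at this
  -- upper bound
  have hup : ∀ σ : ℝ, 2 ≤ σ →
      (∑' k : Adm m, ∏ t, ρ k t ^ (σ * T t)) ≤ 1 + q ^ (σ - 2) * C := by
    intro σ hσ
    have hσ2 : (0:ℝ) ≤ σ - 2 := by linarith
    have hE : ∀ t, 2 ≤ σ * T t := fun t => by nlinarith [hT t]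
    rw [Summable.tsum_eq_add_tsum_ite (hsumg _ hE) (kstar m), hkstar σ]
    apply add_le_add le_rfl
    have step : ∀ k : Adm m,
        (if k = kstar m then 0 else ∏ t, ρ k t ^ (σ * T t)) ≤
          q ^ (σ - 2) * ∏ t, ρ k t ^ (2:ℝ) := by
      intro k
      by_cases hk : k = kstar m
      · rw [if_pos hk]
        positivity
      · rw [if_neg hk]
        obtain ⟨t0, ht0⟩ : ∃ t0, k.1 t0 ≠ (kstar m).1 t0 := by
          by_contra hall
          push_neg at hall
          exact hk (Subtype.ext (funext hall))
        have hkd1 : dR t0 + 1 ≤ (k.1 t0 : ℝ) := by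
          have h1 := adm_lb k t0
          have h2 : (kstar m).1 t0 = m - t0.val := rfl
          show ((m - t0.val : ℕ) : ℝ) + 1 ≤ ((k.1 t0 : ℕ) : ℝ)
          have h3 : m - t0.val + 1 ≤ k.1 t0 := by
            rw [h2] at ht0; omega
          exact_mod_cast h3
        have hρq : ρ k t0 ≤ q := by
          rw [hρ, hq, div_le_div_iff₀ (hk0 k t0) (by linarith)]
          nlinarith [hdm t0, hkd k t0]
        calc ∏ t, ρ k t ^ (σ * T t)
            ≤ ∏ t, (ρ k t ^ (σ - 2) * ρ k t ^ (2:ℝ)) := by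
              apply Finset.prod_le_prod
                (fun t _ => Real.rpow_nonneg (hρ0 k t).le _)
              intro t _
              calc ρ k t ^ (σ * T t) ≤ ρ k t ^ σ :=
                    Real.rpow_le_rpow_of_exponent_ge (hρ0 k t) (hρ1 k t)
                      (by nlinarith [hT t])
                _ = ρ k t ^ (σ - 2) * ρ k t ^ (2:ℝ) := by
                    rw [← Real.rpow_add (hρ0 k t)]; norm_num
          _ = (∏ t, ρ k t ^ (σ - 2)) * ∏ t, ρ k t ^ (2:ℝ) := Finset.prod_mul_distrib
          _ ≤ q ^ (σ - 2) * ∏ t, ρ k t ^ (2:ℝ) := by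
              apply mul_le_mul_of_nonneg_right _
                (Finset.prod_nonneg fun t _ => Real.rpow_nonneg (hρ0 k t).le _)
              calc ∏ t, ρ k t ^ (σ - 2) ≤ ρ k t0 ^ (σ - 2) := by
                    rw [← Finset.prod_erase_mul Finset.univ _ (Finset.mem_univ t0)]
                    apply mul_le_of_le_one_left (Real.rpow_nonneg (hρ0 k t0).le _)
                    apply Finset.prod_le_one
                      (fun t _ => Real.rpow_nonneg (hρ0 k t).le _)
                    exact fun t _ => Real.rpow_le_one (hρ0 k t).le (hρ1 k t) hσ2
                _ ≤ q ^ (σ - 2) := Real.rpow_le_rpow (hρ0 k t0).le hρq hσ2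
    have hsumIte : Summable (fun k : Adm m =>
        if k = kstar m then 0 else ∏ t, ρ k t ^ (σ * T t)) := by
      apply Summable.of_nonneg_of_le
        (fun k => by positivity)
        (fun k => ?_) (hsumg _ hE)
      by_cases hk : k = kstar m
      · rw [if_pos hk]; positivity
      · rw [if_neg hk]
    calc (∑' k : Adm m, if k = kstar m then 0 else ∏ t, ρ k t ^ (σ * T t))
        ≤ ∑' k : Adm m, q ^ (σ - 2) * ∏ t, ρ k t ^ (2:ℝ) :=
          Summable.tsum_le_tsum step hsumIte (hsumC.mul_left _)
      _ = q ^ (σ - 2) * C := by rw [tsum_mul_left]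
  -- squeeze
  apply tendsto_of_tendsto_of_tendsto_of_le_of_le'
    (g := fun _ : ℝ => (1:ℝ)) (h := fun σ : ℝ => 1 + q ^ (σ - 2) * C)
    tendsto_const_nhds
  · have h1 : Filter.Tendsto (fun σ : ℝ => q ^ (σ - 2)) atTop (𝓝 0) := by
      have := (tendsto_rpow_atTop_of_base_lt_one q (by linarith) hq1).comp
        (tendsto_atTop_add_const_right atTop (-2 : ℝ) tendsto_id)
      simpa [Function.comp_def, sub_eq_add_neg] using this
    have h2 := (h1.mul_const C).const_add (1:ℝ)
    simpa using h2
  · filter_upwards [eventually_ge_atTop (2:ℝ)] with σ hσ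
    rw [hid σ]
    exact hlow σ hσ
  · filter_upwards [eventually_ge_atTop (2:ℝ)] with σ hσ
    rw [hid σ]
    exact hup σ hσ

set_option maxHeartbeats 2000000 in
theorem stmt9 (F : Finset ℕ) (hF : F.Nonempty) (hpos : ∀ j ∈ F, 0 < j)
    (c : OrdPartition F → ℝ)
    (h : ∀ s : ℕ → ℝ, (∀ j ∈ F, 1 < s j) →
      ∑' P : OrdPartition F, c P * mzeta (fun k : Fin P.m => ∑ j ∈ P.parts k, s j) = 0) :
    ∀ P : OrdPartition F, c P = 0 := by
  classical
  intro P0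
  by_contra hc0
  set r := F.card with hr
  have hr1 : 1 ≤ r := Finset.card_pos.mpr hF
  have hr0 : (0:ℝ) < (r:ℝ) := by exact_mod_cast hr1
  set e := F.orderIsoOfFin rfl with he
  set δ := Real.log (1 + 1/(r:ℝ)) with hδdef
  set R := Real.log (r:ℝ) with hRdef
  have hδ : 0 < δ := Real.log_pos (by
    have : (0:ℝ) < 1/(r:ℝ) := by positivity
    linarith)
  have hR0 : 0 ≤ R := Real.log_nonneg (by exact_mod_cast hr1)
  set B := R / δ + 2 with hBdef
  have hB1 : 1 ≤ B := by
    have : 0 ≤ R / δ := div_nonneg hR0 hδ.le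
    rw [hBdef]; linarith
  set idx : ℕ → ℕ := fun j => if hj : j ∈ F then ((e.symm ⟨j, hj⟩ : Fin r) : ℕ) else 0
    with hidxdef
  set τ : ℕ → ℝ := fun j => B ^ (idx j) with hτdef
  have hτ1 : ∀ j, 1 ≤ τ j := fun j => one_le_pow₀ hB1
  have hidxe : ∀ i : Fin r, idx ((e i : ℕ)) = (i : ℕ) := by
    intro i
    have hmem := (e i).2
    simp only [hidxdef]
    rw [dif_pos hmem]
    have h1 : (⟨(e i : ℕ), hmem⟩ : {x // x ∈ F}) = e i := Subtype.ext rfl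
    rw [h1, OrderIso.symm_apply_apply]
  have hτe : ∀ i : Fin r, τ ((e i : ℕ)) = B ^ (i : ℕ) := fun i => by
    simp only [hτdef]; rw [hidxe i]
  have hsumF : ∀ f : ℕ → ℝ, ∑ j ∈ F, f j = ∑ i : Fin r, f (e i) := by
    intro f
    rw [← Finset.sum_coe_sort F f]
    exact (Fintype.sum_equiv e.toEquiv (fun i => f (e i)) (fun x => f x)
      (fun i => rfl)).symm
  -- injectivity of muP τ
  have hinj : ∀ P Q : OrdPartition F, muP τ P = muP τ Q → P = Q := by
    intro P Q hPQ
    have hveq : ∀ j ∈ F, vmap P j = vmap Q j := by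
      rw [muP_eq, muP_eq] at hPQ
      set el : ℕ → ℕ := fun i => if hi : i < r then ((e ⟨i, hi⟩ : ℕ)) else 0 with heldef
      set Δ : ℕ → ℝ := fun i =>
        Real.log ((vmap P (el i) : ℕ) : ℝ) - Real.log ((vmap Q (el i) : ℕ) : ℝ) with hΔdef
      have hel_mem : ∀ i, i < r → el i ∈ F := by
        intro i hi
        simp only [heldef]
        rw [dif_pos hi]
        exact (e ⟨i, hi⟩).2
      have hel_not : ∀ i, ¬ i < r → el i = 0 := by
        intro i hi; simp only [heldef]; rw [dif_neg hi]
      have h0F : (0:ℕ) ∉ F := fun h0 => absurd (hpos 0 h0) (lt_irrefl 0)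
      have hvb : ∀ (Pp : OrdPartition F) (j : ℕ), j ∈ F →
          1 ≤ vmap Pp j ∧ vmap Pp j ≤ r := fun Pp j hj =>
        ⟨(vmap_bounds Pp hj).1, le_trans (vmap_bounds Pp hj).2 (m_le_card Pp)⟩
      have hlogb : ∀ (Pp : OrdPartition F) (j : ℕ), j ∈ F →
          0 ≤ Real.log ((vmap Pp j : ℕ) : ℝ) ∧ Real.log ((vmap Pp j : ℕ) : ℝ) ≤ R := by
        intro Pp j hj
        obtain ⟨h1, h2⟩ := hvb Pp j hj
        constructor
        · exact Real.log_nonneg (by exact_mod_cast h1)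
        · rw [hRdef]
          exact Real.log_le_log (by exact_mod_cast h1) (by exact_mod_cast h2)
      have hRb : ∀ i, |Δ i| ≤ R := by
        intro i
        by_cases hi : i < r
        · have hm := hel_mem i hi
          obtain ⟨p1, p2⟩ := hlogb P _ hm
          obtain ⟨q1, q2⟩ := hlogb Q _ hm
          simp only [hΔdef]
          rw [abs_le]
          constructor <;> linarith
        · simp only [hΔdef]
          rw [hel_not i hi, vmap_zero P h0F, vmap_zero Q h0F]
          simpa using hR0
      have hgap : ∀ (a b : ℕ), 1 ≤ b → a ≤ r → b < a →
          δ ≤ Real.log (a:ℝ) - Real.log (b:ℝ) := by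
        intro a b hb1 har hba
        have hb0 : (0:ℝ) < (b:ℝ) := by exact_mod_cast hb1
        have habR : (b:ℝ) + 1 ≤ (a:ℝ) := by exact_mod_cast hba
        have hbr : (b:ℝ) ≤ (r:ℝ) := by
          have h5 : b ≤ r := by omega
          exact_mod_cast h5
        have ha0 : (0:ℝ) < (a:ℝ) := by
          have : 0 < a := by omega
          exact_mod_cast this
        rw [← Real.log_div ha0.ne' hb0.ne', hδdef]
        apply Real.log_le_log (by positivity)
        rw [le_div_iff₀ hb0]
        have h6 : (b:ℝ)/(r:ℝ) ≤ 1 := (div_le_one hr0).mpr hbr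
        have h9 : (1 + 1/(r:ℝ)) * b = b + b/(r:ℝ) := by ring
        rw [h9]
        linarith
      have hsmall : ∀ i, |Δ i| < δ → Δ i = 0 := by
        intro i hlt
        by_cases hi : i < r
        · have hj : el i ∈ F := hel_mem i hi
          have key : vmap P (el i) = vmap Q (el i) := by
            by_contra hab
            obtain ⟨p1, p2⟩ := hvb P _ hj
            obtain ⟨q1, q2⟩ := hvb Q _ hj
            rcases Nat.lt_or_ge (vmap P (el i)) (vmap Q (el i)) with hc | hc
            · have h5 := hgap _ _ p1 q2 hc
              have h6 : -Δ i ≤ |Δ i| := neg_le_abs _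
              simp only [hΔdef] at h6
              linarith [hlt]
            · have hc2 : vmap Q (el i) < vmap P (el i) := lt_of_le_of_ne hc (Ne.symm hab)
              have h5 := hgap _ _ q1 p2 hc2
              have h6 : Δ i ≤ |Δ i| := le_abs_self _
              simp only [hΔdef] at h6
              linarith [hlt]
          simp only [hΔdef]
          rw [key, sub_self]
        · simp only [hΔdef]
          rw [hel_not i hi, vmap_zero P h0F, vmap_zero Q h0F, sub_self]
      have hsum0 : ∑ i ∈ Finset.range r, B ^ i * Δ i = 0 := by
        rw [← Fin.sum_univ_eq_sum_range (fun i => B ^ i * Δ i) r]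
        have h2 : ∑ i : Fin r, (τ ((e i : ℕ)) * Real.log ((vmap P ((e i : ℕ)) : ℕ) : ℝ) -
            τ ((e i : ℕ)) * Real.log ((vmap Q ((e i : ℕ)) : ℕ) : ℝ)) = 0 := by
          rw [Finset.sum_sub_distrib]
          rw [← hsumF (fun j => τ j * Real.log ((vmap P j : ℕ) : ℝ)),
              ← hsumF (fun j => τ j * Real.log ((vmap Q j : ℕ) : ℝ))]
          rw [hPQ, sub_self]
        rw [← h2]
        apply Finset.sum_congr rfl
        intro i _
        have hel_i : el (i : ℕ) = (e i : ℕ) := by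
          simp only [heldef]
          rw [dif_pos i.isLt]
        simp only [hΔdef]
        rw [hel_i, hτe i, mul_sub]
      have hdig := digit_lemma B R δ hδ hR0 (le_of_eq hBdef.symm) Δ hRb hsmall r hsum0
      intro j hj
      have hij : (idx j : ℕ) < r := by
        simp only [hidxdef]
        rw [dif_pos hj]
        exact (e.symm ⟨j, hj⟩).isLt
      have hel_idx : el (idx j) = j := by
        simp only [heldef]
        rw [dif_pos hij]
        have h1 : (⟨idx j, hij⟩ : Fin r) = e.symm ⟨j, hj⟩ := by
          apply Fin.ext
          simp only [hidxdef]
          rw [dif_pos hj]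
        rw [h1, OrderIso.apply_symm_apply]
      have hΔ0 := hdig (idx j) hij
      simp only [hΔdef] at hΔ0
      rw [hel_idx] at hΔ0
      have hlogeq : Real.log ((vmap P j : ℕ) : ℝ) = Real.log ((vmap Q j : ℕ) : ℝ) := by
        linarith [hΔ0]
      have hp1 : (0:ℝ) < ((vmap P j : ℕ) : ℝ) := by
        exact_mod_cast (vmap_bounds P hj).1
      have hq1 : (0:ℝ) < ((vmap Q j : ℕ) : ℝ) := by
        exact_mod_cast (vmap_bounds Q hj).1
      have : ((vmap P j : ℕ) : ℝ) = ((vmap Q j : ℕ) : ℝ) := by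
        rw [← Real.exp_log hp1, hlogeq, Real.exp_log hq1]
      exact_mod_cast this
    -- vmap determines the partition
    have hm : P.m = Q.m := by
      have hle : ∀ P' Q' : OrdPartition F, (∀ j ∈ F, vmap P' j = vmap Q' j) →
          P'.m ≤ Q'.m := by
        intro P' Q' hv
        obtain ⟨j0, hj0⟩ := P'.nonempty ⟨0, m_pos hF P'⟩
        have hj0F : j0 ∈ F := (P'.cover j0).mpr ⟨_, hj0⟩
        have h1 : vmap P' j0 = P'.m := by rw [vmap_eq P' hj0]; simp
        have h2 : vmap Q' j0 ≤ Q'.m := (vmap_bounds Q' hj0F).2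
        rw [← h1, hv j0 hj0F]
        exact h2
      exact le_antisymm (hle P Q hveq) (hle Q P (fun j hj => (hveq j hj).symm))
    apply OrdPartition.ext' hm
    intro t
    ext j
    constructor
    · intro hjt
      have hjF : j ∈ F := (P.cover j).mpr ⟨t, hjt⟩
      obtain ⟨t', ht'⟩ := (Q.cover j).mp hjF
      have h1 : vmap P j = P.m - t.val := vmap_eq P hjt
      have h2 : vmap Q j = Q.m - t'.val := vmap_eq Q ht'
      have h3 := hveq j hjF
      have h4 : Fin.cast hm t = t' := by
        apply Fin.ext
        have ht1 := t.isLt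
        have ht2 := t'.isLt
        simp only [Fin.coe_cast]
        omega
      rw [h4]
      exact ht'
    · intro hjt
      have hjF : j ∈ F := (Q.cover j).mpr ⟨_, hjt⟩
      obtain ⟨t', ht'⟩ := (P.cover j).mp hjF
      have h1 : vmap Q j = Q.m - (Fin.cast hm t).val := vmap_eq Q hjt
      have h2 : vmap P j = P.m - t'.val := vmap_eq P ht'
      have h3 := hveq j hjF
      have h4 : t' = t := by
        apply Fin.ext
        have ht1 := t.isLt
        have ht2 := t'.isLt
        simp only [Fin.coe_cast] at h1
        omega
      rw [← h4]
      exact ht'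
  -- choose the minimizer among nonzero coefficients
  set NZ := Finset.univ.filter (fun P : OrdPartition F => c P ≠ 0) with hNZ
  have hP0 : P0 ∈ NZ := Finset.mem_filter.mpr ⟨Finset.mem_univ _, hc0⟩
  obtain ⟨Ps, hPs, hminP⟩ := NZ.exists_min_image (muP τ) ⟨P0, hP0⟩
  have hcPs : c Ps ≠ 0 := (Finset.mem_filter.mp hPs).2
  have hTT : ∀ P : OrdPartition F, ∀ t : Fin P.m, 1 ≤ ∑ j ∈ P.parts t, τ j := by
    intro P t
    obtain ⟨j, hj⟩ := P.nonempty t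
    calc (1:ℝ) ≤ τ j := hτ1 j
      _ ≤ ∑ j ∈ P.parts t, τ j :=
        Finset.single_le_sum (fun i _ => le_trans zero_le_one (hτ1 i)) hj
  -- the eventually-zero sum function
  have hzero : ∀ᶠ σ in atTop, (∑ P : OrdPartition F,
      c P * (mzeta (fun t : Fin P.m => σ * ∑ j ∈ P.parts t, τ j) *
        Real.exp (σ * muP τ Ps))) = 0 := by
    filter_upwards [eventually_gt_atTop (1:ℝ)] with σ hσ
    have h1 := h (fun j => σ * τ j) (fun j hj => by
      show (1:ℝ) < σ * τ j
      have h5 := mul_le_mul_of_nonneg_left (hτ1 j) (by linarith : (0:ℝ) ≤ σ)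
      rw [mul_one] at h5
      linarith)
    rw [tsum_fintype] at h1
    have h2 : ∀ P : OrdPartition F,
        mzeta (fun t : Fin P.m => ∑ j ∈ P.parts t, σ * τ j) =
        mzeta (fun t : Fin P.m => σ * ∑ j ∈ P.parts t, τ j) := by
      intro P; congr 1; funext t; rw [Finset.mul_sum]
    have h3 : (∑ P : OrdPartition F,
        c P * (mzeta (fun t : Fin P.m => σ * ∑ j ∈ P.parts t, τ j) *
          Real.exp (σ * muP τ Ps))) =
        (∑ P : OrdPartition F,
          c P * mzeta (fun t : Fin P.m => ∑ j ∈ P.parts t, σ * τ j)) *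
          Real.exp (σ * muP τ Ps) := by
      rw [Finset.sum_mul]
      apply Finset.sum_congr rfl
      intro P _
      rw [h2 P, mul_assoc]
    rw [h3, h1, zero_mul]
  -- the limit
  have hlim : Filter.Tendsto (fun σ : ℝ => ∑ P : OrdPartition F,
      c P * (mzeta (fun t : Fin P.m => σ * ∑ j ∈ P.parts t, τ j) *
        Real.exp (σ * muP τ Ps))) atTop (𝓝 (c Ps)) := by
    have hformula : (∑ P : OrdPartition F, (if P = Ps then c Ps else 0)) = c Ps := by
      simp
    rw [← hformula]
    apply tendsto_finset_sum
    intro P _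
    by_cases hPeq : P = Ps
    · subst hPeq
      rw [if_pos rfl]
      have hK := key_tendsto (m_pos hF P) (fun t => ∑ j ∈ P.parts t, τ j) (hTT P)
      have := hK.const_mul (c P)
      simpa [muP] using this
    · rw [if_neg hPeq]
      by_cases hcP : c P = 0
      · have hfun : (fun σ : ℝ => c P *
            (mzeta (fun t : Fin P.m => σ * ∑ j ∈ P.parts t, τ j) *
              Real.exp (σ * muP τ Ps))) = fun _ => (0:ℝ) := by
          funext σ; rw [hcP, zero_mul]
        rw [hfun]
        exact tendsto_const_nhds
      · have hPNZ : P ∈ NZ := Finset.mem_filter.mpr ⟨Finset.mem_univ _, hcP⟩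
        have hlt : muP τ Ps < muP τ P :=
          lt_of_le_of_ne (hminP P hPNZ) (fun heq => hPeq (hinj P Ps heq.symm))
        have hK := key_tendsto (m_pos hF P) (fun t => ∑ j ∈ P.parts t, τ j) (hTT P)
        have hE : Filter.Tendsto (fun σ : ℝ =>
            Real.exp (σ * (muP τ Ps - muP τ P))) atTop (𝓝 0) := by
          apply Real.tendsto_exp_atBot.comp
          have hneg : muP τ Ps - muP τ P < 0 := by linarith
          exact Filter.Tendsto.atTop_mul_const_of_neg hneg tendsto_id
        have hmul := (hK.mul hE).const_mul (c P)
        have h7 : (0:ℝ) = c P * (1 * 0) := by ring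
        rw [h7]
        apply hmul.congr
        intro σ
        rw [mul_assoc, ← Real.exp_add]
        have h8 : σ * ∑ t : Fin P.m, (∑ j ∈ P.parts t, τ j) *
            Real.log ((P.m - t.val : ℕ) : ℝ) + σ * (muP τ Ps - muP τ P) =
            σ * muP τ Ps := by
          have hμ : (∑ t : Fin P.m, (∑ j ∈ P.parts t, τ j) *
              Real.log ((P.m - t.val : ℕ) : ℝ)) = muP τ P := rfl
          rw [hμ]; ring
        rw [h8]
  have hev : (fun σ : ℝ => ∑ P : OrdPartition F,
      c P * (mzeta (fun t : Fin P.m => σ * ∑ j ∈ P.parts t, τ j) *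
        Real.exp (σ * muP τ Ps))) =ᶠ[atTop] (fun _ => (0:ℝ)) := hzero
  have hfin : c Ps = 0 :=
    tendsto_nhds_unique hlim (Filter.Tendsto.congr' hev.symm tendsto_const_nhds)
  exact hcPs hfin
end

section
/- Let c_1, c_2, c_3 be real numbers such that c_1 ζ(s,t) + c_2 ζ(t,s) + c_3 ζ(s+t) = 0 for all real s > 1 and t > 1. Then c_1 = c_2 = c_3 = 0. -/
abbrev Idx (n : ℕ) := {k : Fin n → ℕ // (∀ i j : Fin n, i < j → k j < k i) ∧ ∀ i, 0 < k i}

lemma mzeta_two (s t : ℝ) :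
    mzeta ![s, t] = ∑' k : Idx 2, ((k.1 0 : ℝ) ^ (-s) * (k.1 1 : ℝ) ^ (-t)) := by
  unfold mzeta
  congr 1
  funext k
  simp [Fin.prod_univ_two]

lemma mzeta_one (u : ℝ) :
    mzeta ![u] = ∑' k : Idx 1, ((k.1 0 : ℝ) ^ (-u)) := by
  unfold mzeta
  congr 1
  funext k
  simp

lemma summable2 (s t : ℝ) (hs : 1 < s) (ht : 1 < t) :
    Summable (fun k : Idx 2 => ((k.1 0 : ℝ) ^ (-s) * (k.1 1 : ℝ) ^ (-t))) := by
  have h1 : Summable (fun n : ℕ => (n:ℝ) ^ (-s)) := Real.summable_nat_rpow.2 (by linarith)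
  have h2 : Summable (fun n : ℕ => (n:ℝ) ^ (-t)) := Real.summable_nat_rpow.2 (by linarith)
  have hm := h1.mul_of_nonneg h2 (fun n => Real.rpow_nonneg n.cast_nonneg _)
    (fun n => Real.rpow_nonneg n.cast_nonneg _)
  have hF : Summable (fun k : Fin 2 → ℕ => (k 0 : ℝ) ^ (-s) * (k 1 : ℝ) ^ (-t)) :=
    ((finTwoArrowEquiv ℕ).summable_iff.2 hm : _)
  exact (hF.subtype _ : _)

lemma summable1 (u : ℝ) (hu : 1 < u) :
    Summable (fun k : Idx 1 => ((k.1 0 : ℝ) ^ (-u))) := by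
  have h1 : Summable (fun n : ℕ => (n:ℝ) ^ (-u)) := Real.summable_nat_rpow.2 (by linarith)
  have hF : Summable (fun k : Fin 1 → ℕ => (k 0 : ℝ) ^ (-u)) :=
    ((Equiv.funUnique (Fin 1) ℕ).summable_iff.2 h1 : _)
  exact (hF.subtype _ : _)

lemma term_nonneg2 (s t : ℝ) (k : Idx 2) :
    0 ≤ (k.1 0 : ℝ) ^ (-s) * (k.1 1 : ℝ) ^ (-t) :=
  mul_nonneg (Real.rpow_nonneg (Nat.cast_nonneg _) _) (Real.rpow_nonneg (Nat.cast_nonneg _) _)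

lemma mzeta_two_nonneg (s t : ℝ) : 0 ≤ mzeta ![s, t] := by
  rw [mzeta_two]; exact tsum_nonneg (term_nonneg2 s t)

lemma one_le_mzeta_one (u : ℝ) (hu : 1 < u) : 1 ≤ mzeta ![u] := by
  rw [mzeta_one]
  have he : ((fun _ => 1 : Fin 1 → ℕ) ∈
      {k : Fin 1 → ℕ | (∀ i j : Fin 1, i < j → k j < k i) ∧ ∀ i, 0 < k i}) := by
    constructor
    · intro i j hij; exact absurd hij (by omega)
    · intro i; norm_num
  have := Summable.le_tsum (summable1 u hu) ⟨fun _ => 1, he⟩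
    (fun j _ => Real.rpow_nonneg (Nat.cast_nonneg _) _)
  simpa using this

lemma idx2_facts (k : Idx 2) : 2 ≤ k.1 0 ∧ 1 ≤ k.1 1 := by
  obtain ⟨hlt, hpos⟩ := k.2
  have h01 := hlt 0 1 (by norm_num)
  have h1 := hpos 1
  omega

lemma quarter_le_mzeta (t : ℝ) (ht : 1 < t) : 1/4 ≤ mzeta ![2, t] := by
  rw [mzeta_two]
  have he : (![2, 1] ∈
      {k : Fin 2 → ℕ | (∀ i j : Fin 2, i < j → k j < k i) ∧ ∀ i, 0 < k i}) := by
    constructor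
    · intro i j hij; fin_cases i <;> fin_cases j <;> simp_all
    · intro i; fin_cases i <;> norm_num
  have := Summable.le_tsum (summable2 2 t one_lt_two ht) ⟨![2, 1], he⟩
    (fun j _ => term_nonneg2 2 t j)
  have h2 : (2:ℝ) ^ (-(2:ℝ)) = 1/4 := by
    rw [show (-(2:ℝ)) = ((-2 : ℤ):ℝ) by norm_num, Real.rpow_intCast]; norm_num
  simp only [one_div]
  calc (4:ℝ)⁻¹ ≤ (2:ℝ) ^ (-(2:ℝ)) * (1:ℝ) ^ (-t) := by
        rw [h2, Real.one_rpow]; norm_num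
    _ ≤ _ := by simpa using this

lemma mzeta_bound (s t : ℝ) (hs : 2 ≤ s) (ht : 2 ≤ t) :
    mzeta ![s, t] ≤ 2 ^ (2 - s) * mzeta ![(2:ℝ), 2] := by
  rw [mzeta_two, mzeta_two, ← tsum_mul_left]
  have hterm : ∀ k : Idx 2,
      (k.1 0 : ℝ) ^ (-s) * (k.1 1 : ℝ) ^ (-t) ≤
      2 ^ (2 - s) * ((k.1 0 : ℝ) ^ (-(2:ℝ)) * (k.1 1 : ℝ) ^ (-(2:ℝ))) := by
    intro k
    obtain ⟨hk0, hk1⟩ := idx2_facts k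
    have hk0r : (2:ℝ) ≤ (k.1 0 : ℝ) := by exact_mod_cast hk0
    have hk1r : (1:ℝ) ≤ (k.1 1 : ℝ) := by exact_mod_cast hk1
    have hk0pos : (0:ℝ) < (k.1 0 : ℝ) := by linarith
    have hb : (k.1 0 : ℝ) ^ (-s) ≤ 2 ^ (2 - s) * (k.1 0 : ℝ) ^ (-(2:ℝ)) := by
      have h1 : (k.1 0 : ℝ) ^ (-s) = (k.1 0 : ℝ) ^ (2 - s) * (k.1 0 : ℝ) ^ (-(2:ℝ)) := by
        rw [← Real.rpow_add hk0pos]; ring_nf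
      have h2 : (k.1 0 : ℝ) ^ (2 - s) ≤ (2:ℝ) ^ (2 - s) :=
        Real.rpow_le_rpow_of_nonpos two_pos hk0r (by linarith)
      rw [h1]
      exact mul_le_mul_of_nonneg_right h2 (Real.rpow_nonneg hk0pos.le _)
    have hc : (k.1 1 : ℝ) ^ (-t) ≤ (k.1 1 : ℝ) ^ (-(2:ℝ)) :=
      Real.rpow_le_rpow_of_exponent_le hk1r (by linarith)
    calc (k.1 0 : ℝ) ^ (-s) * (k.1 1 : ℝ) ^ (-t)
        ≤ (2 ^ (2 - s) * (k.1 0 : ℝ) ^ (-(2:ℝ))) * (k.1 1 : ℝ) ^ (-(2:ℝ)) := by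
          apply mul_le_mul hb hc (Real.rpow_nonneg (Nat.cast_nonneg _) _)
          exact mul_nonneg (Real.rpow_nonneg two_pos.le _) (Real.rpow_nonneg hk0pos.le _)
      _ = 2 ^ (2 - s) * ((k.1 0 : ℝ) ^ (-(2:ℝ)) * (k.1 1 : ℝ) ^ (-(2:ℝ))) := by ring
  exact Summable.tsum_le_tsum hterm (summable2 s t (by linarith) (by linarith))
    ((summable2 2 2 one_lt_two one_lt_two).mul_left _)

lemma key_zero (c C : ℝ) (h : ∀ x : ℝ, 2 ≤ x → |c| ≤ C * 2 ^ (2 - x)) : c = 0 := by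
  have hb : ∀ n : ℕ, |c| ≤ C * (1/2 : ℝ) ^ n := by
    intro n
    have := h (2 + n) (by linarith [(Nat.cast_nonneg n : (0:ℝ) ≤ (n:ℝ))])
    have he : (2:ℝ) ^ (2 - (2 + (n:ℝ))) = (1/2:ℝ) ^ n := by
      rw [show (2 - (2 + (n:ℝ))) = -(n:ℝ) by ring, Real.rpow_neg two_pos.le,
        Real.rpow_natCast]
      simp [div_pow]
    rwa [he] at this
  have ht : Filter.Tendsto (fun n : ℕ => C * (1/2 : ℝ) ^ n) Filter.atTop (nhds 0) := by
    have := (tendsto_pow_atTop_nhds_zero_of_lt_one (by norm_num : (0:ℝ) ≤ 1/2)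
      (by norm_num : (1/2:ℝ) < 1)).const_mul C
    simpa using this
  have : |c| ≤ 0 := ge_of_tendsto ht (Filter.Eventually.of_forall hb)
  exact abs_eq_zero.mp (le_antisymm this (abs_nonneg c))

theorem stmt10 (c₁ c₂ c₃ : ℝ)
    (h : ∀ s t : ℝ, 1 < s → 1 < t →
      c₁ * mzeta ![s, t] + c₂ * mzeta ![t, s] + c₃ * mzeta ![s + t] = 0) :
    c₁ = 0 ∧ c₂ = 0 ∧ c₃ = 0 := by
  have hZnn : 0 ≤ mzeta ![(2:ℝ), 2] := mzeta_two_nonneg 2 2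
  have hc3 : c₃ = 0 := by
    apply key_zero c₃ ((|c₁| + |c₂|) * mzeta ![(2:ℝ), 2])
    intro x hx
    have hx1 : 1 < x := by linarith
    have heq := h x x hx1 hx1
    have hA : mzeta ![x, x] ≤ 2 ^ (2 - x) * mzeta ![(2:ℝ), 2] := mzeta_bound x x hx hx
    have hAnn : 0 ≤ mzeta ![x, x] := mzeta_two_nonneg x x
    have hD : 1 ≤ mzeta ![x + x] := one_le_mzeta_one (x + x) (by linarith)
    have hrnn : (0:ℝ) ≤ 2 ^ (2 - x) := Real.rpow_nonneg two_pos.le _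
    calc |c₃| = |c₃| * 1 := (mul_one _).symm
      _ ≤ |c₃| * mzeta ![x + x] := by
          exact mul_le_mul_of_nonneg_left hD (abs_nonneg _)
      _ = |c₃ * mzeta ![x + x]| := by
          rw [abs_mul, abs_of_nonneg (by linarith : (0:ℝ) ≤ mzeta ![x + x])]
      _ = |c₁ * mzeta ![x, x] + c₂ * mzeta ![x, x]| := by
          rw [show c₃ * mzeta ![x + x] = -(c₁ * mzeta ![x, x] + c₂ * mzeta ![x, x]) by
            linarith, abs_neg]
      _ ≤ |c₁| * mzeta ![x, x] + |c₂| * mzeta ![x, x] := by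
          refine (abs_add_le _ _).trans ?_
          rw [abs_mul, abs_mul, abs_of_nonneg hAnn]
      _ = (|c₁| + |c₂|) * mzeta ![x, x] := by ring
      _ ≤ (|c₁| + |c₂|) * (2 ^ (2 - x) * mzeta ![(2:ℝ), 2]) := by
          exact mul_le_mul_of_nonneg_left hA (by positivity)
      _ = (|c₁| + |c₂|) * mzeta ![(2:ℝ), 2] * 2 ^ (2 - x) := by ring
  have hc1 : c₁ = 0 := by
    apply key_zero c₁ (4 * |c₂| * mzeta ![(2:ℝ), 2])
    intro x hx
    have hx1 : 1 < x := by linarith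
    have heq := h 2 x one_lt_two hx1
    rw [hc3, zero_mul, add_zero] at heq
    have hA : mzeta ![x, 2] ≤ 2 ^ (2 - x) * mzeta ![(2:ℝ), 2] := mzeta_bound x 2 hx le_rfl
    have hAnn : 0 ≤ mzeta ![x, 2] := mzeta_two_nonneg x 2
    have hB4 : 1/4 ≤ mzeta ![2, x] := quarter_le_mzeta x hx1
    have h4 : |c₁| * (1/4) ≤ |c₁| * mzeta ![2, x] :=
      mul_le_mul_of_nonneg_left hB4 (abs_nonneg _)
    have h5 : |c₁| * mzeta ![2, x] ≤ 4 * |c₂| * mzeta ![(2:ℝ), 2] * 2 ^ (2 - x) / 4 := by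
      calc |c₁| * mzeta ![2, x]
          = |c₁ * mzeta ![2, x]| := by
            rw [abs_mul, abs_of_nonneg (mzeta_two_nonneg 2 x)]
        _ = |c₂ * mzeta ![x, 2]| := by
            rw [show c₁ * mzeta ![2, x] = -(c₂ * mzeta ![x, 2]) by linarith, abs_neg]
        _ = |c₂| * mzeta ![x, 2] := by rw [abs_mul, abs_of_nonneg hAnn]
        _ ≤ |c₂| * (2 ^ (2 - x) * mzeta ![(2:ℝ), 2]) :=
            mul_le_mul_of_nonneg_left hA (abs_nonneg _)
        _ = 4 * |c₂| * mzeta ![(2:ℝ), 2] * 2 ^ (2 - x) / 4 := by ring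
    linarith
  have hc2 : c₂ = 0 := by
    have heq := h 2 2 one_lt_two one_lt_two
    rw [hc3, hc1, zero_mul, zero_mul, add_zero, zero_add] at heq
    have h4 : 1/4 ≤ mzeta ![(2:ℝ), 2] := quarter_le_mzeta 2 one_lt_two
    rcases mul_eq_zero.mp heq with h' | h'
    · exact h'
    · linarith
  exact ⟨hc1, hc2, hc3⟩
end

section
/- Let c_1, c_2, c_3 be real numbers such that c_1/((x−1)(xy−1)) + c_2/((y−1)(xy−1)) + c_3/(xy−1) = 0 for all real x > 1 and y > 1. Then c_1 = c_2 = c_3 = 0. -/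
theorem stmt11 (c₁ c₂ c₃ : ℝ)
    (h : ∀ x y : ℝ, 1 < x → 1 < y →
      c₁ / ((x - 1) * (x * y - 1)) + c₂ / ((y - 1) * (x * y - 1)) + c₃ / (x * y - 1) = 0) :
    c₁ = 0 ∧ c₂ = 0 ∧ c₃ = 0 := by
  have h1 := h 2 2 (by norm_num) (by norm_num)
  have h2 := h 2 3 (by norm_num) (by norm_num)
  have h3 := h 3 2 (by norm_num) (by norm_num)
  norm_num at h1 h2 h3
  refine ⟨?_, ?_, ?_⟩ <;> linarith
end

section
/- Let c_1, ..., c_13 be real numbers such that for all real x > 1, y > 1, z > 1, c_1/((x−1)(xy−1)(xyz−1)) + c_2/((x−1)(xz−1)(xyz−1)) + c_3/((y−1)(xy−1)(xyz−1)) + c_4/((y−1)(yz−1)(xyz−1)) + c_5/((z−1)(xz−1)(xyz−1)) + c_6/((z−1)(yz−1)(xyz−1)) + c_7/((x−1)(xyz−1)) + c_8/((yz−1)(xyz−1)) + c_9/((y−1)(xyz−1)) + c_10/((xz−1)(xyz−1)) + c_11/((z−1)(xyz−1)) + c_12/((xy−1)(xyz−1)) + c_13/(xyz−1) = 0. Then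 c_h = 0 for all 1 ≤ h ≤ 13. -/
theorem stmt13 (c₁ c₂ c₃ c₄ c₅ c₆ c₇ c₈ c₉ c₁₀ c₁₁ c₁₂ c₁₃ : ℝ)
    (h : ∀ x y z : ℝ, 1 < x → 1 < y → 1 < z →
      c₁ / ((x - 1) * (x * y - 1) * (x * y * z - 1))
        + c₂ / ((x - 1) * (x * z - 1) * (x * y * z - 1))
        + c₃ / ((y - 1) * (x * y - 1) * (x * y * z - 1))
        + c₄ / ((y - 1) * (y * z - 1) * (x * y * z - 1))
        + c₅ / ((z - 1) * (x * z - 1) * (x * y * z - 1))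
        + c₆ / ((z - 1) * (y * z - 1) * (x * y * z - 1))
        + c₇ / ((x - 1) * (x * y * z - 1))
        + c₈ / ((y * z - 1) * (x * y * z - 1))
        + c₉ / ((y - 1) * (x * y * z - 1))
        + c₁₀ / ((x * z - 1) * (x * y * z - 1))
        + c₁₁ / ((z - 1) * (x * y * z - 1))
        + c₁₂ / ((x * y - 1) * (x * y * z - 1))
        + c₁₃ / (x * y * z - 1) = 0) :
    c₁ = 0 ∧ c₂ = 0 ∧ c₃ = 0 ∧ c₄ = 0 ∧ c₅ = 0 ∧ c₆ = 0 ∧ c₇ = 0 ∧ c₈ = 0 ∧ c₉ = 0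
      ∧ c₁₀ = 0 ∧ c₁₁ = 0 ∧ c₁₂ = 0 ∧ c₁₃ = 0 := by
  have h1 := h 2 7 6 (by norm_num) (by norm_num) (by norm_num)
  have h2 := h 6 2 3 (by norm_num) (by norm_num) (by norm_num)
  have h3 := h 7 6 3 (by norm_num) (by norm_num) (by norm_num)
  have h4 := h 7 4 5 (by norm_num) (by norm_num) (by norm_num)
  have h5 := h 2 4 6 (by norm_num) (by norm_num) (by norm_num)
  have h6 := h 3 6 7 (by norm_num) (by norm_num) (by norm_num)
  have h7 := h 2 7 2 (by norm_num) (by norm_num) (by norm_num)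
  have h8 := h 5 5 2 (by norm_num) (by norm_num) (by norm_num)
  have h9 := h 7 4 4 (by norm_num) (by norm_num) (by norm_num)
  have h10 := h 5 3 3 (by norm_num) (by norm_num) (by norm_num)
  have h11 := h 5 4 2 (by norm_num) (by norm_num) (by norm_num)
  have h12 := h 6 5 6 (by norm_num) (by norm_num) (by norm_num)
  have h13 := h 4 6 3 (by norm_num) (by norm_num) (by norm_num)
  refine ⟨?_, ?_, ?_, ?_, ?_, ?_, ?_, ?_, ?_, ?_, ?_, ?_, ?_⟩
  · linear_combination ((29608884614386063969898746233:ℝ)/21311215776554394757577228) * h1 + ((4891160753674022516685171175:ℝ)/21311215776554394757577228) * h2 + ((-89394035561651154102527360875:ℝ)/5327803944138598689394307) * h3 + ((-230094250418439884792299528710:ℝ)/5327803944138598689394307) * h4 + ((8584010442799572034816340373:ℝ)/10655607888277197378788614) * h5 + ((-71654027854578336169238055375:ℝ)/5327803944138598689394307) * h6 + ((-3151175522535436771170721107:ℝ)/21311215776554394757577228) * h7 + ((65846041391391522318647335872:ℝ)/26639019720692993446971535) * h8 + ((163045403553245056366219305642:ℝ)/5327803944138598689394307) * h9 + ((-49902100622860983296414194272:ℝ)/26639019720692993446971535)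 * h10 + ((-5329524006301321874035558206:ℝ)/5327803944138598689394307) * h11 + ((213258180467902103743466781685:ℝ)/5327803944138598689394307) * h12 + ((54509742977416500582194178353:ℝ)/21311215776554394757577228) * h13
  · linear_combination ((-48741859914914938966218980228:ℝ)/15983411832415796068182921) * h1 + ((79830772657615703591894950:ℝ)/47950235497247388204548763) * h2 + ((3385717303351650825516508946500:ℝ)/143850706491742164613646289) * h3 + ((276751548383106288581782151688:ℝ)/5327803944138598689394307) * h4 + ((-186921782668651375155818462:ℝ)/5327803944138598689394307) * h5 + ((86069152364372665972867820500:ℝ)/5327803944138598689394307) * h6 + ((1503792410306954052751661052:ℝ)/5327803944138598689394307) * h7 + ((-162516403576360973543496454656:ℝ)/26639019720692993446971535) * h8 + ((-146330254865917364387854012866:ℝ)/5327803944138598689394307) * h9 + ((-662026789035061310594497781248:ℝ)/719253532458710823068231445) * h10 + ((17605291431604885604837519460:ℝ)/5327803944138598689394307) * h11 + ((-2823268011839515739137586909920:ℝ)/47950235497247388204548763) * h12 + ((-277615049447267897182082025662:ℝ)/143850706491742164613646289) * h13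
  · linear_combination ((293034393601240688784953606859:ℝ)/21311215776554394757577228) * h1 + ((-26616111078888827751565308075:ℝ)/21311215776554394757577228) * h2 + ((-246807869644775346224517895375:ℝ)/15983411832415796068182921) * h3 + ((-217015399348633798462820991258:ℝ)/5327803944138598689394307) * h4 + ((-12323788350983747989999827711:ℝ)/10655607888277197378788614) * h5 + ((-301687895249035060536242303625:ℝ)/5327803944138598689394307) * h6 + ((-11105965031192803240229581353:ℝ)/21311215776554394757577228) * h7 + ((363513334234973524909144953696:ℝ)/26639019720692993446971535) * h8 + ((-245954274161602575808069318989:ℝ)/5327803944138598689394307) * h9 + ((1233907920940684677245091251872:ℝ)/79917059162078980340914605) * h10 + ((-49331365582377039680628846828:ℝ)/5327803944138598689394307) * h11 + ((833335928936881688512913292455:ℝ)/5327803944138598689394307) * h12 + ((-301390229559725909397837699943:ℝ)/63933647329663184272731684) * h13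
  · linear_combination ((-30907088892920903483246652187:ℝ)/5327803944138598689394307) * h1 + ((27323300974070032782447398725:ℝ)/31966823664831592136365842) * h2 + ((380352267743588399258648343500:ℝ)/47950235497247388204548763) * h3 + ((23382568851389551653334261416:ℝ)/5327803944138598689394307) * h4 + ((5431101932393963442456814947:ℝ)/10655607888277197378788614) * h5 + ((122253586356938160392873916000:ℝ)/5327803944138598689394307) * h6 + ((1228608077307323196419630019:ℝ)/5327803944138598689394307) * h7 + ((-135846579812159469882953261952:ℝ)/26639019720692993446971535) * h8 + ((214969624928234725859952697791:ℝ)/10655607888277197378788614) * h9 + ((-1507821913318097845495583390912:ℝ)/239751177486236941022743815) * h10 + ((17438395367190837208307296977:ℝ)/5327803944138598689394307) * h11 + ((-834123586766363810678591838680:ℝ)/15983411832415796068182921) * h12 + ((138633921088920262491671675809:ℝ)/95900470994494776409097526) * h13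
  · linear_combination ((39567456609805609413374779918:ℝ)/15983411832415796068182921) * h1 + ((-3039381817315439153349222200:ℝ)/47950235497247388204548763) * h2 + ((-3147264683217498364800138029000:ℝ)/143850706491742164613646289) * h3 + ((-326901388516504949596915727208:ℝ)/5327803944138598689394307) * h4 + ((-246732427643176331662952678:ℝ)/5327803944138598689394307) * h5 + ((-68587614194030911269719723000:ℝ)/5327803944138598689394307) * h6 + ((-496794453037566517011148542:ℝ)/5327803944138598689394307) * h7 + ((184327745275500298335740814336:ℝ)/26639019720692993446971535) * h8 + ((178360640268850879209827038746:ℝ)/5327803944138598689394307) * h9 + ((1069052817293083990421770757888:ℝ)/719253532458710823068231445) * h10 + ((-20970269215026614660423768340:ℝ)/5327803944138598689394307) * h11 + ((2980760782029527629089719378120:ℝ)/47950235497247388204548763) * h12 + ((-276654958890397679996017364828:ℝ)/143850706491742164613646289) * h13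
  · linear_combination ((-1431510622297898108394110800:ℝ)/5327803944138598689394307) * h1 + ((-514066339251591700326358375:ℝ)/31966823664831592136365842) * h2 + ((402752533377667362701117828750:ℝ)/47950235497247388204548763) * h3 + ((181598398247664252287451136620:ℝ)/5327803944138598689394307) * h4 + ((-187813612552550729939964420:ℝ)/5327803944138598689394307) * h5 + ((10959969880827795251994228750:ℝ)/5327803944138598689394307) * h6 + ((-2997539010031911687844515:ℝ)/5327803944138598689394307) * h7 + ((-19198113150126273415026718464:ℝ)/5327803944138598689394307) * h8 + ((-129669219614295846061646621895:ℝ)/5327803944138598689394307) * h9 + ((-23031334031208229816152388864:ℝ)/47950235497247388204548763) * h10 + ((14214314888453640510673176690:ℝ)/5327803944138598689394307) * h11 + ((-301598451467700676413390438550:ℝ)/15983411832415796068182921) * h12 + ((111150682022855065499098722565:ℝ)/95900470994494776409097526) * h13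
  · linear_combination ((44171115566301826458250748503:ℝ)/63933647329663184272731684) * h1 + ((-6755639154424496508372032525:ℝ)/191800941988989552818195052) * h2 + ((-270960119980374669318691546625:ℝ)/143850706491742164613646289) * h3 + ((-22466638588544050566694747878:ℝ)/5327803944138598689394307) * h4 + ((-1007854841492596588049722219:ℝ)/10655607888277197378788614) * h5 + ((-10225903268252735770377971375:ℝ)/5327803944138598689394307) * h6 + ((-615588755155610690787409791:ℝ)/21311215776554394757577228) * h7 + ((22833545211004889578237642944:ℝ)/26639019720692993446971535) * h8 + ((5542921136145165233482184184:ℝ)/5327803944138598689394307) * h9 + ((335509715293069757056991757152:ℝ)/719253532458710823068231445) * h10 + ((-2737373538866853164657284542:ℝ)/5327803944138598689394307) * h11 + ((311033572738318048479024798305:ℝ)/47950235497247388204548763) * h12 + ((-163635073687706886870609039233:ℝ)/575402825966968658454585156) * h13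
  · linear_combination ((93510439564762132393679713931:ℝ)/21311215776554394757577228) * h1 + ((-9503847479095514751555601175:ℝ)/21311215776554394757577228) * h2 + ((-913508625704946588700965464500:ℝ)/47950235497247388204548763) * h3 + ((-349610097251591848404744719112:ℝ)/5327803944138598689394307) * h4 + ((-5935911611654947245726006933:ℝ)/21311215776554394757577228) * h5 + ((-103134820975286528242109378250:ℝ)/5327803944138598689394307) * h6 + ((-3396328414688636104014222327:ℝ)/21311215776554394757577228) * h7 + ((162515978156609211869784350784:ℝ)/26639019720692993446971535) * h8 + ((637595881490764937368025646651:ℝ)/21311215776554394757577228) * h9 + ((948854404521072689199728934304:ℝ)/239751177486236941022743815) * h10 + ((-42151404654680648735271899763:ℝ)/10655607888277197378788614) * h11 + ((379001805129343640556265545270:ℝ)/5327803944138598689394307) * h12 + ((-393592375763844725534034458281:ℝ)/191800941988989552818195052) * h13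
  · linear_combination ((-1979813517696716631163657579:ℝ)/21311215776554394757577228) * h1 + ((1524639645304612519267213475:ℝ)/63933647329663184272731684) * h2 + ((19045279123163199708604311125:ℝ)/47950235497247388204548763) * h3 + ((41614094954501578987406284698:ℝ)/5327803944138598689394307) * h4 + ((17675542787858792205685638:ℝ)/5327803944138598689394307) * h5 + ((3724511621062571232526816125:ℝ)/5327803944138598689394307) * h6 + ((-46838591355739191024207087:ℝ)/21311215776554394757577228) * h7 + ((-8058104673601089568605461856:ℝ)/26639019720692993446971535) * h8 + ((-28621940840771557363375642857:ℝ)/10655607888277197378788614) * h9 + ((-87737905496056453981024205216:ℝ)/239751177486236941022743815) * h10 + ((1335084979128408666839546775:ℝ)/5327803944138598689394307) * h11 + ((-109474429658770226180478258365:ℝ)/15983411832415796068182921) * h12 + ((81903477293935685750737210319:ℝ)/191800941988989552818195052) * h13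
  · linear_combination ((9868972473021951724654759696:ℝ)/15983411832415796068182921) * h1 + ((2992086992601452563927093600:ℝ)/47950235497247388204548763) * h2 + ((-616891393595169892886961199250:ℝ)/143850706491742164613646289) * h3 + ((32943133537611991986415230864:ℝ)/5327803944138598689394307) * h4 + ((486643874349632195502141304:ℝ)/5327803944138598689394307) * h5 + ((-31797348385388653887018704750:ℝ)/5327803944138598689394307) * h6 + ((-561537958722469651778442444:ℝ)/5327803944138598689394307) * h7 + ((-28546446636836907150637052928:ℝ)/26639019720692993446971535) * h8 + ((-27196770779068421952328966488:ℝ)/5327803944138598689394307) * h9 + ((-401763153239145977008106696704:ℝ)/719253532458710823068231445) * h10 + ((3908350957607134082868209568:ℝ)/5327803944138598689394307) * h11 + ((176309307873542044844429369240:ℝ)/47950235497247388204548763) * h12 + ((730347938543002119454792666384:ℝ)/143850706491742164613646289) * h13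
  · linear_combination ((-8669618607166109974093868363:ℝ)/15983411832415796068182921) * h1 + ((2583034513098683597967981275:ℝ)/95900470994494776409097526) * h2 + ((459453567903066980527939672750:ℝ)/143850706491742164613646289) * h3 + ((41279988708330790887453961548:ℝ)/5327803944138598689394307) * h4 + ((91013583582672603430468933:ℝ)/5327803944138598689394307) * h5 + ((15020818358290381280070579250:ℝ)/5327803944138598689394307) * h6 + ((132568139769608119492674252:ℝ)/5327803944138598689394307) * h7 + ((-15256602841869334207671687936:ℝ)/26639019720692993446971535) * h8 + ((-17645256867692867628580696746:ℝ)/5327803944138598689394307) * h9 + ((-205085874060211606605386793088:ℝ)/719253532458710823068231445) * h10 + ((1654747384899802146780306480:ℝ)/5327803944138598689394307) * h11 + ((-487249025989618260275126389870:ℝ)/47950235497247388204548763) * h12 + ((-52225738634828216265576758869:ℝ)/287701412983484329227292578) * h13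
  · linear_combination ((-213276271901370369692554910941:ℝ)/21311215776554394757577228) * h1 + ((23285850115724211128151675175:ℝ)/63933647329663184272731684) * h2 + ((1328171815877473264509870322000:ℝ)/47950235497247388204548763) * h3 + ((326439006864438267566275423824:ℝ)/5327803944138598689394307) * h4 + ((10897104548388174726292221133:ℝ)/21311215776554394757577228) * h5 + ((231351715554462825874605698250:ℝ)/5327803944138598689394307) * h6 + ((9337755938050690112190869667:ℝ)/21311215776554394757577228) * h7 + ((-257337321095778245306104375584:ℝ)/26639019720692993446971535) * h8 + ((-210794927047998191872401014541:ℝ)/21311215776554394757577228) * h9 + ((-1312346425439354548926689384224:ℝ)/239751177486236941022743815) * h10 + ((61022429079376056859669446981:ℝ)/10655607888277197378788614) * h11 + ((-1862278608001394727900060858385:ℝ)/15983411832415796068182921) * h12 + ((-163196901029506938574906516349:ℝ)/191800941988989552818195052) * h13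
  · linear_combination ((1545600111244614263111743951:ℝ)/15983411832415796068182921) * h1 + ((-47457857637627868902686600:ℝ)/47950235497247388204548763) * h2 + ((-60990794270906469703177365500:ℝ)/143850706491742164613646289) * h3 + ((-12018149825854017310761930156:ℝ)/5327803944138598689394307) * h4 + ((25373976008325156282487214:ℝ)/5327803944138598689394307) * h5 + ((-3537354785204974835210036000:ℝ)/5327803944138598689394307) * h6 + ((-29877517875428343439458867:ℝ)/10655607888277197378788614) * h7 + ((2705064534769451294058750432:ℝ)/26639019720692993446971535) * h8 + ((7752865351407264817335898299:ℝ)/10655607888277197378788614) * h9 + ((41410194095152520391993141056:ℝ)/719253532458710823068231445) * h10 + ((-321382251280433303904328203:ℝ)/5327803944138598689394307) * h11 + ((144942940111546876375642333565:ℝ)/47950235497247388204548763) * h12 + ((-4886784533730984347464540286:ℝ)/143850706491742164613646289) * h13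
end

section
/- Let n be a positive integer and let x_1, ..., x_n be real numbers each exceeding 1. Then ∑_{σ ∈ S_n} ∏_{k=1}^n (∏_{j=1}^k x_{σ(j)} − 1)^{-1} = ∑_{𝒫 ⊢ {1,...,n}} (−1)^{n − |𝒫|} ∏_{P ∈ 𝒫} (|P| − 1)! (∏_{j ∈ P} x_j − 1)^{-1}, where S_n is the group of permutations of {1, ..., n} and the sum on the right is over all unordered set partitions 𝒫 of {1, ..., n}. -/
open Finset

variable {ι : Type*} [DecidableEq ι]

namespace Hoffman

lemma sup_sdiff_parts {s : Finset ι} (P : Finpartition s) (T : Finset (Finset ι))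
    (hT : T ⊆ P.parts) : (P.parts \ T).sup id = s \ T.sup id := by
  ext j
  simp only [Finset.mem_sup, Finset.mem_sdiff, id]
  constructor
  · rintro ⟨Q, hQ, hjQ⟩
    refine ⟨P.le hQ.1 hjQ, ?_⟩
    rintro ⟨Q', hQ', hjQ'⟩
    exact hQ.2 (by rwa [P.eq_of_mem_parts hQ.1 (hT hQ') hjQ hjQ'])
  · rintro ⟨hjs, hj⟩
    obtain ⟨Q, hQ, hjQ⟩ := P.exists_mem hjs
    exact ⟨Q, ⟨hQ, fun hQT => hj ⟨Q, hQT, hjQ⟩⟩, hjQ⟩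

lemma parts_disjoint {u v : Finset ι} (PU : Finpartition u) (PC : Finpartition v)
    (huv : Disjoint u v) : Disjoint PU.parts PC.parts := by
  rw [Finset.disjoint_left]
  intro Q hQU hQC
  obtain ⟨a, ha⟩ := PU.nonempty_of_mem_parts hQU
  exact Finset.disjoint_left.1 huv (PU.le hQU ha) (PC.le hQC ha)

/-- Glue a partition of `u` and a partition of `s \ u` into a partition of `s`. -/
def glue {s u : Finset ι} (hu : u ⊆ s) (PU : Finpartition u) (PC : Finpartition (s \ u)) :
    Finpartition s where
  parts := PU.parts ∪ PC.parts
  supIndep := by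
    rw [Finset.supIndep_iff_pairwiseDisjoint, Finset.coe_union]
    refine Set.PairwiseDisjoint.union PU.disjoint PC.disjoint ?_
    intro Q hQU Q' hQC _
    exact (Finset.disjoint_sdiff (s := u)).mono (PU.le hQU) (PC.le hQC)
  sup_parts := by
    rw [Finset.sup_union, PU.sup_parts, PC.sup_parts, Finset.sup_eq_union, Finset.union_sdiff_of_subset hu]
  bot_notMem := by
    rw [Finset.mem_union]
    rintro (h | h)
    exacts [PU.bot_notMem h, PC.bot_notMem h]

@[simp] lemma glue_parts {s u : Finset ι} (hu : u ⊆ s) (PU : Finpartition u)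
    (PC : Finpartition (s \ u)) : (glue hu PU PC).parts = PU.parts ∪ PC.parts := rfl

end Hoffman

namespace Hoffman

/-- Helper for sigma equality. -/
lemma sig_eq {s : Finset ι} {B B' : Finset ι} (h : B = B')
    {P : Finpartition (s \ B)} {P' : Finpartition (s \ B')} (hp : P.parts = P'.parts) :
    (⟨B, P⟩ : Σ B : Finset ι, Finpartition (s \ B)) = ⟨B', P'⟩ := by
  subst h
  exact congrArg _ (Finpartition.ext hp)

/-- Conditioning on the part containing `i`. -/
lemma sum_finpartition_part (s : Finset ι) (i : ι) (hi : i ∈ s) (g : Finset (Finset ι) → ℝ) :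
    ∑ P : Finpartition s, g P.parts =
      ∑ B ∈ s.powerset.filter (fun B => i ∈ B),
        ∑ P' : Finpartition (s \ B), g (insert B P'.parts) := by
  have hB0 : ∀ B : Finset ι, i ∈ B → B ≠ ⊥ := by
    rintro B hB rfl; exact absurd hB (Finset.notMem_empty i)
  rw [Finset.sum_sigma']
  refine Finset.sum_bij'
    (i := fun P _ => (⟨P.part i, P.ofSubset (Finset.erase_subset _ _)
      (by rw [Finset.erase_eq, sup_sdiff_parts P {P.part i}
        (Finset.singleton_subset_iff.2 (P.part_mem.2 hi)), Finset.sup_singleton]; rfl)⟩ :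
        Σ B : Finset ι, Finpartition (s \ B)))
    (j := fun p hp => (p.2.extend (hB0 p.1 (Finset.mem_filter.1 (Finset.mem_sigma.1 hp).1).2)
      disjoint_sdiff_self_left (by
        rw [Finset.sup_eq_union, Finset.sdiff_union_of_subset
          (Finset.mem_powerset.1 (Finset.mem_filter.1 (Finset.mem_sigma.1 hp).1).1)])))
    ?_ ?_ ?_ ?_ ?_
  · intro P _
    rw [Finset.mem_sigma]
    refine ⟨Finset.mem_filter.2 ⟨Finset.mem_powerset.2 (P.le (P.part_mem.2 hi)), P.mem_part hi⟩,
      Finset.mem_univ _⟩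
  · intro p hp
    exact Finset.mem_univ _
  · intro P _
    apply Finpartition.ext
    simp only [Finpartition.extend_parts, Finpartition.ofSubset_parts]
    exact Finset.insert_erase (P.part_mem.2 hi)
  · rintro ⟨B, P'⟩ hp
    have hiB : i ∈ B := (Finset.mem_filter.1 (Finset.mem_sigma.1 hp).1).2
    have hBn : B ∉ P'.parts := fun h => (Finset.mem_sdiff.1 (P'.le h hiB)).2 hiB
    have hpart : ∀ (Q : Finpartition s), Q.parts = insert B P'.parts → Q.part i = B :=
      fun Q hQ => Finpartition.part_eq_of_mem (P := Q) (by rw [hQ]; exact Finset.mem_insert_self _ _) hiB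
    refine sig_eq (hpart _ rfl) ?_
    show Finset.erase _ _ = _
    rw [Finpartition.extend_parts, hpart _ rfl, Finset.erase_insert hBn]
  · intro P _
    exact congrArg g (Finset.insert_erase (P.part_mem.2 hi)).symm

lemma sig2_eq {s : Finset ι} {P P' : Finpartition s} {T T' : Finset (Finset ι)}
    (h : P = P') (h2 : T = T') :
    (⟨P, T⟩ : Σ _ : Finpartition s, Finset (Finset ι)) = ⟨P', T'⟩ := by
  subst h; subst h2; rfl

lemma sig3_eq {s U U' : Finset ι} (h : U = U') {P1 : Finpartition U} {P2 : Finpartition (s \ U)}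
    {P1' : Finpartition U'} {P2' : Finpartition (s \ U')}
    (e1 : P1.parts = P1'.parts) (e2 : P2.parts = P2'.parts) :
    (⟨U, (P1, P2)⟩ : Σ U : Finset ι, Finpartition U × Finpartition (s \ U)) = ⟨U', (P1', P2')⟩ := by
  subst h
  rw [Finpartition.ext e1, Finpartition.ext e2]

lemma sum_finpartition_split (s : Finset ι) (g h : Finset ι → ℝ) :
    (∑ P : Finpartition s, ∑ T ∈ P.parts.powerset.filter (· ≠ ∅),
        (∏ Q ∈ T, g Q) * ∏ Q ∈ P.parts \ T, h Q) =
      ∑ U ∈ s.powerset.filter (· ≠ ∅),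
        (∑ PU : Finpartition U, ∏ Q ∈ PU.parts, g Q) *
        (∑ PC : Finpartition (s \ U), ∏ Q ∈ PC.parts, h Q) := by
  have key : ∀ U : Finset ι,
      (∑ PU : Finpartition U, ∏ Q ∈ PU.parts, g Q) *
        (∑ PC : Finpartition (s \ U), ∏ Q ∈ PC.parts, h Q) =
      ∑ q : Finpartition U × Finpartition (s \ U),
        (∏ Q ∈ q.1.parts, g Q) * (∏ Q ∈ q.2.parts, h Q) := fun U => by
    rw [Finset.sum_mul_sum]
    exact (Fintype.sum_prod_type (f := fun q : Finpartition U × Finpartition (s \ U) =>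
      (∏ Q ∈ q.1.parts, g Q) * ∏ Q ∈ q.2.parts, h Q)).symm
  simp_rw [key]
  rw [Finset.sum_sigma', Finset.sum_sigma']
  have hsubT : ∀ p : (Σ _ : Finpartition s, Finset (Finset ι)),
      p ∈ (Finset.univ (α := Finpartition s)).sigma
        (fun P => P.parts.powerset.filter (· ≠ ∅)) → p.2 ⊆ p.1.parts := fun p hp =>
    Finset.mem_powerset.1 (Finset.mem_filter.1 (Finset.mem_sigma.1 hp).2).1
  have hneT : ∀ p : (Σ _ : Finpartition s, Finset (Finset ι)),
      p ∈ (Finset.univ (α := Finpartition s)).sigma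
        (fun P => P.parts.powerset.filter (· ≠ ∅)) → p.2 ≠ ∅ := fun p hp =>
    (Finset.mem_filter.1 (Finset.mem_sigma.1 hp).2).2
  have hUs : ∀ q : (Σ U : Finset ι, Finpartition U × Finpartition (s \ U)),
      q ∈ (s.powerset.filter (· ≠ ∅)).sigma (fun U => Finset.univ) → q.1 ⊆ s := fun q hq =>
    Finset.mem_powerset.1 (Finset.mem_filter.1 (Finset.mem_sigma.1 hq).1).1
  refine Finset.sum_bij'
    (i := fun p hp => ⟨p.2.sup id,
      (p.1.ofSubset (hsubT p hp) rfl,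
       p.1.ofSubset Finset.sdiff_subset (sup_sdiff_parts p.1 p.2 (hsubT p hp)))⟩)
    (j := fun q hq => ⟨glue (hUs q hq) q.2.1 q.2.2, q.2.1.parts⟩)
    ?_ ?_ ?_ ?_ ?_
  · rintro ⟨P, T⟩ hp
    rw [Finset.mem_sigma]
    refine ⟨Finset.mem_filter.2 ⟨Finset.mem_powerset.2 ?_, ?_⟩, Finset.mem_univ _⟩
    · exact Finset.sup_le fun Q hQ => P.le (hsubT _ hp hQ)
    · obtain ⟨Q, hQ⟩ := Finset.nonempty_iff_ne_empty.2 (hneT _ hp)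
      obtain ⟨a, ha⟩ := P.nonempty_of_mem_parts (hsubT _ hp hQ)
      exact Finset.nonempty_iff_ne_empty.1 ⟨a, Finset.mem_sup.2 ⟨Q, hQ, ha⟩⟩
  · rintro ⟨U, PU, PC⟩ hq
    rw [Finset.mem_sigma]
    refine ⟨Finset.mem_univ _, Finset.mem_filter.2 ⟨Finset.mem_powerset.2 ?_, ?_⟩⟩
    · exact Finset.subset_union_left
    · refine Finset.nonempty_iff_ne_empty.1 (PU.parts_nonempty ?_)
      rw [Finset.bot_eq_empty]
      exact (Finset.mem_filter.1 (Finset.mem_sigma.1 hq).1).2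
  · rintro ⟨P, T⟩ hp
    refine sig2_eq (Finpartition.ext ?_) rfl
    show T ∪ (P.parts \ T) = P.parts
    exact Finset.union_sdiff_of_subset (hsubT _ hp)
  · rintro ⟨U, PU, PC⟩ hq
    refine sig3_eq PU.sup_parts rfl ?_
    show (PU.parts ∪ PC.parts) \ PU.parts = PC.parts
    exact Finset.union_sdiff_cancel_left (parts_disjoint PU PC Finset.disjoint_sdiff)
  · rintro ⟨P, T⟩ hp
    rfl

end Hoffman

namespace Hoffman

lemma sum_finpartition_empty (g : Finset (Finset ι) → ℝ) :
    ∑ P : Finpartition (∅ : Finset ι), g P.parts = g ∅ := by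
  have h1 : ∀ P : Finpartition (∅ : Finset ι), P.parts = ∅ := fun P =>
    Finpartition.parts_eq_empty_iff.2 Finset.bot_eq_empty.symm
  haveI : Unique (Finpartition (∅ : Finset ι)) :=
    { default := ⊥, uniq := fun P => Finpartition.ext (by rw [h1, h1]) }
  rw [Fintype.sum_unique (fun P : Finpartition (∅ : Finset ι) => g P.parts), h1]

/-- The Möbius weight of a part. -/
noncomputable def w (Q : Finset ι) : ℝ := (-1) ^ (Q.card - 1) * (Q.card - 1).factorial

/-- Sum of Möbius weights over all partitions. -/
noncomputable def F (s : Finset ι) : ℝ := ∑ P : Finpartition s, ∏ Q ∈ P.parts, w Q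

lemma F_eq (s : Finset ι) : F s = if s.card ≤ 1 then 1 else 0 := by
  induction s using Finset.strongInductionOn with
  | _ s IH =>
  rcases s.eq_empty_or_nonempty with rfl | ⟨i, hi⟩
  · simp only [Finset.card_empty, if_pos (by norm_num : (0:ℕ) ≤ 1), zero_le, ↓reduceIte]
    rw [F, sum_finpartition_empty (fun parts => ∏ Q ∈ parts, w Q), Finset.prod_empty]
  · have hrec : F s = ∑ B ∈ s.powerset.filter (fun B => i ∈ B), w B * F (s \ B) := by
      rw [F, sum_finpartition_part s i hi (fun parts => ∏ Q ∈ parts, w Q)]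
      refine Finset.sum_congr rfl fun B hB => ?_
      have hiB : i ∈ B := (Finset.mem_filter.1 hB).2
      rw [F, Finset.mul_sum]
      refine Finset.sum_congr rfl fun P' _ => ?_
      rw [Finset.prod_insert (fun h => (Finset.mem_sdiff.1 (P'.le h hiB)).2 hiB)]
    have hIH : ∀ B ∈ s.powerset.filter (fun B => i ∈ B),
        w B * F (s \ B) = if (s \ B).card ≤ 1 then w B else 0 := by
      intro B hB
      have hBs : B ⊆ s := Finset.mem_powerset.1 (Finset.mem_filter.1 hB).1
      have hBne : B.Nonempty := ⟨i, (Finset.mem_filter.1 hB).2⟩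
      rw [IH (s \ B) (Finset.sdiff_ssubset hBs hBne)]
      split <;> ring
    rw [hrec, Finset.sum_congr rfl hIH, ← Finset.sum_filter]
    have hsplit : (s.powerset.filter (fun B => i ∈ B)).filter (fun B => (s \ B).card ≤ 1) =
        insert s ((s.erase i).image (s.erase ·)) := by
      ext B
      simp only [Finset.mem_filter, Finset.mem_powerset, Finset.mem_insert, Finset.mem_image,
        Finset.mem_erase]
      constructor
      · rintro ⟨⟨hBs, hiB⟩, hcard⟩
        interval_cases h : (s \ B).card
        · left
          exact Finset.Subset.antisymm hBs
            (Finset.sdiff_eq_empty_iff_subset.1 (Finset.card_eq_zero.1 h))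
        · right
          obtain ⟨j, hj⟩ := Finset.card_eq_one.1 h
          have hjs : j ∈ s := (Finset.mem_sdiff.1 (hj ▸ Finset.mem_singleton_self j)).1
          have hjB : j ∉ B := (Finset.mem_sdiff.1 (hj ▸ Finset.mem_singleton_self j)).2
          refine ⟨j, ⟨fun hji => hjB (hji ▸ hiB), hjs⟩, ?_⟩
          rw [Finset.erase_eq, ← hj, Finset.sdiff_sdiff_eq_self hBs]
      · rintro (rfl | ⟨j, ⟨hji, hjs⟩, rfl⟩)
        · exact ⟨⟨subset_rfl, hi⟩, by simp⟩
        · refine ⟨⟨Finset.erase_subset _ _, Finset.mem_erase.2 ⟨Ne.symm hji, hi⟩⟩, ?_⟩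
          rw [Finset.erase_eq,
            Finset.sdiff_sdiff_eq_self (Finset.singleton_subset_iff.2 hjs),
            Finset.card_singleton]
    rw [hsplit]
    have hs_notmem : s ∉ (s.erase i).image (s.erase ·) := by
      simp only [Finset.mem_image]
      rintro ⟨j, hj, hes⟩
      have hjs : j ∈ s := (Finset.mem_erase.1 hj).2
      have : j ∈ s.erase j := hes.symm ▸ hjs
      exact (Finset.mem_erase.1 this).1 rfl
    rw [Finset.sum_insert hs_notmem,
      Finset.sum_image (fun j hj j' hj' hjj =>
        Finset.erase_injOn s (Finset.mem_erase.1 hj).2 (Finset.mem_erase.1 hj').2 hjj)]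
    have hw : ∀ j ∈ s.erase i, w (s.erase j) = (-1) ^ (s.card - 2) * (s.card - 2).factorial := by
      intro j hj
      rw [w, Finset.card_erase_of_mem (Finset.mem_erase.1 hj).2, Nat.sub_sub]
    rw [Finset.sum_congr rfl hw, Finset.sum_const, Finset.card_erase_of_mem hi, nsmul_eq_mul]
    rcases Nat.lt_or_ge s.card 2 with h2 | h2
    · have hm : s.card = 1 := by
        have : 1 ≤ s.card := Finset.card_pos.2 ⟨i, hi⟩
        omega
      rw [if_pos (by omega), w, hm]
      norm_num
    · rw [if_neg (by omega), w]
      obtain ⟨k, hk⟩ := Nat.exists_eq_add_of_le h2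
      rw [hk]
      have e1 : 2 + k - 1 = k + 1 := by omega
      have e2 : 2 + k - 2 = k := by omega
      rw [e1, e2, Nat.factorial_succ]
      push_cast
      ring

end Hoffman

namespace Hoffman

variable (x : ι → ℝ)

lemma one_lt_prod_x (hx : ∀ j, 1 < x j) {Q : Finset ι} (hQ : Q.Nonempty) :
    1 < ∏ j ∈ Q, x j := by
  have := Finset.prod_lt_prod_of_nonempty (f := fun _ : ι => (1:ℝ)) (g := x)
    (fun i _ => one_pos) (fun i _ => hx i) hQ
  simpa using this

/-- The right-hand side, for a general subset. -/
noncomputable def R (s : Finset ι) : ℝ :=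
  ∑ P : Finpartition s, ∏ Q ∈ P.parts, w Q * ((∏ j ∈ Q, x j) - 1)⁻¹

lemma R_empty : R x ∅ = 1 := by
  rw [R, sum_finpartition_empty (fun parts => ∏ Q ∈ parts, w Q * ((∏ j ∈ Q, x j) - 1)⁻¹),
    Finset.prod_empty]

lemma R_rec (hx : ∀ j, 1 < x j) (s : Finset ι) (hs : s.Nonempty) :
    ((∏ j ∈ s, x j) - 1) * R x s = ∑ i ∈ s, R x (s.erase i) := by
  have hy : ∀ Q : Finset ι, Q.Nonempty → (∏ j ∈ Q, x j) - 1 ≠ 0 := fun Q hQ =>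
    ne_of_gt (by linarith [one_lt_prod_x x hx hQ])
  have step1 : ∀ P : Finpartition s,
      ((∏ j ∈ s, x j) - 1) * ∏ Q ∈ P.parts, (w Q * ((∏ j ∈ Q, x j) - 1)⁻¹) =
      ∑ T ∈ P.parts.powerset.filter (· ≠ ∅),
        (∏ Q ∈ T, w Q) * ∏ Q ∈ P.parts \ T, (w Q * ((∏ j ∈ Q, x j) - 1)⁻¹) := by
    intro P
    have hprod : ∏ j ∈ s, x j = ∏ Q ∈ P.parts, (((∏ j ∈ Q, x j) - 1) + 1) := by
      conv_lhs => rw [← P.biUnion_parts]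
      rw [Finset.prod_biUnion P.disjoint]
      exact Finset.prod_congr rfl fun Q _ => by simp [id]
    have hexp : ((∏ j ∈ s, x j) - 1) =
        ∑ T ∈ P.parts.powerset.filter (· ≠ ∅), ∏ Q ∈ T, ((∏ j ∈ Q, x j) - 1) := by
      rw [hprod, Finset.prod_add]
      simp only [Finset.prod_const_one, mul_one]
      rw [← Finset.sum_filter_add_sum_filter_not P.parts.powerset (· = ∅),
        Finset.filter_eq' P.parts.powerset ∅, if_pos (Finset.empty_mem_powerset _),
        Finset.sum_singleton, Finset.prod_empty, add_comm, add_sub_cancel_right]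
    rw [hexp, Finset.sum_mul]
    refine Finset.sum_congr rfl fun T hT => ?_
    have hTsub : T ⊆ P.parts := Finset.mem_powerset.1 (Finset.mem_filter.1 hT).1
    rw [← Finset.prod_sdiff hTsub, ← mul_assoc, mul_comm, ← mul_assoc]
    congr 1
    rw [mul_comm, ← Finset.prod_mul_distrib]
    exact Finset.prod_congr rfl fun Q hQ => by
      rw [mul_comm (w Q), ← mul_assoc,
        mul_inv_cancel₀ (hy Q (P.nonempty_of_mem_parts (hTsub hQ))), one_mul]
  rw [R, Finset.mul_sum, Finset.sum_congr rfl fun P _ => step1 P,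
    sum_finpartition_split s w (fun Q => w Q * ((∏ j ∈ Q, x j) - 1)⁻¹)]
  have hF : ∀ U ∈ s.powerset.filter (· ≠ ∅),
      (∑ PU : Finpartition U, ∏ Q ∈ PU.parts, w Q) *
        (∑ PC : Finpartition (s \ U), ∏ Q ∈ PC.parts, w Q * ((∏ j ∈ Q, x j) - 1)⁻¹) =
      if U.card ≤ 1 then R x (s \ U) else 0 := by
    intro U hU
    rw [show (∑ PU : Finpartition U, ∏ Q ∈ PU.parts, w Q) = F U from rfl, F_eq,
      show (∑ PC : Finpartition (s \ U), ∏ Q ∈ PC.parts,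
        w Q * ((∏ j ∈ Q, x j) - 1)⁻¹) = R x (s \ U) from rfl]
    split <;> ring
  rw [Finset.sum_congr rfl hF, ← Finset.sum_filter]
  have himg : (s.powerset.filter (· ≠ ∅)).filter (fun U => U.card ≤ 1) =
      s.image (fun i => {i}) := by
    ext U
    simp only [Finset.mem_filter, Finset.mem_powerset, Finset.mem_image]
    constructor
    · rintro ⟨⟨hUs, hUne⟩, hc⟩
      have : U.card = 1 := by
        have : 1 ≤ U.card := Finset.card_pos.2 (Finset.nonempty_iff_ne_empty.2 hUne)
        omega
      obtain ⟨a, rfl⟩ := Finset.card_eq_one.1 this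
      exact ⟨a, hUs (Finset.mem_singleton_self a), rfl⟩
    · rintro ⟨a, ha, rfl⟩
      exact ⟨⟨Finset.singleton_subset_iff.2 ha, Finset.singleton_ne_empty a⟩, by simp⟩
  rw [himg, Finset.sum_image (fun a _ b _ hab => Finset.singleton_injective hab)]
  exact Finset.sum_congr rfl fun i _ => by rw [← Finset.erase_eq]

end Hoffman

namespace Hoffman

variable (x : ι → ℝ)

/-- Product of inverses of (suffix products minus one). -/
noncomputable def pl : List ι → ℝ
  | [] => 1
  | i :: t => (((i :: t).map x).prod - 1)⁻¹ * pl t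

/-- The finset of linear orderings of `s`. -/
noncomputable def ords (s : Finset ι) : Finset (List ι) :=
  ⟨(s.toList.permutations : List (List ι)), List.nodup_permutations _ s.nodup_toList⟩

lemma mem_ords {s : Finset ι} {l : List ι} : l ∈ ords s ↔ (↑l : Multiset ι) = s.val := by
  show l ∈ (↑s.toList.permutations : Multiset (List ι)) ↔ _
  rw [Multiset.mem_coe, List.mem_permutations, ← Multiset.coe_eq_coe, Finset.coe_toList]

lemma ords_empty : ords (∅ : Finset ι) = {[]} := by
  ext l
  rw [mem_ords, Finset.mem_singleton]
  simp

lemma sum_ords (s : Finset ι) (hs : s.Nonempty) (f : List ι → ℝ) :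
    ∑ l ∈ ords s, f l = ∑ i ∈ s, ∑ t ∈ ords (s.erase i), f (i :: t) := by
  rw [Finset.sum_sigma']
  have hne : ∀ l ∈ ords s, l ≠ [] := by
    intro l hl h
    rw [mem_ords] at hl
    subst h
    exact hs.ne_empty (Finset.val_eq_zero.1 (by simpa using hl.symm))
  refine (Finset.sum_bij'
    (i := fun (p : Σ _ : ι, List ι) (_ : p ∈ s.sigma fun i => ords (s.erase i)) => p.1 :: p.2)
    (j := fun l hl => ⟨l.head (hne l hl), l.tail⟩) ?_ ?_ ?_ ?_ ?_).symm
  · rintro ⟨i, t⟩ hp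
    have hi : i ∈ s := (Finset.mem_sigma.1 hp).1
    have ht : (↑t : Multiset ι) = (s.erase i).val := mem_ords.1 (Finset.mem_sigma.1 hp).2
    show (i :: t) ∈ ords s
    rw [mem_ords, ← Multiset.cons_coe, ht, Finset.erase_val, Multiset.cons_erase hi]
  · intro l hl
    have h1 : (↑l : Multiset ι) = s.val := mem_ords.1 hl
    rw [Finset.mem_sigma]
    have hlc : l = l.head (hne l hl) :: l.tail := (List.cons_head_tail (hne l hl)).symm
    have h3 : (↑l : Multiset ι) = l.head (hne l hl) ::ₘ ↑l.tail := by
      conv_lhs => rw [hlc]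
      rw [← Multiset.cons_coe]
    have h2 : (↑l.tail : Multiset ι) = (s.erase (l.head (hne l hl))).val := by
      rw [Finset.erase_val, ← h1, h3, Multiset.erase_cons_head]
    constructor
    · show l.head (hne l hl) ∈ s
      rw [Finset.mem_def, ← h1, Multiset.mem_coe]
      exact List.head_mem _
    · show l.tail ∈ ords _
      rw [mem_ords]
      exact h2
  · rintro ⟨i, t⟩ hp
    simp
  · intro l hl
    exact List.cons_head_tail (hne l hl)
  · rintro ⟨i, t⟩ hp
    rfl

end Hoffman

namespace Hoffman

lemma prod_map_eq (x : ι → ℝ) {s : Finset ι} {l : List ι} (h : (↑l : Multiset ι) = s.val) :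
    (l.map x).prod = ∏ j ∈ s, x j := by
  rw [Finset.prod_eq_multiset_prod, ← h, Multiset.map_coe, Multiset.prod_coe]

lemma T_eq_R (x : ι → ℝ) (hx : ∀ j, 1 < x j) (s : Finset ι) :
    ∑ l ∈ ords s, pl x l = R x s := by
  induction s using Finset.strongInductionOn with
  | _ s IH =>
  rcases s.eq_empty_or_nonempty with rfl | hs
  · rw [ords_empty, Finset.sum_singleton, R_empty]
    rfl
  · have hy : ((∏ j ∈ s, x j) - 1) ≠ 0 := ne_of_gt (by linarith [one_lt_prod_x x hx hs])
    rw [sum_ords s hs (pl x)]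
    have hstep : ∀ i ∈ s, ∑ t ∈ ords (s.erase i), pl x (i :: t)
        = ((∏ j ∈ s, x j) - 1)⁻¹ * R x (s.erase i) := by
      intro i hi
      have hterm : ∀ t ∈ ords (s.erase i),
          pl x (i :: t) = ((∏ j ∈ s, x j) - 1)⁻¹ * pl x t := by
        intro t ht
        show (((i :: t).map x).prod - 1)⁻¹ * pl x t = _
        rw [prod_map_eq x (show ((i :: t : List ι) : Multiset ι) = s.val from by
          rw [← Multiset.cons_coe, mem_ords.1 ht, Finset.erase_val, Multiset.cons_erase hi])]
      rw [Finset.sum_congr rfl hterm, ← Finset.mul_sum,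
        IH (s.erase i) (Finset.erase_ssubset hi)]
    rw [Finset.sum_congr rfl hstep, ← Finset.mul_sum, ← R_rec x hx s hs, ← mul_assoc,
      inv_mul_cancel₀ hy, one_mul]

end Hoffman

namespace Hoffman

lemma ofFn_comp_rev {m : ℕ} {α : Type*} (g : Fin m → α) :
    List.ofFn (fun i => g (Fin.rev i)) = (List.ofFn g).reverse := by
  apply List.ext_getElem
  · simp
  · intro i h1 h2
    rw [List.getElem_ofFn, List.getElem_reverse, List.getElem_ofFn]
    congr 1
    apply Fin.ext
    simp only [Fin.val_rev]
    simp at h1 ⊢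
    omega

lemma prod_Iic_castSucc {m : ℕ} (f : Fin (m + 1) → ℝ) (k : Fin m) :
    ∏ j ∈ Finset.Iic (Fin.castSucc k), f j = ∏ j ∈ Finset.Iic k, f (Fin.castSucc j) := by
  have hmap : (Finset.Iic k).map Fin.castSuccEmb = Finset.Iic (Fin.castSucc k) := by
    ext j
    simp only [Finset.mem_map, Finset.mem_Iic]
    constructor
    · rintro ⟨j', hj', rfl⟩
      exact Fin.castSucc_le_castSucc_iff.2 hj'
    · intro hj
      have hjm : (j : ℕ) < m := by
        have := (Fin.le_def.1 hj)
        simp only [Fin.coe_castSucc] at this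
        omega
      refine ⟨⟨j, hjm⟩, ?_, ?_⟩
      · rw [Fin.le_def] at hj ⊢
        simpa using hj
      · apply Fin.ext
        simp [Fin.castSuccEmb]
  rw [← hmap, Finset.prod_map]
  rfl

lemma Iic_last_eq_univ (m : ℕ) : Finset.Iic (Fin.last m) = Finset.univ := by
  ext j
  simp [Fin.le_last]

lemma prefix_prod_eq_pl (x : ι → ℝ) : ∀ (m : ℕ) (g : Fin m → ι),
    ∏ k : Fin m, ((∏ j ∈ Finset.Iic k, x (g j)) - 1)⁻¹ = pl x ((List.ofFn g).reverse)
  | 0, g => by simp [pl, List.ofFn_zero]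
  | (m + 1), g => by
    rw [List.ofFn_succ', List.concat_eq_append, List.reverse_append]
    simp only [List.reverse_cons, List.reverse_nil, List.nil_append, List.singleton_append]
    show _ = pl x (g (Fin.last m) :: (List.ofFn fun i => g i.castSucc).reverse)
    rw [show pl x (g (Fin.last m) :: (List.ofFn fun i => g i.castSucc).reverse) =
      (((g (Fin.last m) :: (List.ofFn fun i => g i.castSucc).reverse).map x).prod - 1)⁻¹ *
        pl x ((List.ofFn fun i => g i.castSucc).reverse) from rfl,
      ← prefix_prod_eq_pl x m (fun i => g i.castSucc)]
    rw [Fin.prod_univ_castSucc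
      (f := fun k : Fin (m+1) => ((∏ j ∈ Finset.Iic k, x (g j)) - 1)⁻¹)]
    rw [mul_comm]
    congr 1
    · rw [Iic_last_eq_univ]
      congr 1
      rw [List.map_cons, List.prod_cons, List.map_reverse, List.prod_reverse, List.map_ofFn,
        List.prod_ofFn, Fin.prod_univ_castSucc (f := fun j : Fin (m+1) => x (g j))]
      simp only [Function.comp]
      ring
    · refine Finset.prod_congr rfl fun k _ => ?_
      rw [prod_Iic_castSucc (fun j => x (g j)) k]

end Hoffman

namespace Hoffman

lemma sum_perm_eq_sum_ords {n : ℕ} (x : Fin n → ℝ) :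
    ∑ σ : Equiv.Perm (Fin n), pl x (List.ofFn ⇑σ) =
      ∑ l ∈ ords (Finset.univ : Finset (Fin n)), pl x l := by
  have hlen : ∀ l ∈ ords (Finset.univ : Finset (Fin n)), l.length = n := by
    intro l hl
    have hc := congrArg Multiset.card (mem_ords.1 hl)
    simpa using hc
  have hnodup : ∀ l ∈ ords (Finset.univ : Finset (Fin n)), l.Nodup := by
    intro l hl
    have h2 : (↑l : Multiset (Fin n)).Nodup := (mem_ords.1 hl) ▸ Finset.univ.nodup
    exact h2
  have bij : ∀ (l : List (Fin n)) (hl : l ∈ ords (Finset.univ : Finset (Fin n))),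
      Function.Bijective (fun k : Fin n => l.get (Fin.cast (hlen l hl).symm k)) := by
    intro l hl
    refine Finite.injective_iff_bijective.1 ?_
    have hinj : Function.Injective l.get := List.nodup_iff_injective_get.1 (hnodup l hl)
    intro a b hab
    have h3 := congrArg Fin.val (hinj hab)
    exact Fin.ext (by simpa using h3)
  refine Finset.sum_bij' (i := fun σ _ => List.ofFn ⇑σ)
    (j := fun l hl => Equiv.ofBijective _ (bij l hl)) ?_ ?_ ?_ ?_ ?_
  · intro σ _
    have hnd : (List.ofFn ⇑σ).Nodup := List.nodup_ofFn.2 σ.injective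
    have huniv : (⟨↑(List.ofFn ⇑σ), hnd⟩ : Finset (Fin n)) = Finset.univ := by
      refine Finset.eq_univ_iff_forall.2 fun a => ?_
      show a ∈ (↑(List.ofFn ⇑σ) : Multiset (Fin n))
      rw [Multiset.mem_coe, List.mem_ofFn]
      exact ⟨σ.symm a, by simp⟩
    exact mem_ords.2 (congrArg Finset.val huniv)
  · intro l hl
    exact Finset.mem_univ _
  · intro σ _
    refine Equiv.ext fun k => ?_
    show (List.ofFn ⇑σ).get _ = σ k
    rw [List.get_ofFn]
    congr 1
  · intro l hl
    refine List.ext_getElem (by simp [hlen l hl]) fun i h1 h2 => ?_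
    rw [List.getElem_ofFn]
    show l.get _ = l[i]
    simp [List.get_eq_getElem]
  · intro σ _
    rfl

end Hoffman

open Hoffman in
/-- The rational function identity equivalent to Hoffman's partition identity. -/
theorem stmt15 (n : ℕ) (hn : 0 < n) (x : Fin n → ℝ) (hx : ∀ j, 1 < x j) :
    ∑ σ : Equiv.Perm (Fin n), ∏ k : Fin n, ((∏ j ∈ Finset.Iic k, x (σ j)) - 1)⁻¹ =
      ∑ P : Finpartition (Finset.univ : Finset (Fin n)),
        (-1 : ℝ) ^ (n - P.parts.card) *
          ∏ Q ∈ P.parts, ((Q.card - 1).factorial : ℝ) * ((∏ j ∈ Q, x j) - 1)⁻¹ := by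
  have step1 : ∀ σ : Equiv.Perm (Fin n),
      ∏ k : Fin n, ((∏ j ∈ Finset.Iic k, x (σ j)) - 1)⁻¹ = pl x ((List.ofFn ⇑σ).reverse) :=
    fun σ => prefix_prod_eq_pl x n ⇑σ
  rw [Finset.sum_congr rfl fun σ _ => step1 σ]
  have step2 : ∑ σ : Equiv.Perm (Fin n), pl x ((List.ofFn ⇑σ).reverse)
      = ∑ σ : Equiv.Perm (Fin n), pl x (List.ofFn ⇑σ) := by
    rw [← Equiv.sum_comp (Equiv.mulRight (Fin.revPerm : Equiv.Perm (Fin n)))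
      (fun σ => pl x ((List.ofFn ⇑σ).reverse))]
    refine Finset.sum_congr rfl fun σ _ => ?_
    have h4 : List.ofFn ⇑(σ * (Fin.revPerm : Equiv.Perm (Fin n))) = (List.ofFn ⇑σ).reverse := by
      rw [← ofFn_comp_rev ⇑σ]
      rfl
    rw [show ((Equiv.mulRight (Fin.revPerm : Equiv.Perm (Fin n))) σ)
        = σ * (Fin.revPerm : Equiv.Perm (Fin n)) from rfl, h4, List.reverse_reverse]
  rw [step2, sum_perm_eq_sum_ords x, T_eq_R x hx, R]
  refine Finset.sum_congr rfl fun P _ => ?_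
  have hsum : ∑ Q ∈ P.parts, (Q.card - 1) = n - P.parts.card := by
    have h1 : ∑ Q ∈ P.parts, Q.card = n := by
      rw [P.sum_card_parts, Finset.card_univ, Fintype.card_fin]
    have h2 : ∀ Q ∈ P.parts, 1 ≤ Q.card := fun Q hQ =>
      Finset.card_pos.2 (P.nonempty_of_mem_parts hQ)
    have h3 : ∑ Q ∈ P.parts, (Q.card - 1) + P.parts.card = ∑ Q ∈ P.parts, Q.card := by
      rw [Finset.card_eq_sum_ones, ← Finset.sum_add_distrib]
      exact Finset.sum_congr rfl fun Q hQ => by have := h2 Q hQ; omega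
    omega
  calc ∏ Q ∈ P.parts, (w Q * ((∏ j ∈ Q, x j) - 1)⁻¹)
      = (∏ Q ∈ P.parts, ((-1:ℝ) ^ (Q.card - 1))) *
          ∏ Q ∈ P.parts, (((Q.card - 1).factorial : ℝ) * ((∏ j ∈ Q, x j) - 1)⁻¹) := by
        rw [← Finset.prod_mul_distrib]
        exact Finset.prod_congr rfl fun Q _ => by rw [w]; ring
    _ = _ := by rw [Finset.prod_pow_eq_pow_sum, hsum]
end
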